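/- arXiv:2209.00004 — 10 statements merged into one kernel-verified Lean document; each statement's English description precedes it below -/
import Mathlib

section
/- Let 0 < δ < 1 and 0 < ε < δ/4. Then the relaxed truncation map 𝒢_{2δ,ε} : ℝ^k → ℝ^k is Lipschitz with constant c† := 1 + 32/(3√7); that is, |𝒢_{2δ,ε}(ξ₁) − 𝒢_{2δ,ε}(ξ₂)| ≤ (1 + 32/(3√7))·|ξ₁ − ξ₂| for all ξ₁, ξ₂ ∈ ℝ^k. -/
open Real

private lemma sqrt_lip (c a b : ℝ) (hc : 0 ≤ c) (ha : 0 ≤ a) (hb : a ≤ b) :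
    Real.sqrt (c + b ^ 2) - Real.sqrt (c + a ^ 2) ≤ b - a := by
  have hs : 0 ≤ c + a ^ 2 := by positivity
  have h1 : a ≤ Real.sqrt (c + a ^ 2) := by
    nlinarith [Real.sq_sqrt hs, Real.sqrt_nonneg (c + a ^ 2)]
  have h2 : Real.sqrt (c + b ^ 2) ≤ Real.sqrt (c + a ^ 2) + (b - a) := by
    rw [show Real.sqrt (c + a ^ 2) + (b - a)
        = Real.sqrt ((Real.sqrt (c + a ^ 2) + (b - a)) ^ 2) from
      (Real.sqrt_sq (by nlinarith [Real.sqrt_nonneg (c + a ^ 2)])).symm]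
    apply Real.sqrt_le_sqrt
    nlinarith [Real.sq_sqrt hs]
  linarith

private lemma f_lip (c a b : ℝ) (hc : 0 ≤ c) (ha : 0 ≤ a) (hb : 0 ≤ b) (t : ℝ) :
    |max (Real.sqrt (c + a ^ 2) - t) 0 - max (Real.sqrt (c + b ^ 2) - t) 0| ≤ |a - b| := by
  have key : |(Real.sqrt (c + a ^ 2) - t) - (Real.sqrt (c + b ^ 2) - t)| ≤ |a - b| := by
    rcases le_total a b with h | h
    · have := sqrt_lip c a b hc ha h
      have h2 : Real.sqrt (c + a ^ 2) ≤ Real.sqrt (c + b ^ 2) :=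
        Real.sqrt_le_sqrt (by nlinarith)
      rw [abs_sub_comm, abs_of_nonneg (by linarith), abs_sub_comm, abs_of_nonneg (by linarith)]
      linarith
    · have := sqrt_lip c b a hc hb h
      have h2 : Real.sqrt (c + b ^ 2) ≤ Real.sqrt (c + a ^ 2) :=
        Real.sqrt_le_sqrt (by nlinarith)
      rw [abs_of_nonneg (by linarith), abs_of_nonneg (by linarith)]
      linarith
  calc |max (Real.sqrt (c + a ^ 2) - t) 0 - max (Real.sqrt (c + b ^ 2) - t) 0|
      ≤ |(Real.sqrt (c + a ^ 2) - t) - (Real.sqrt (c + b ^ 2) - t)| :=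
        abs_max_sub_max_le_abs _ _ _
    _ ≤ |a - b| := key

private lemma f_le (δ ε r : ℝ) (hδ0 : 0 < δ) (hε0 : 0 < ε) (hε : ε < δ / 4) (hr : 0 ≤ r) :
    max (Real.sqrt (ε ^ 2 + r ^ 2) - 2 * δ) 0 ≤ r := by
  have h1 : Real.sqrt (ε ^ 2 + r ^ 2) ≤ r + 2 * δ := by
    rw [show r + 2 * δ = Real.sqrt ((r + 2 * δ) ^ 2) from
      (Real.sqrt_sq (by linarith)).symm]
    apply Real.sqrt_le_sqrt
    nlinarith
  exact max_le (by linarith) hr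

private lemma const_ge_three : (3 : ℝ) ≤ 1 + 32 / (3 * Real.sqrt 7) := by
  have hs : 0 < Real.sqrt 7 := Real.sqrt_pos.mpr (by norm_num)
  have hsq : Real.sqrt 7 ^ 2 = 7 := Real.sq_sqrt (by norm_num)
  have : (2 : ℝ) ≤ 32 / (3 * Real.sqrt 7) := by
    rw [le_div_iff₀ (by positivity)]
    nlinarith [sq_nonneg (Real.sqrt 7 - 3)]
  linarith

/-- Lipschitz continuity of the relaxed truncation map `𝒢_{2δ,ε}` with constant
`1 + 32/(3√7)`, where `𝒢_{2δ,ε}(ξ) = (√(ε² + |ξ|²) − 2δ)₊ · ξ/|ξ|` (and `= 0` at `ξ = 0`). -/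
theorem stmt_0 (k : ℕ) (hk : 1 ≤ k) (δ ε : ℝ) (hδ0 : 0 < δ) (hδ1 : δ < 1)
    (hε0 : 0 < ε) (hε : ε < δ / 4) :
    ∀ ξ₁ ξ₂ : EuclideanSpace ℝ (Fin k),
      ‖(max (Real.sqrt (ε ^ 2 + ‖ξ₁‖ ^ 2) - 2 * δ) 0) • (‖ξ₁‖⁻¹ • ξ₁)
          - (max (Real.sqrt (ε ^ 2 + ‖ξ₂‖ ^ 2) - 2 * δ) 0) • (‖ξ₂‖⁻¹ • ξ₂)‖
        ≤ (1 + 32 / (3 * Real.sqrt 7)) * ‖ξ₁ - ξ₂‖ := by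
  intro ξ₁ ξ₂
  have hc3 : (3 : ℝ) ≤ 1 + 32 / (3 * Real.sqrt 7) := const_ge_three
  have hnn : (0 : ℝ) ≤ ‖ξ₁ - ξ₂‖ := norm_nonneg _
  set f : ℝ → ℝ := fun r => max (Real.sqrt (ε ^ 2 + r ^ 2) - 2 * δ) 0 with hf
  have hf0 : ∀ r, 0 ≤ f r := fun r => le_max_right _ _
  have hfle : ∀ r, 0 ≤ r → f r ≤ r := fun r hr => f_le δ ε r hδ0 hε0 hε hr
  by_cases h1 : ξ₁ = 0
  · subst h1
    by_cases h2 : ξ₂ = 0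
    · subst h2; simp
    · have hr2 : 0 < ‖ξ₂‖ := norm_pos_iff.mpr h2
      have : ‖(f ‖(0 : EuclideanSpace ℝ (Fin k))‖) • (‖(0 : EuclideanSpace ℝ (Fin k))‖⁻¹ • (0 : EuclideanSpace ℝ (Fin k)))
          - (f ‖ξ₂‖) • (‖ξ₂‖⁻¹ • ξ₂)‖ = f ‖ξ₂‖ := by
        rw [smul_zero, smul_zero, zero_sub, norm_neg, norm_smul, norm_smul,
          Real.norm_eq_abs, Real.norm_eq_abs, abs_of_nonneg (hf0 _),
          abs_of_nonneg (inv_nonneg.mpr (norm_nonneg _))]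
        field_simp
      rw [this]
      have : f ‖ξ₂‖ ≤ ‖(0 : EuclideanSpace ℝ (Fin k)) - ξ₂‖ := by
        rw [zero_sub, norm_neg]; exact hfle _ (norm_nonneg _)
      nlinarith
  · by_cases h2 : ξ₂ = 0
    · subst h2
      have hr1 : 0 < ‖ξ₁‖ := norm_pos_iff.mpr h1
      have : ‖(f ‖ξ₁‖) • (‖ξ₁‖⁻¹ • ξ₁)
          - (f ‖(0 : EuclideanSpace ℝ (Fin k))‖) • (‖(0 : EuclideanSpace ℝ (Fin k))‖⁻¹ • (0 : EuclideanSpace ℝ (Fin k)))‖ = f ‖ξ₁‖ := by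
        rw [smul_zero, smul_zero, sub_zero, norm_smul, norm_smul,
          Real.norm_eq_abs, Real.norm_eq_abs, abs_of_nonneg (hf0 _),
          abs_of_nonneg (inv_nonneg.mpr (norm_nonneg _))]
        field_simp
      rw [this]
      have : f ‖ξ₁‖ ≤ ‖ξ₁ - (0 : EuclideanSpace ℝ (Fin k))‖ := by
        rw [sub_zero]; exact hfle _ (norm_nonneg _)
      nlinarith
    · have hr1 : 0 < ‖ξ₁‖ := norm_pos_iff.mpr h1
      have hr2 : 0 < ‖ξ₂‖ := norm_pos_iff.mpr h2
      set r₁ := ‖ξ₁‖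
      set r₂ := ‖ξ₂‖
      set a₁ : ℝ := f r₁ / r₁ with ha₁
      set a₂ : ℝ := f r₂ / r₂ with ha₂
      have hdecomp : (f r₁) • (r₁⁻¹ • ξ₁) - (f r₂) • (r₂⁻¹ • ξ₂)
          = a₁ • (ξ₁ - ξ₂) + (a₁ - a₂) • ξ₂ := by
        rw [smul_smul, smul_smul, smul_sub, sub_smul]
        rw [ha₁, ha₂, div_eq_mul_inv, div_eq_mul_inv]
        abel
      rw [hdecomp]
      have hlip : |f r₁ - f r₂| ≤ |r₁ - r₂| :=
        f_lip (ε ^ 2) r₁ r₂ (by positivity) (le_of_lt hr1) (le_of_lt hr2) (2 * δ)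
      have hrr : |r₁ - r₂| ≤ ‖ξ₁ - ξ₂‖ := abs_norm_sub_norm_le _ _
      have ha₁le : a₁ ≤ 1 := by
        rw [ha₁, div_le_one hr1]; exact hfle _ (le_of_lt hr1)
      have ha₁0 : 0 ≤ a₁ := div_nonneg (hf0 _) (le_of_lt hr1)
      have key : |a₁ - a₂| * r₂ ≤ 2 * |r₁ - r₂| := by
        have habs := abs_le.mp hlip
        have e1 : ∀ t : ℝ, t ≤ |r₁ - r₂| → f r₁ * t ≤ r₁ * |r₁ - r₂| := by
          intro t ht
          rcases le_total t 0 with h | h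
          · have h1 : f r₁ * t ≤ 0 := mul_nonpos_of_nonneg_of_nonpos (hf0 r₁) h
            have h2 : (0:ℝ) ≤ r₁ * |r₁ - r₂| :=
              mul_nonneg hr1.le (abs_nonneg _)
            linarith
          · calc f r₁ * t ≤ r₁ * t :=
                  mul_le_mul_of_nonneg_right (hfle r₁ hr1.le) h
              _ ≤ r₁ * |r₁ - r₂| := mul_le_mul_of_nonneg_left ht hr1.le
        have h1' : f r₁ * r₂ - f r₂ * r₁ ≤ 2 * |r₁ - r₂| * r₁ := by
          have e1' := e1 (r₂ - r₁) (by rw [abs_sub_comm]; exact le_abs_self _)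
          have e2 : (f r₁ - f r₂) * r₁ ≤ |r₁ - r₂| * r₁ :=
            mul_le_mul_of_nonneg_right habs.2 hr1.le
          nlinarith [e1', e2]
        have h2' : -(f r₁ * r₂ - f r₂ * r₁) ≤ 2 * |r₁ - r₂| * r₁ := by
          have e1' := e1 (r₁ - r₂) (le_abs_self _)
          have e2 : (f r₂ - f r₁) * r₁ ≤ |r₁ - r₂| * r₁ :=
            mul_le_mul_of_nonneg_right (by linarith [habs.1]) hr1.le
          nlinarith [e1', e2]
        have hNb : |f r₁ * r₂ - f r₂ * r₁| ≤ 2 * |r₁ - r₂| * r₁ :=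
          abs_le.mpr ⟨by linarith, h1'⟩
        have heq : |a₁ - a₂| * r₂ = |f r₁ * r₂ - f r₂ * r₁| / r₁ := by
          rw [show a₁ - a₂ = (f r₁ * r₂ - f r₂ * r₁) / (r₁ * r₂) by
            rw [ha₁, ha₂, div_sub_div _ _ hr1.ne' hr2.ne']; ring]
          rw [abs_div, abs_of_pos (mul_pos hr1 hr2)]
          field_simp
        rw [heq, div_le_iff₀ hr1]
        linarith [hNb]
      calc ‖a₁ • (ξ₁ - ξ₂) + (a₁ - a₂) • ξ₂‖
          ≤ ‖a₁ • (ξ₁ - ξ₂)‖ + ‖(a₁ - a₂) • ξ₂‖ := norm_add_le _ _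
        _ = |a₁| * ‖ξ₁ - ξ₂‖ + |a₁ - a₂| * r₂ := by
            rw [norm_smul, norm_smul, Real.norm_eq_abs, Real.norm_eq_abs]
        _ ≤ 1 * ‖ξ₁ - ξ₂‖ + 2 * |r₁ - r₂| := by
            rw [abs_of_nonneg ha₁0]
            have := mul_le_mul_of_nonneg_right ha₁le hnn
            linarith [key]
        _ ≤ 3 * ‖ξ₁ - ξ₂‖ := by linarith
        _ ≤ (1 + 32 / (3 * Real.sqrt 7)) * ‖ξ₁ - ξ₂‖ :=
            mul_le_mul_of_nonneg_right hc3 hnn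
end

section
/- Let 0 < δ < 1 and M > δ. There exists a constant C₁ > 0, depending only on b, p, γ, Γ, δ and M, such that for every g satisfying (G1)–(G3), every ε with 0 < ε < δ/4, and all ξ₀, ξ₁ ∈ ℝ^k with δ ≤ |ξ₀| ≤ M and |ξ₁| ≤ M, one has ⟨A_ε(ξ₁) − A_ε(ξ₀), ξ₁ − ξ₀⟩ ≥ C₁·|ξ₁ − ξ₀|². -/
open Real RealInnerProductSpace

set_option maxHeartbeats 1000000

/-- Monotonicity estimate: there exists `C₁ > 0`, depending only on `b, p, γ, Γ, δ, M`,
such that for every `g` satisfying (G1)–(G3), every `0 < ε < δ/4`, and all `ξ₀, ξ₁`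
with `δ ≤ |ξ₀| ≤ M`, `|ξ₁| ≤ M`, one has
`⟨A_ε(ξ₁) − A_ε(ξ₀), ξ₁ − ξ₀⟩ ≥ C₁ |ξ₁ − ξ₀|²`, where
`A_ε(ξ) = b ξ/√(ε²+|ξ|²) + g'(ε²+|ξ|²) ξ`. -/
theorem stmt_2 (k : ℕ) (hk : 1 ≤ k) (p b γ Γ δ M : ℝ)
    (hp : 1 < p) (hb : 0 < b) (hγ : 0 < γ) (hγΓ : γ ≤ Γ)
    (hδ0 : 0 < δ) (hδ1 : δ < 1) (hM : δ < M) :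
    ∃ C₁ : ℝ, 0 < C₁ ∧
      ∀ g g' g'' : ℝ → ℝ,
        (∀ σ : ℝ, 0 < σ → HasDerivAt g (g' σ) σ) →
        (∀ σ : ℝ, 0 < σ → HasDerivAt g' (g'' σ) σ) →
        ContinuousOn g'' (Set.Ioi 0) →
        (∀ σ : ℝ, 0 < σ → |g' σ| ≤ Γ * σ ^ (p / 2 - 1)) →
        (∀ σ : ℝ, 0 < σ → |g'' σ| ≤ Γ * σ ^ (p / 2 - 2)) →
        (∀ σ : ℝ, 0 ≤ σ → ∀ τ : ℝ, 0 < τ → τ < 1 →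
          γ * (σ + τ) ^ (p / 2 - 1) ≤ g' (σ + τ) + 2 * σ * min (g'' (σ + τ)) 0) →
        ∀ ε : ℝ, 0 < ε → ε < δ / 4 →
          ∀ ξ₀ ξ₁ : EuclideanSpace ℝ (Fin k),
            δ ≤ ‖ξ₀‖ → ‖ξ₀‖ ≤ M → ‖ξ₁‖ ≤ M →
            C₁ * ‖ξ₁ - ξ₀‖ ^ 2 ≤
              ⟪((b / Real.sqrt (ε ^ 2 + ‖ξ₁‖ ^ 2)) • ξ₁ + g' (ε ^ 2 + ‖ξ₁‖ ^ 2) • ξ₁)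
                - ((b / Real.sqrt (ε ^ 2 + ‖ξ₀‖ ^ 2)) • ξ₀ + g' (ε ^ 2 + ‖ξ₀‖ ^ 2) • ξ₀),
                ξ₁ - ξ₀⟫ := by
  have h2M : (0:ℝ) < M := lt_trans hδ0 hM
  set e : ℝ := p / 2 - 1 with he
  set c₀ : ℝ := min ((δ ^ 2 / 4) ^ e) ((1 + 9 * M ^ 2) ^ e) with hc₀
  have hδ4 : (0:ℝ) < δ ^ 2 / 4 := by positivity
  have h9M : (0:ℝ) < 1 + 9 * M ^ 2 := by positivity
  have hc₀pos : 0 < c₀ := lt_min (Real.rpow_pos_of_pos hδ4 e) (Real.rpow_pos_of_pos h9M e)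
  refine ⟨γ * c₀ * (δ / (4 * M)), by positivity, ?_⟩
  intro g g' g'' hg hg' hg''c hG1 hG2 hG3 ε hε hε4 ξ₀ ξ₁ hξ₀δ hξ₀M hξ₁M
  by_cases hη0 : ξ₁ - ξ₀ = 0
  · simp [hη0]
  set η : EuclideanSpace ℝ (Fin k) := ξ₁ - ξ₀ with hηdef
  have hξ₁eq : ξ₁ = ξ₀ + η := by rw [hηdef]; abel
  have hnη : 0 < ‖η‖ := norm_pos_iff.mpr hη0
  set n2 : ℝ := ‖η‖ ^ 2 with hn2
  have hn2pos : 0 < n2 := by positivity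
  set ip : ℝ := ⟪ξ₀, η⟫ with hip
  set u : ℝ → ℝ := fun t => ip + t * n2 with hudef
  set σ : ℝ → ℝ := fun t => ε ^ 2 + ‖ξ₀‖ ^ 2 + 2 * t * ip + t ^ 2 * n2 with hσdef
  have hσeq : ∀ t : ℝ, σ t = ε ^ 2 + ‖ξ₀ + t • η‖ ^ 2 := by
    intro t
    have h1 : ‖ξ₀ + t • η‖ ^ 2 = ‖ξ₀‖ ^ 2 + 2 * ⟪ξ₀, t • η⟫ + ‖t • η‖ ^ 2 :=
      norm_add_sq_real _ _
    have h2 : ‖t • η‖ ^ 2 = t ^ 2 * n2 := by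
      rw [norm_smul, Real.norm_eq_abs, mul_pow, sq_abs, hn2]
    rw [hσdef]
    simp only
    rw [h1, real_inner_smul_right, h2, ← hip]
    ring
  have hσpos : ∀ t : ℝ, 0 < σ t := by
    intro t; rw [hσeq t]; positivity
  have hu : ∀ t : ℝ, u t = ⟪ξ₀ + t • η, η⟫ := by
    intro t
    rw [hudef]
    simp only
    rw [inner_add_left, real_inner_smul_left, real_inner_self_eq_norm_sq, ← hip, ← hn2]
  have hCS : ∀ t : ℝ, (u t) ^ 2 ≤ (σ t - ε ^ 2) * n2 := by
    intro t
    have h1 : σ t - ε ^ 2 = ‖ξ₀ + t • η‖ ^ 2 := by rw [hσeq t]; ring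
    rw [h1, hu t, hn2]
    calc ⟪ξ₀ + t • η, η⟫ ^ 2 = |⟪ξ₀ + t • η, η⟫| ^ 2 := (sq_abs _).symm
      _ ≤ (‖ξ₀ + t • η‖ * ‖η‖) ^ 2 := by
          apply pow_le_pow_left₀ (abs_nonneg _) (abs_real_inner_le_norm _ _)
      _ = ‖ξ₀ + t • η‖ ^ 2 * ‖η‖ ^ 2 := by ring
  set F : ℝ → ℝ := fun t => (b / Real.sqrt (σ t) + g' (σ t)) * u t with hFdef
  set F' : ℝ → ℝ := fun t =>
    (-(b / (2 * σ t * Real.sqrt (σ t))) + g'' (σ t)) * (2 * u t) * u t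
      + (b / Real.sqrt (σ t) + g' (σ t)) * n2 with hF'def
  have hσd : ∀ t : ℝ, HasDerivAt σ (2 * u t) t := by
    intro t
    rw [hσdef]
    have h1 : HasDerivAt (fun x : ℝ => ε ^ 2 + ‖ξ₀‖ ^ 2 + 2 * x * ip + x ^ 2 * n2)
        (2 * 1 * ip + (2 * t ^ 1) * n2) t := by
      exact ((((hasDerivAt_id t).const_mul 2).mul_const ip).const_add _).add
        ((hasDerivAt_pow 2 t).mul_const n2)
    convert h1 using 1
    rw [hudef]; simp only; ring
  have hud : ∀ t : ℝ, HasDerivAt u n2 t := by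
    intro t
    rw [hudef]
    simpa using ((hasDerivAt_id t).mul_const n2).const_add ip
  have hderiv : ∀ t : ℝ, HasDerivAt F (F' t) t := by
    intro t
    have hs := hσpos t
    have hsq : Real.sqrt (σ t) ≠ 0 := (Real.sqrt_pos.mpr hs).ne'
    have h1 : HasDerivAt (fun s : ℝ => b / Real.sqrt s)
        (-(b / (2 * σ t * Real.sqrt (σ t)))) (σ t) := by
      have hd := (hasDerivAt_const (σ t) b).div (Real.hasDerivAt_sqrt hs.ne') hsq
      refine hd.congr_deriv ?_
      rw [Real.sq_sqrt hs.le, zero_mul, zero_sub, mul_one_div, neg_div, div_div]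
      ring_nf
    have hfd : HasDerivAt (fun s : ℝ => b / Real.sqrt s + g' s)
        (-(b / (2 * σ t * Real.sqrt (σ t))) + g'' (σ t)) (σ t) := h1.add (hg' _ hs)
    have hcomp := (hfd.comp t (hσd t)).mul (hud t)
    exact hcomp
  have hε1 : ε ^ 2 < 1 := by nlinarith
  have hlow : ∀ t : ℝ, γ * (σ t) ^ e * n2 ≤ F' t := by
    intro t
    have hs := hσpos t
    have hsqrt : 0 < Real.sqrt (σ t) := Real.sqrt_pos.mpr hs
    have hq : σ t - ε ^ 2 = ‖ξ₀ + t • η‖ ^ 2 := by rw [hσeq t]; ring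
    have hqnn : 0 ≤ σ t - ε ^ 2 := by rw [hq]; positivity
    have hG := hG3 (σ t - ε ^ 2) hqnn (ε ^ 2) (by positivity) hε1
    rw [sub_add_cancel] at hG
    have hCSt := hCS t
    have humin : min (g'' (σ t)) 0 ≤ 0 := min_le_right _ _
    have hming : min (g'' (σ t)) 0 ≤ g'' (σ t) := min_le_left _ _
    have hT1 : 0 ≤ -(b / (2 * σ t * Real.sqrt (σ t))) * (2 * u t) * u t
        + (b / Real.sqrt (σ t)) * n2 := by
      have hkey : -(b / (2 * σ t * Real.sqrt (σ t))) * (2 * u t) * u t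
          + (b / Real.sqrt (σ t)) * n2
          = (b / (σ t * Real.sqrt (σ t))) * (σ t * n2 - (u t) ^ 2) := by
        field_simp
        ring
      rw [hkey]
      apply mul_nonneg (by positivity)
      nlinarith [sq_nonneg ε]
    have hT2 : (g' (σ t) + 2 * (σ t - ε ^ 2) * min (g'' (σ t)) 0) * n2
        ≤ g'' (σ t) * (2 * u t) * u t + g' (σ t) * n2 := by
      nlinarith [mul_nonneg (sub_nonneg.mpr hming) (sq_nonneg (u t)),
        mul_nonneg (neg_nonneg.mpr humin) (sub_nonneg.mpr hCSt)]
    have hGn2 : γ * (σ t) ^ e * n2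
        ≤ (g' (σ t) + 2 * (σ t - ε ^ 2) * min (g'' (σ t)) 0) * n2 := by
      have := mul_le_mul_of_nonneg_right hG hn2pos.le
      linarith
    have hsplit : F' t = (-(b / (2 * σ t * Real.sqrt (σ t))) * (2 * u t) * u t
        + (b / Real.sqrt (σ t)) * n2)
        + (g'' (σ t) * (2 * u t) * u t + g' (σ t) * n2) := by
      rw [hF'def]; ring
    calc γ * (σ t) ^ e * n2
        ≤ (g' (σ t) + 2 * (σ t - ε ^ 2) * min (g'' (σ t)) 0) * n2 := hGn2
      _ ≤ g'' (σ t) * (2 * u t) * u t + g' (σ t) * n2 := hT2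
      _ ≤ (-(b / (2 * σ t * Real.sqrt (σ t))) * (2 * u t) * u t
            + (b / Real.sqrt (σ t)) * n2)
          + (g'' (σ t) * (2 * u t) * u t + g' (σ t) * n2) :=
        le_add_of_nonneg_left hT1
      _ = F' t := hsplit.symm
  have hηM : ‖η‖ ≤ 2 * M := by
    calc ‖η‖ = ‖ξ₁ - ξ₀‖ := rfl
      _ ≤ ‖ξ₁‖ + ‖ξ₀‖ := norm_sub_le _ _
      _ ≤ 2 * M := by linarith
  set T : ℝ := min 1 (δ / (2 * ‖η‖)) with hTdef
  have hT0 : 0 < T := lt_min one_pos (by positivity)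
  have hT1 : T ≤ 1 := min_le_left _ _
  have hTδ : δ / (4 * M) ≤ T := by
    apply le_min
    · rw [div_le_one (by positivity)]; linarith
    · rw [div_le_div_iff₀ (by positivity) (by positivity)]
      nlinarith [mul_le_mul_of_nonneg_left hηM hδ0.le]
  have hσlb : ∀ t ∈ Set.Icc (0:ℝ) T, δ ^ 2 / 4 ≤ σ t := by
    intro t ht
    have h4 : ‖t • η‖ ≤ δ / 2 := by
      rw [norm_smul, Real.norm_eq_abs, abs_of_nonneg ht.1]
      have htle : t ≤ δ / (2 * ‖η‖) := le_trans ht.2 (min_le_right _ _)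
      calc t * ‖η‖ ≤ (δ / (2 * ‖η‖)) * ‖η‖ := mul_le_mul_of_nonneg_right htle hnη.le
        _ = δ / 2 := by field_simp
    have h3 : ‖ξ₀‖ ≤ ‖ξ₀ + t • η‖ + ‖t • η‖ := by
      calc ‖ξ₀‖ = ‖(ξ₀ + t • η) - t • η‖ := by congr 1; abel
        _ ≤ ‖ξ₀ + t • η‖ + ‖t • η‖ := norm_sub_le _ _
    have h1 : δ / 2 ≤ ‖ξ₀ + t • η‖ := by linarith
    rw [hσeq t]
    nlinarith [sq_nonneg ε]
  have hσub : ∀ t ∈ Set.Icc (0:ℝ) 1, σ t ≤ 1 + 9 * M ^ 2 := by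
    intro t ht
    have h2 : ‖t • η‖ ≤ 2 * M := by
      rw [norm_smul, Real.norm_eq_abs, abs_of_nonneg ht.1]
      calc t * ‖η‖ ≤ 1 * (2 * M) := by
            apply mul_le_mul ht.2 hηM (norm_nonneg _) one_pos.le
        _ = 2 * M := by ring
    have h1 : ‖ξ₀ + t • η‖ ≤ 3 * M := by
      calc ‖ξ₀ + t • η‖ ≤ ‖ξ₀‖ + ‖t • η‖ := norm_add_le _ _
        _ ≤ 3 * M := by linarith
    rw [hσeq t]
    nlinarith [norm_nonneg (ξ₀ + t • η)]
  have hc₀le : ∀ t ∈ Set.Icc (0:ℝ) T, c₀ ≤ (σ t) ^ e := by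
    intro t ht
    rcases le_or_gt 0 e with h | h
    · exact le_trans (min_le_left _ _) (Real.rpow_le_rpow hδ4.le (hσlb t ht) h)
    · exact le_trans (min_le_right _ _)
        (Real.rpow_le_rpow_of_nonpos (hσpos t)
          (hσub t ⟨ht.1, le_trans ht.2 hT1⟩) h.le)
  have hlowT : ∀ t ∈ Set.Icc (0:ℝ) T, γ * c₀ * n2 ≤ F' t := by
    intro t ht
    refine le_trans ?_ (hlow t)
    exact mul_le_mul_of_nonneg_right
      (mul_le_mul_of_nonneg_left (hc₀le t ht) hγ.le) hn2pos.le
  have hnnT1 : ∀ t ∈ Set.Icc T (1:ℝ), 0 ≤ F' t := by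
    intro t ht
    refine le_trans ?_ (hlow t)
    exact mul_nonneg (mul_nonneg hγ.le (Real.rpow_nonneg (hσpos t).le e)) hn2pos.le
  have hF'c : Continuous F' := by
    rw [continuous_iff_continuousAt]
    intro t
    have hσc : Continuous σ := by rw [hσdef]; fun_prop
    have huc : Continuous u := by rw [hudef]; fun_prop
    have hσct : ContinuousAt σ t := hσc.continuousAt
    have h1 : ContinuousAt (fun t => g' (σ t)) t :=
      ((hg' _ (hσpos t)).continuousAt).comp hσct
    have h2 : ContinuousAt (fun t => g'' (σ t)) t :=
      (hg''c.continuousAt (Ioi_mem_nhds (hσpos t))).comp hσct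
    have h3 : ContinuousAt (fun t => Real.sqrt (σ t)) t :=
      (Real.continuous_sqrt.continuousAt).comp hσct
    have hs0 : Real.sqrt (σ t) ≠ 0 := (Real.sqrt_pos.mpr (hσpos t)).ne'
    have hss : (fun t => 2 * σ t * Real.sqrt (σ t)) t ≠ 0 := by
      simp only
      exact mul_ne_zero (mul_ne_zero two_ne_zero (hσpos t).ne') hs0
    rw [hF'def]
    exact ((((continuousAt_const.div
        ((continuousAt_const.mul hσct).mul h3) hss).neg.add h2).mul
        (continuousAt_const.mul huc.continuousAt)).mul huc.continuousAt).add
      (((continuousAt_const.div h3 hs0).add h1).mul continuousAt_const)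
  have hF'i : ∀ a c : ℝ, IntervalIntegrable F' MeasureTheory.volume a c :=
    fun a c => hF'c.intervalIntegrable a c
  have hFTC : ∫ t in (0:ℝ)..1, F' t = F 1 - F 0 :=
    intervalIntegral.integral_eq_sub_of_hasDerivAt (fun t _ => hderiv t) (hF'i 0 1)
  have hsplitint : (∫ t in (0:ℝ)..T, F' t) + ∫ t in T..(1:ℝ), F' t
      = ∫ t in (0:ℝ)..1, F' t :=
    intervalIntegral.integral_add_adjacent_intervals (hF'i 0 T) (hF'i T 1)
  have hI1 : T * (γ * c₀ * n2) ≤ ∫ t in (0:ℝ)..T, F' t := by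
    have h := intervalIntegral.integral_mono_on hT0.le
      (intervalIntegrable_const (c := γ * c₀ * n2)) (hF'i 0 T) hlowT
    have h2 : γ * c₀ * (T * n2) ≤ ∫ t in (0:ℝ)..T, F' t := by simpa using h
    linarith
  have hI2 : 0 ≤ ∫ t in T..(1:ℝ), F' t :=
    intervalIntegral.integral_nonneg hT1 hnnT1
  have hσ0 : σ 0 = ε ^ 2 + ‖ξ₀‖ ^ 2 := by rw [hσdef]; simp
  have hσ1 : σ 1 = ε ^ 2 + ‖ξ₁‖ ^ 2 := by
    rw [hσeq 1, one_smul, ← hξ₁eq]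
  have hu0 : u 0 = ⟪ξ₀, η⟫ := by rw [hudef]; simp [hip]
  have hu1 : u 1 = ⟪ξ₁, η⟫ := by rw [hu 1, one_smul, ← hξ₁eq]
  have hIP : ⟪((b / Real.sqrt (ε ^ 2 + ‖ξ₁‖ ^ 2)) • ξ₁ + g' (ε ^ 2 + ‖ξ₁‖ ^ 2) • ξ₁)
      - ((b / Real.sqrt (ε ^ 2 + ‖ξ₀‖ ^ 2)) • ξ₀ + g' (ε ^ 2 + ‖ξ₀‖ ^ 2) • ξ₀), η⟫
      = F 1 - F 0 := by
    rw [inner_sub_left, inner_add_left, inner_add_left, real_inner_smul_left,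
      real_inner_smul_left, real_inner_smul_left, real_inner_smul_left]
    rw [hFdef]
    simp only
    rw [hσ0, hσ1, hu0, hu1]
    ring
  rw [hIP]
  have hfinal : γ * c₀ * (δ / (4 * M)) * n2 ≤ T * (γ * c₀ * n2) := by
    nlinarith [mul_nonneg (sub_nonneg.mpr hTδ) (by positivity : (0:ℝ) ≤ γ * c₀ * n2)]
  linarith
end

section
/- Let 0 < δ < 1 and M > δ. There exists a constant C₂ > 0, depending only on b, p, γ, Γ, δ and M, such that for every g satisfying (G1)–(G3), every ε with 0 < ε < δ/4, and all ξ₀, ξ₁ ∈ ℝ^k with δ ≤ |ξ₀| ≤ M and |ξ₁| ≤ M, one has |A_ε(ξ₁) − A_ε(ξ₀)| ≤ C₂·|ξ₁ − ξ₀|. -/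
open Real

private lemma rpow_interval_bound {a c σ e : ℝ} (ha : 0 < a) (h1 : a ≤ σ) (h2 : σ ≤ c) :
    σ ^ e ≤ a ^ e + c ^ e := by
  rcases le_or_gt 0 e with he | he
  · have h3 := Real.rpow_le_rpow (ha.le.trans h1) h2 he
    have h4 : (0:ℝ) ≤ a ^ e := Real.rpow_nonneg ha.le e
    linarith
  · have h3 := Real.rpow_le_rpow_of_nonpos ha h1 he.le
    have h4 : (0:ℝ) ≤ c ^ e := Real.rpow_nonneg ((ha.le.trans h1).trans h2) e
    linarith

set_option maxHeartbeats 1000000 in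
/-- Growth estimate: there exists `C₂ > 0`, depending only on `b, p, γ, Γ, δ, M`,
such that for every `g` satisfying (G1)–(G3), every `0 < ε < δ/4`, and all `ξ₀, ξ₁`
with `δ ≤ |ξ₀| ≤ M`, `|ξ₁| ≤ M`, one has `|A_ε(ξ₁) − A_ε(ξ₀)| ≤ C₂ |ξ₁ − ξ₀|`,
where `A_ε(ξ) = b ξ/√(ε²+|ξ|²) + g'(ε²+|ξ|²) ξ`. -/
theorem stmt_3 (k : ℕ) (hk : 1 ≤ k) (p b γ Γ δ M : ℝ)
    (hp : 1 < p) (hb : 0 < b) (hγ : 0 < γ) (hγΓ : γ ≤ Γ)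
    (hδ0 : 0 < δ) (hδ1 : δ < 1) (hM : δ < M) :
    ∃ C₂ : ℝ, 0 < C₂ ∧
      ∀ g g' g'' : ℝ → ℝ,
        (∀ σ : ℝ, 0 < σ → HasDerivAt g (g' σ) σ) →
        (∀ σ : ℝ, 0 < σ → HasDerivAt g' (g'' σ) σ) →
        ContinuousOn g'' (Set.Ioi 0) →
        (∀ σ : ℝ, 0 < σ → |g' σ| ≤ Γ * σ ^ (p / 2 - 1)) →
        (∀ σ : ℝ, 0 < σ → |g'' σ| ≤ Γ * σ ^ (p / 2 - 2)) →
        (∀ σ : ℝ, 0 ≤ σ → ∀ τ : ℝ, 0 < τ → τ < 1 →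
          γ * (σ + τ) ^ (p / 2 - 1) ≤ g' (σ + τ) + 2 * σ * min (g'' (σ + τ)) 0) →
        ∀ ε : ℝ, 0 < ε → ε < δ / 4 →
          ∀ ξ₀ ξ₁ : EuclideanSpace ℝ (Fin k),
            δ ≤ ‖ξ₀‖ → ‖ξ₀‖ ≤ M → ‖ξ₁‖ ≤ M →
            ‖((b / Real.sqrt (ε ^ 2 + ‖ξ₁‖ ^ 2)) • ξ₁ + g' (ε ^ 2 + ‖ξ₁‖ ^ 2) • ξ₁)
                - ((b / Real.sqrt (ε ^ 2 + ‖ξ₀‖ ^ 2)) • ξ₀ + g' (ε ^ 2 + ‖ξ₀‖ ^ 2) • ξ₀)‖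
              ≤ C₂ * ‖ξ₁ - ξ₀‖ := by
  have hM0 : 0 < M := hδ0.trans hM
  have hΓ0 : 0 < Γ := lt_of_lt_of_le hγ hγΓ
  obtain ⟨a, ha_def⟩ : ∃ x : ℝ, x = δ^2/4 := ⟨_, rfl⟩
  obtain ⟨c, hc_def⟩ : ∃ x : ℝ, x = δ^2/16 + M^2 := ⟨_, rfl⟩
  have ha0 : 0 < a := by rw [ha_def]; positivity
  have hc0 : 0 < c := by rw [hc_def]; positivity
  have hac : a ≤ c := by rw [ha_def, hc_def]; nlinarith
  obtain ⟨S, hS_def⟩ : ∃ x : ℝ, x = b + Γ * c ^ ((p-1)/2) := ⟨_, rfl⟩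
  obtain ⟨H, hH_def⟩ : ∃ x : ℝ, x = 2*b/δ + Γ * (a ^ (p/2-1) + c ^ (p/2-1)) := ⟨_, rfl⟩
  obtain ⟨L, hL_def⟩ : ∃ x : ℝ,
      x = b/(2*a*Real.sqrt a) + Γ * (a ^ (p/2-2) + c ^ (p/2-2)) := ⟨_, rfl⟩
  have hsa0 : 0 < Real.sqrt a := Real.sqrt_pos.mpr ha0
  have hS0 : 0 < S := by rw [hS_def]; positivity
  have hH0 : 0 < H := by rw [hH_def]; positivity
  have hL0 : 0 < L := by rw [hL_def]; positivity
  refine ⟨4*S/δ + (H + 2*M^2*L), by positivity, ?_⟩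
  intro g g' g'' hg hg' hg''c hG1 hG2 hG3 ε hε0 hε ξ₀ ξ₁ hξ₀l hξ₀u hξ₁u
  obtain ⟨h, hh_def⟩ : ∃ f : ℝ → ℝ, f = fun σ => b / Real.sqrt σ + g' σ := ⟨_, rfl⟩
  have hval : ∀ σ : ℝ, h σ = b / Real.sqrt σ + g' σ := by
    intro σ; rw [hh_def]
  have key : ∀ ξ : EuclideanSpace ℝ (Fin k),
      (b / Real.sqrt (ε^2+‖ξ‖^2)) • ξ + g' (ε^2+‖ξ‖^2) • ξ = h (ε^2+‖ξ‖^2) • ξ := by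
    intro ξ; rw [hval]; exact (add_smul _ _ _).symm
  rw [key ξ₁, key ξ₀]
  obtain ⟨σ₀, hσ₀_def⟩ : ∃ x : ℝ, x = ε^2+‖ξ₀‖^2 := ⟨_, rfl⟩
  obtain ⟨σ₁, hσ₁_def⟩ : ∃ x : ℝ, x = ε^2+‖ξ₁‖^2 := ⟨_, rfl⟩
  rw [← hσ₀_def, ← hσ₁_def]
  have hσ₀0 : 0 < σ₀ := by rw [hσ₀_def]; positivity
  have hσ₁0 : 0 < σ₁ := by rw [hσ₁_def]; positivity
  have hεsq : ε^2 ≤ δ^2/16 := by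
    have := pow_le_pow_left₀ hε0.le hε.le 2
    linarith
  have hσ₀c : σ₀ ≤ c := by
    rw [hσ₀_def, hc_def]
    have := pow_le_pow_left₀ (norm_nonneg ξ₀) hξ₀u 2
    linarith
  have hσ₁c : σ₁ ≤ c := by
    rw [hσ₁_def, hc_def]
    have := pow_le_pow_left₀ (norm_nonneg ξ₁) hξ₁u 2
    linarith
  have hσ₀a : a ≤ σ₀ := by
    rw [hσ₀_def, ha_def]
    have := pow_le_pow_left₀ hδ0.le hξ₀l 2
    linarith [sq_nonneg ε]
  -- generic sup bound
  have hsup : ∀ (σ : ℝ) (ξ : EuclideanSpace ℝ (Fin k)), σ = ε^2+‖ξ‖^2 → ‖ξ‖ ≤ M →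
      σ ≤ c → ‖h σ • ξ‖ ≤ S := by
    intro σ ξ hσ_def hξM hξc
    have hσ0 : 0 < σ := by rw [hσ_def]; positivity
    have hξσ : ‖ξ‖ ≤ Real.sqrt σ := by
      have h' : ‖ξ‖ = Real.sqrt (‖ξ‖^2) := (Real.sqrt_sq (norm_nonneg ξ)).symm
      rw [h']
      exact Real.sqrt_le_sqrt (by rw [hσ_def]; linarith [sq_nonneg ε])
    have hsqrt0 : 0 < Real.sqrt σ := Real.sqrt_pos.mpr hσ0
    rw [norm_smul, Real.norm_eq_abs]
    have h1 : |h σ| * ‖ξ‖ ≤ (b / Real.sqrt σ) * ‖ξ‖ + |g' σ| * ‖ξ‖ := by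
      rw [hval]
      have hb' : |b / Real.sqrt σ| = b / Real.sqrt σ := abs_of_pos (by positivity)
      have ht := mul_le_mul_of_nonneg_right (abs_add_le (b / Real.sqrt σ) (g' σ)) (norm_nonneg ξ)
      rw [hb', add_mul] at ht
      linarith
    have h2 : (b / Real.sqrt σ) * ‖ξ‖ ≤ b := by
      rw [div_mul_eq_mul_div, div_le_iff₀ hsqrt0]
      exact mul_le_mul_of_nonneg_left hξσ hb.le
    have h3 : |g' σ| * ‖ξ‖ ≤ Γ * c ^ ((p-1)/2) := by
      have hg1 := hG1 σ hσ0
      have hstep : |g' σ| * ‖ξ‖ ≤ Γ * σ ^ (p/2-1) * Real.sqrt σ := by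
        apply mul_le_mul hg1 hξσ (norm_nonneg ξ)
        positivity
      have heq : Γ * σ ^ (p/2-1) * Real.sqrt σ = Γ * σ ^ ((p-1)/2) := by
        rw [Real.sqrt_eq_rpow, mul_assoc, ← Real.rpow_add hσ0,
          show p/2-1+(1/2:ℝ) = (p-1)/2 by ring]
      rw [heq] at hstep
      exact hstep.trans (mul_le_mul_of_nonneg_left
        (Real.rpow_le_rpow hσ0.le hξc (by linarith : (0:ℝ) ≤ (p-1)/2)) hΓ0.le)
    rw [hS_def]; linarith
  by_cases hsplit : δ/2 ≤ ‖ξ₁ - ξ₀‖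
  · -- far apart: use sup bounds
    have b1 := hsup σ₁ ξ₁ hσ₁_def hξ₁u hσ₁c
    have b0 := hsup σ₀ ξ₀ hσ₀_def hξ₀u hσ₀c
    have htri : ‖h σ₁ • ξ₁ - h σ₀ • ξ₀‖ ≤ 2 * S := by
      calc ‖h σ₁ • ξ₁ - h σ₀ • ξ₀‖ ≤ ‖h σ₁ • ξ₁‖ + ‖h σ₀ • ξ₀‖ := norm_sub_le _ _
        _ ≤ 2 * S := by linarith
    have h2S : 2 * S ≤ (4*S/δ) * ‖ξ₁ - ξ₀‖ := by
      rw [div_mul_eq_mul_div, le_div_iff₀ hδ0]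
      have := mul_le_mul_of_nonneg_left hsplit (by positivity : (0:ℝ) ≤ 4*S)
      linarith
    have hnn : (0:ℝ) ≤ (H + 2*M^2*L) * ‖ξ₁ - ξ₀‖ := by positivity
    linarith
  · -- close: Lipschitz estimate on the good region
    push_neg at hsplit
    have hξ₁l : δ/2 ≤ ‖ξ₁‖ := by
      have h01 : ‖ξ₀‖ - ‖ξ₁‖ ≤ ‖ξ₀ - ξ₁‖ := norm_sub_norm_le ξ₀ ξ₁
      rw [norm_sub_rev] at h01
      linarith
    have hσ₁a : a ≤ σ₁ := by
      rw [hσ₁_def, ha_def]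
      have := pow_le_pow_left₀ (by linarith : (0:ℝ) ≤ δ/2) hξ₁l 2
      linarith [sq_nonneg ε]
    have hsa : Real.sqrt a = δ/2 := by
      rw [ha_def, show δ^2/4 = (δ/2)^2 by ring, Real.sqrt_sq (by linarith)]
    -- MVT for h on [a,c]
    have hmvt : |h σ₁ - h σ₀| ≤ L * |σ₁ - σ₀| := by
      have hderiv : ∀ σ ∈ Set.Icc a c,
          HasDerivWithinAt h (g'' σ - b/(2*σ*Real.sqrt σ)) (Set.Icc a c) σ := by
        intro σ hσ
        have hσ0 : 0 < σ := lt_of_lt_of_le ha0 hσ.1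
        have hsq0 : Real.sqrt σ ≠ 0 := (Real.sqrt_pos.mpr hσ0).ne'
        have h1 : HasDerivAt (fun x => b / Real.sqrt x) (-(b/(2*σ*Real.sqrt σ))) σ := by
          have hd : HasDerivAt (fun x => b / Real.sqrt x)
              ((0 * Real.sqrt σ - b * (1 / (2 * Real.sqrt σ))) / Real.sqrt σ ^ 2) σ :=
            (hasDerivAt_const σ b).div (Real.hasDerivAt_sqrt hσ0.ne') hsq0
          convert hd using 1
          rw [Real.sq_sqrt hσ0.le]
          field_simp
          ring_nf
          try exact Or.inl trivial
        have h2 : HasDerivAt (fun x => b / Real.sqrt x + g' x)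
            (-(b/(2*σ*Real.sqrt σ)) + g'' σ) σ := h1.add (hg' σ hσ0)
        rw [← hh_def] at h2
        have he : -(b/(2*σ*Real.sqrt σ)) + g'' σ = g'' σ - b/(2*σ*Real.sqrt σ) := by ring
        rw [he] at h2
        exact h2.hasDerivWithinAt
      have hbound : ∀ σ ∈ Set.Icc a c, ‖g'' σ - b/(2*σ*Real.sqrt σ)‖ ≤ L := by
        intro σ hσ
        have hσ0 : 0 < σ := lt_of_lt_of_le ha0 hσ.1
        have hg2 := hG2 σ hσ0
        have hrp := rpow_interval_bound (e := p/2-2) ha0 hσ.1 hσ.2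
        have hmono : 2*a*Real.sqrt a ≤ 2*σ*Real.sqrt σ := by
          have hs := Real.sqrt_le_sqrt hσ.1
          have := mul_le_mul hσ.1 hs (Real.sqrt_nonneg a) hσ0.le
          linarith
        have hpos : 0 < 2*a*Real.sqrt a := by positivity
        have hdiv : b/(2*σ*Real.sqrt σ) ≤ b/(2*a*Real.sqrt a) :=
          div_le_div_of_nonneg_left hb.le hpos hmono
        rw [Real.norm_eq_abs]
        have hpos' : 0 < 2*σ*Real.sqrt σ := lt_of_lt_of_le hpos hmono
        have habs : |g'' σ - b/(2*σ*Real.sqrt σ)| ≤ |g'' σ| + b/(2*σ*Real.sqrt σ) := by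
          have hab : |b/(2*σ*Real.sqrt σ)| = b/(2*σ*Real.sqrt σ) := abs_of_pos (by positivity)
          calc |g'' σ - b/(2*σ*Real.sqrt σ)| ≤ |g'' σ| + |b/(2*σ*Real.sqrt σ)| := abs_sub _ _
            _ = |g'' σ| + b/(2*σ*Real.sqrt σ) := by rw [hab]
        rw [hL_def]
        have hΓb : Γ * σ ^ (p/2-2) ≤ Γ * (a ^ (p/2-2) + c ^ (p/2-2)) :=
          mul_le_mul_of_nonneg_left hrp hΓ0.le
        linarith
      have hres := Convex.norm_image_sub_le_of_norm_hasDerivWithin_le hderiv hbound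
        (convex_Icc a c) ⟨hσ₀a, hσ₀c⟩ ⟨hσ₁a, hσ₁c⟩
      simpa [Real.norm_eq_abs] using hres
    have hσdiff : |σ₁ - σ₀| ≤ 2*M*‖ξ₁ - ξ₀‖ := by
      have h1 : σ₁ - σ₀ = (‖ξ₁‖-‖ξ₀‖)*(‖ξ₁‖+‖ξ₀‖) := by
        rw [hσ₁_def, hσ₀_def]; ring
      rw [h1, abs_mul]
      have h2 : |‖ξ₁‖-‖ξ₀‖| ≤ ‖ξ₁ - ξ₀‖ := abs_norm_sub_norm_le _ _
      have h3 : |‖ξ₁‖+‖ξ₀‖| ≤ 2*M := by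
        rw [abs_of_nonneg (by positivity)]; linarith
      calc |‖ξ₁‖-‖ξ₀‖| * |‖ξ₁‖+‖ξ₀‖| ≤ ‖ξ₁ - ξ₀‖ * (2*M) :=
            mul_le_mul h2 h3 (abs_nonneg _) (norm_nonneg _)
        _ = 2*M*‖ξ₁ - ξ₀‖ := by ring
    have hH1 : |h σ₁| ≤ H := by
      rw [hval]
      have hsq : δ/2 ≤ Real.sqrt σ₁ := hsa ▸ Real.sqrt_le_sqrt hσ₁a
      have hd2 : 0 < δ/2 := by linarith
      have h1 : b / Real.sqrt σ₁ ≤ 2*b/δ := by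
        rw [div_le_div_iff₀ (lt_of_lt_of_le hd2 hsq) hδ0]
        have := mul_le_mul_of_nonneg_left hsq (by linarith : (0:ℝ) ≤ 2*b)
        linarith
      have h2 : |g' σ₁| ≤ Γ * (a ^ (p/2-1) + c ^ (p/2-1)) := by
        have hg1 := hG1 σ₁ hσ₁0
        have hrp := rpow_interval_bound (e := p/2-1) ha0 hσ₁a hσ₁c
        have := mul_le_mul_of_nonneg_left hrp hΓ0.le
        linarith
      have h3 : |b / Real.sqrt σ₁ + g' σ₁| ≤ b / Real.sqrt σ₁ + |g' σ₁| := by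
        have hab : |b / Real.sqrt σ₁| = b / Real.sqrt σ₁ := abs_of_pos (by positivity)
        calc |b / Real.sqrt σ₁ + g' σ₁| ≤ |b / Real.sqrt σ₁| + |g' σ₁| := abs_add_le _ _
          _ = b / Real.sqrt σ₁ + |g' σ₁| := by rw [hab]
      rw [hH_def]; linarith
    have hdecomp : h σ₁ • ξ₁ - h σ₀ • ξ₀ = h σ₁ • (ξ₁ - ξ₀) + (h σ₁ - h σ₀) • ξ₀ := by
      module
    rw [hdecomp]
    have hfinal : ‖h σ₁ • (ξ₁ - ξ₀) + (h σ₁ - h σ₀) • ξ₀‖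
        ≤ |h σ₁| * ‖ξ₁ - ξ₀‖ + |h σ₁ - h σ₀| * ‖ξ₀‖ := by
      calc ‖h σ₁ • (ξ₁ - ξ₀) + (h σ₁ - h σ₀) • ξ₀‖
          ≤ ‖h σ₁ • (ξ₁ - ξ₀)‖ + ‖(h σ₁ - h σ₀) • ξ₀‖ := norm_add_le _ _
        _ = |h σ₁| * ‖ξ₁ - ξ₀‖ + |h σ₁ - h σ₀| * ‖ξ₀‖ := by
            rw [norm_smul, norm_smul, Real.norm_eq_abs, Real.norm_eq_abs]
    have hterm1 : |h σ₁| * ‖ξ₁ - ξ₀‖ ≤ H * ‖ξ₁ - ξ₀‖ :=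
      mul_le_mul_of_nonneg_right hH1 (norm_nonneg _)
    have hterm2 : |h σ₁ - h σ₀| * ‖ξ₀‖ ≤ 2*M^2*L * ‖ξ₁ - ξ₀‖ := by
      have h1 : |h σ₁ - h σ₀| * ‖ξ₀‖ ≤ (L * (2*M*‖ξ₁ - ξ₀‖)) * M := by
        apply mul_le_mul _ hξ₀u (norm_nonneg _) (by positivity)
        calc |h σ₁ - h σ₀| ≤ L * |σ₁ - σ₀| := hmvt
          _ ≤ L * (2*M*‖ξ₁ - ξ₀‖) := mul_le_mul_of_nonneg_left hσdiff hL0.le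
      calc |h σ₁ - h σ₀| * ‖ξ₀‖ ≤ (L * (2*M*‖ξ₁ - ξ₀‖)) * M := h1
        _ = 2*M^2*L * ‖ξ₁ - ξ₀‖ := by ring
    have hnn : (0:ℝ) ≤ 4*S/δ * ‖ξ₁ - ξ₀‖ := by positivity
    calc ‖h σ₁ • (ξ₁ - ξ₀) + (h σ₁ - h σ₀) • ξ₀‖
        ≤ |h σ₁| * ‖ξ₁ - ξ₀‖ + |h σ₁ - h σ₀| * ‖ξ₀‖ := hfinal
      _ ≤ H * ‖ξ₁ - ξ₀‖ + 2*M^2*L * ‖ξ₁ - ξ₀‖ := by linarith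
      _ ≤ (4*S/δ + (H + 2*M^2*L)) * ‖ξ₁ - ξ₀‖ := by
          have h0 : (0:ℝ) ≤ 4*S/δ * ‖ξ₁ - ξ₀‖ := hnn
          ring_nf
          ring_nf at h0 ⊢
          linarith
end

section
/- Let 0 < δ < 1 and β₀ ∈ (0,1]. There exists a constant C > 0, depending only on p and β₀, such that for every g satisfying (G1)–(G4), every ε with 0 < ε < δ/4, every μ with δ < μ < ∞, and all ξ₀, ξ₁ ∈ ℝ^k with δ + μ/4 ≤ |ξ₀| ≤ δ + μ and |ξ₁| ≤ δ + μ, one has |ℬ_{p,ε}(ξ₀)(ξ₁ − ξ₀) − (A_{p,ε}(ξ₁) − A_{p,ε}(ξ₀))| ≤ C·Γ·μ^{p−2−β₀}·|ξ₁ − ξ₀|^{1+β₀}. -/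
set_option maxHeartbeats 4000000

open Real RealInnerProductSpace

private lemma sq_rpow {μ : ℝ} (hμ : 0 ≤ μ) (a : ℝ) : (μ ^ 2) ^ a = μ ^ (2 * a) := by
  rw [← Real.rpow_natCast μ 2, ← Real.rpow_mul hμ]
  norm_num

private lemma aux_rpow_bound {μ σ a : ℝ} (hμ : 0 < μ) (h1 : μ ^ 2 / 64 ≤ σ)
    (h2 : σ ≤ 5 * μ ^ 2) : σ ^ a ≤ 320 ^ |a| * μ ^ (2 * a) := by
  have hσ : 0 < σ := lt_of_lt_of_le (by positivity) h1
  have hμ2a : (0:ℝ) ≤ μ ^ (2 * a) := Real.rpow_nonneg hμ.le _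
  rcases le_or_gt 0 a with ha | ha
  · calc σ ^ a ≤ (5 * μ ^ 2) ^ a := Real.rpow_le_rpow hσ.le h2 ha
      _ = 5 ^ a * μ ^ (2 * a) := by
          rw [Real.mul_rpow (by norm_num) (by positivity), sq_rpow hμ.le]
      _ ≤ 320 ^ |a| * μ ^ (2 * a) := by
          rw [abs_of_nonneg ha]
          exact mul_le_mul_of_nonneg_right
            (Real.rpow_le_rpow (by norm_num) (by norm_num) ha) hμ2a
  · calc σ ^ a ≤ (μ ^ 2 / 64) ^ a := Real.rpow_le_rpow_of_nonpos (by positivity) h1 ha.le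
      _ = 64 ^ (-a) * μ ^ (2 * a) := by
          rw [Real.div_rpow (by positivity) (by norm_num), sq_rpow hμ.le,
            Real.rpow_neg (by norm_num)]
          ring
      _ ≤ 320 ^ |a| * μ ^ (2 * a) := by
          rw [abs_of_neg ha]
          exact mul_le_mul_of_nonneg_right
            (Real.rpow_le_rpow (by norm_num) (by norm_num) (by linarith)) hμ2a

private lemma aux_rpow_bound' {μ σ a p : ℝ} (hμ : 0 < μ) (h1 : μ ^ 2 / 64 ≤ σ)
    (h2 : σ ≤ 5 * μ ^ 2) (ha : |a| ≤ p + 6) :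
    σ ^ a ≤ 320 ^ (p + 6) * μ ^ (2 * a) :=
  (aux_rpow_bound hμ h1 h2).trans (mul_le_mul_of_nonneg_right
    (Real.rpow_le_rpow_of_exponent_le (by norm_num) ha) (Real.rpow_nonneg hμ.le _))

/-- Hölder continuity of `g''` on the extended interval `[μ²/64, 5 μ²]`,
obtained by chaining (G4) at scales `μ/4` and `μ`. -/
private lemma aux_holder {p β₀ Γ : ℝ} {g'' : ℝ → ℝ} (hp : 1 < p) (hβ₀ : 0 < β₀)
    (hβ₀' : β₀ ≤ 1) (hΓ : 0 ≤ Γ)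
    (hG4 : ∀ μ : ℝ, 0 < μ → ∀ σ₁ ∈ Set.Icc (μ ^ 2 / 4) (7 * μ ^ 2),
      ∀ σ₂ ∈ Set.Icc (μ ^ 2 / 4) (7 * μ ^ 2),
      |g'' σ₁ - g'' σ₂| ≤ Γ * μ ^ (p - 4 - 2 * β₀) * |σ₁ - σ₂| ^ β₀)
    {μ σ₁ σ₂ : ℝ} (hμ : 0 < μ) (h11 : μ ^ 2 / 64 ≤ σ₁) (h12 : σ₁ ≤ 5 * μ ^ 2)
    (h21 : μ ^ 2 / 64 ≤ σ₂) (h22 : σ₂ ≤ 5 * μ ^ 2) :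
    |g'' σ₁ - g'' σ₂| ≤ 2048 * Γ * μ ^ (p - 4 - 2 * β₀) * |σ₁ - σ₂| ^ β₀ := by
  have hμe : (0:ℝ) ≤ μ ^ (p - 4 - 2 * β₀) := Real.rpow_nonneg hμ.le _
  -- scale factor for the μ/4-scale application of (G4)
  have key4 : (μ / 4) ^ (p - 4 - 2 * β₀) ≤ 1024 * μ ^ (p - 4 - 2 * β₀) := by
    rw [Real.div_rpow hμ.le (by norm_num), div_eq_mul_inv,
      ← Real.rpow_neg (by norm_num : (0:ℝ) ≤ 4)]
    have h4 : (4:ℝ) ^ (-(p - 4 - 2 * β₀)) ≤ 1024 := by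
      calc (4:ℝ) ^ (-(p - 4 - 2 * β₀)) ≤ 4 ^ (5:ℝ) :=
            Real.rpow_le_rpow_of_exponent_le (by norm_num) (by linarith)
        _ = 1024 := by
            rw [show (5:ℝ) = ((5:ℕ):ℝ) by norm_num, Real.rpow_natCast]; norm_num
    calc μ ^ (p - 4 - 2 * β₀) * 4 ^ (-(p - 4 - 2 * β₀))
        ≤ μ ^ (p - 4 - 2 * β₀) * 1024 := mul_le_mul_of_nonneg_left h4 hμe
      _ = 1024 * μ ^ (p - 4 - 2 * β₀) := by ring
  have small : ∀ a b : ℝ, μ ^ 2 / 64 ≤ a → a ≤ 7 * μ ^ 2 / 16 → μ ^ 2 / 64 ≤ b →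
      b ≤ 7 * μ ^ 2 / 16 →
      |g'' a - g'' b| ≤ 1024 * Γ * μ ^ (p - 4 - 2 * β₀) * |a - b| ^ β₀ := by
    intro a b ha1 ha2 hb1 hb2
    have h := hG4 (μ / 4) (by positivity) a ⟨by nlinarith, by nlinarith⟩
      b ⟨by nlinarith, by nlinarith⟩
    refine h.trans ?_
    have h2 : Γ * (μ / 4) ^ (p - 4 - 2 * β₀) ≤ 1024 * Γ * μ ^ (p - 4 - 2 * β₀) := by
      calc Γ * (μ / 4) ^ (p - 4 - 2 * β₀) ≤ Γ * (1024 * μ ^ (p - 4 - 2 * β₀)) :=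
            mul_le_mul_of_nonneg_left key4 hΓ
        _ = 1024 * Γ * μ ^ (p - 4 - 2 * β₀) := by ring
    exact mul_le_mul_of_nonneg_right h2 (Real.rpow_nonneg (abs_nonneg _) _)
  have big : ∀ a b : ℝ, μ ^ 2 / 4 ≤ a → a ≤ 5 * μ ^ 2 → μ ^ 2 / 4 ≤ b →
      b ≤ 5 * μ ^ 2 →
      |g'' a - g'' b| ≤ Γ * μ ^ (p - 4 - 2 * β₀) * |a - b| ^ β₀ := by
    intro a b ha1 ha2 hb1 hb2
    exact hG4 μ hμ a ⟨by nlinarith, by nlinarith⟩ b ⟨by nlinarith, by nlinarith⟩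
  -- reduce to the ordered case
  have core : ∀ a b : ℝ, μ ^ 2 / 64 ≤ a → b ≤ 5 * μ ^ 2 → a ≤ b →
      |g'' a - g'' b| ≤ 2048 * Γ * μ ^ (p - 4 - 2 * β₀) * |a - b| ^ β₀ := by
    intro a b ha1 hb2 hab
    have hP : (0:ℝ) ≤ Γ * μ ^ (p - 4 - 2 * β₀) * |a - b| ^ β₀ := by positivity
    rcases le_or_gt b (7 * μ ^ 2 / 16) with hcase1 | hcase1
    · have := small a b ha1 (le_trans hab hcase1) (le_trans ha1 hab) hcase1
      nlinarith
    rcases le_or_gt (μ ^ 2 / 4) a with hcase2 | hcase2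
    · have := big a b hcase2 (le_trans hab hb2) (le_trans hcase2 hab) hb2
      nlinarith
    · -- split at m = μ²/4
      have hm1 := small a (μ ^ 2 / 4) ha1 (by nlinarith) (by nlinarith) (by nlinarith)
      have hm2 := big (μ ^ 2 / 4) b (le_refl _) (by nlinarith) (by nlinarith) hb2
      have habs : |g'' a - g'' b| ≤ |g'' a - g'' (μ ^ 2 / 4)| + |g'' (μ ^ 2 / 4) - g'' b| :=
        abs_sub_le _ _ _
      have hr1 : |a - μ ^ 2 / 4| ^ β₀ ≤ |a - b| ^ β₀ := by
        apply Real.rpow_le_rpow (abs_nonneg _) _ hβ₀.le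
        rw [abs_of_nonpos (by linarith), abs_of_nonpos (by linarith)]
        linarith
      have hr2 : |μ ^ 2 / 4 - b| ^ β₀ ≤ |a - b| ^ β₀ := by
        apply Real.rpow_le_rpow (abs_nonneg _) _ hβ₀.le
        rw [abs_of_nonpos (by linarith), abs_of_nonpos (by linarith)]
        linarith
      have hc1 : |g'' a - g'' (μ ^ 2 / 4)| ≤ 1024 * Γ * μ ^ (p - 4 - 2 * β₀) * |a - b| ^ β₀ :=
        hm1.trans (mul_le_mul_of_nonneg_left hr1 (by positivity))
      have hc2 : |g'' (μ ^ 2 / 4) - g'' b| ≤ Γ * μ ^ (p - 4 - 2 * β₀) * |a - b| ^ β₀ :=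
        hm2.trans (mul_le_mul_of_nonneg_left hr2 (by positivity))
      nlinarith
  rcases le_total σ₁ σ₂ with h | h
  · exact core σ₁ σ₂ h11 h22 h
  · rw [abs_sub_comm (g'' σ₁), abs_sub_comm σ₁]
    exact core σ₂ σ₁ h21 h12 h

/-- absorb `μ^(p-3) x²` into `μ^(p-2-β₀) x^(1+β₀)` when `x ≤ μ`. -/
private lemma aux_eta {μ x p β₀ : ℝ} (hμ : 0 < μ) (hx : 0 ≤ x) (hxμ : x ≤ μ)
    (hβ₀ : 0 < β₀) (hβ₀' : β₀ ≤ 1) :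
    μ ^ (p - 3) * (x * x) ≤ μ ^ (p - 2 - β₀) * x ^ (1 + β₀) := by
  rcases hx.eq_or_lt with h | h
  · rw [← h, Real.zero_rpow (by positivity : (1:ℝ) + β₀ ≠ 0)]
    norm_num
  · have hxx : x * x = x ^ (1 + β₀) * x ^ (1 - β₀) := by
      rw [← Real.rpow_add h]
      have h2 : 1 + β₀ + (1 - β₀) = 2 := by ring
      rw [h2, Real.rpow_two]; ring
    calc μ ^ (p - 3) * (x * x) = μ ^ (p - 3) * x ^ (1 - β₀) * x ^ (1 + β₀) := by
          rw [hxx]; ring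
      _ ≤ μ ^ (p - 3) * μ ^ (1 - β₀) * x ^ (1 + β₀) := by
          apply mul_le_mul_of_nonneg_right _ (Real.rpow_nonneg h.le _)
          exact mul_le_mul_of_nonneg_left
            (Real.rpow_le_rpow h.le hxμ (by linarith)) (Real.rpow_nonneg hμ.le _)
      _ = μ ^ (p - 2 - β₀) * x ^ (1 + β₀) := by
          rw [← Real.rpow_add hμ]; ring_nf

private lemma aux_caseA {μ x p β₀ : ℝ} (hμ : 0 < μ) (hμx : μ ≤ 8 * x)
    (hβ₀ : 0 < β₀) (hβ₀' : β₀ ≤ 1) :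
    μ ^ (p - 2) * x ≤ 8 * (μ ^ (p - 2 - β₀) * x ^ (1 + β₀)) := by
  have hx : 0 < x := by linarith
  have h1 : μ ^ (p - 2) = μ ^ (p - 2 - β₀) * μ ^ β₀ := by
    rw [← Real.rpow_add hμ]; ring_nf
  have h2 : μ ^ β₀ ≤ 8 * x ^ β₀ := by
    calc μ ^ β₀ ≤ (8 * x) ^ β₀ := Real.rpow_le_rpow hμ.le hμx hβ₀.le
      _ = 8 ^ β₀ * x ^ β₀ := Real.mul_rpow (by norm_num) hx.le
      _ ≤ 8 * x ^ β₀ := by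
          have : (8:ℝ) ^ β₀ ≤ 8 ^ (1:ℝ) := Real.rpow_le_rpow_of_exponent_le (by norm_num) hβ₀'
          rw [Real.rpow_one] at this
          exact mul_le_mul_of_nonneg_right this (Real.rpow_nonneg hx.le _)
  have h3 : x ^ β₀ * x = x ^ (1 + β₀) := by
    rw [Real.rpow_add hx, Real.rpow_one]; ring
  calc μ ^ (p - 2) * x = μ ^ (p - 2 - β₀) * (μ ^ β₀ * x) := by rw [h1]; ring
    _ ≤ μ ^ (p - 2 - β₀) * (8 * x ^ β₀ * x) := by
        apply mul_le_mul_of_nonneg_left _ (Real.rpow_nonneg hμ.le _)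
        exact mul_le_mul_of_nonneg_right h2 hx.le
    _ = 8 * (μ ^ (p - 2 - β₀) * x ^ (1 + β₀)) := by rw [← h3]; ring

private lemma aux_deriv_sigma {k : ℕ} (ε : ℝ) (ξ₀ η : EuclideanSpace ℝ (Fin k)) (t : ℝ) :
    HasDerivAt (fun s : ℝ => ε ^ 2 + ‖ξ₀ + s • η‖ ^ 2) (2 * ⟪ξ₀ + t • η, η⟫) t := by
  have hx : HasDerivAt (fun s : ℝ => ξ₀ + s • η) η t := by
    simpa using ((hasDerivAt_id t).smul_const η).const_add ξ₀
  have hni : HasDerivAt (fun s : ℝ => (⟪ξ₀ + s • η, ξ₀ + s • η⟫ : ℝ))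
      (2 * ⟪ξ₀ + t • η, η⟫) t := by
    have h := hx.inner ℝ hx
    refine h.congr_deriv ?_
    rw [real_inner_comm η (ξ₀ + t • η)]
    ring
  have heq : (fun s : ℝ => ε ^ 2 + ‖ξ₀ + s • η‖ ^ 2)
      = fun s : ℝ => ε ^ 2 + ⟪ξ₀ + s • η, ξ₀ + s • η⟫ := by
    funext s; rw [real_inner_self_eq_norm_sq]
  rw [heq]
  exact hni.const_add _

private lemma aux_deriv_scalar {k : ℕ} (g' g'' : ℝ → ℝ)
    (hg' : ∀ σ : ℝ, 0 < σ → HasDerivAt g' (g'' σ) σ)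
    {ε : ℝ} (hε : 0 < ε) (ξ₀ η : EuclideanSpace ℝ (Fin k)) (t : ℝ) :
    HasDerivAt (fun s : ℝ => g' (ε ^ 2 + ‖ξ₀ + s • η‖ ^ 2))
      (g'' (ε ^ 2 + ‖ξ₀ + t • η‖ ^ 2) * (2 * ⟪ξ₀ + t • η, η⟫)) t := by
  have hpos : 0 < ε ^ 2 + ‖ξ₀ + t • η‖ ^ 2 := by positivity
  exact (hg' _ hpos).comp t (aux_deriv_sigma ε ξ₀ η t)

private lemma aux_deriv_phi {k : ℕ} (g' g'' : ℝ → ℝ)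
    (hg' : ∀ σ : ℝ, 0 < σ → HasDerivAt g' (g'' σ) σ)
    {ε : ℝ} (hε : 0 < ε) (ξ₀ η : EuclideanSpace ℝ (Fin k)) (t : ℝ) :
    HasDerivAt (fun s : ℝ => g' (ε ^ 2 + ‖ξ₀ + s • η‖ ^ 2) • (ξ₀ + s • η))
      ((g'' (ε ^ 2 + ‖ξ₀ + t • η‖ ^ 2) * (2 * ⟪ξ₀ + t • η, η⟫)) • (ξ₀ + t • η)
        + g' (ε ^ 2 + ‖ξ₀ + t • η‖ ^ 2) • η) t := by
  have hx : HasDerivAt (fun s : ℝ => ξ₀ + s • η) η t := by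
    simpa using ((hasDerivAt_id t).smul_const η).const_add ξ₀
  have h := (aux_deriv_scalar g' g'' hg' hε ξ₀ η t).smul hx
  rw [add_comm] at h
  exact h

private lemma rpow_succ {μ : ℝ} (hμ : 0 < μ) (a : ℝ) : μ ^ a * μ = μ ^ (a + 1) := by
  rw [Real.rpow_add hμ, Real.rpow_one]

private lemma aux_A_bound {p μ Γ : ℝ} {g' : ℝ → ℝ} (hp : 1 < p) (hμ : 0 < μ) (hΓ : 0 ≤ Γ)
    (hG1 : ∀ σ : ℝ, 0 < σ → |g' σ| ≤ Γ * σ ^ (p / 2 - 1)) {σ x : ℝ} (hσ : 0 < σ)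
    (hxσ : x ^ 2 ≤ σ) (hx : 0 ≤ x) (hσ5 : σ ≤ 5 * μ ^ 2) :
    |g' σ| * x ≤ Γ * (320 ^ (p + 6) * μ ^ (p - 1)) := by
  have hxs : x ≤ σ ^ (1/2 : ℝ) := by
    have h1 : (x ^ 2) ^ (1/2 : ℝ) ≤ σ ^ (1/2 : ℝ) :=
      Real.rpow_le_rpow (by positivity) hxσ (by norm_num)
    rwa [sq_rpow hx, show 2 * (1/2 : ℝ) = 1 by norm_num, Real.rpow_one] at h1
  calc |g' σ| * x ≤ (Γ * σ ^ (p / 2 - 1)) * σ ^ (1/2 : ℝ) :=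
        mul_le_mul (hG1 σ hσ) hxs hx (by positivity)
    _ = Γ * σ ^ ((p - 1) / 2) := by
        rw [mul_assoc, ← Real.rpow_add hσ, show p / 2 - 1 + 1/2 = (p-1)/2 by ring]
    _ ≤ Γ * (5 * μ ^ 2) ^ ((p - 1) / 2) :=
        mul_le_mul_of_nonneg_left (Real.rpow_le_rpow hσ.le hσ5 (by linarith)) hΓ
    _ ≤ Γ * (320 ^ (p + 6) * μ ^ (p - 1)) := by
        rw [Real.mul_rpow (by norm_num) (by positivity), sq_rpow hμ.le,
          show 2 * ((p - 1) / 2) = p - 1 by ring]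
        apply mul_le_mul_of_nonneg_left _ hΓ
        apply mul_le_mul_of_nonneg_right _ (Real.rpow_nonneg hμ.le _)
        calc (5:ℝ) ^ ((p-1)/2) ≤ 320 ^ ((p-1)/2) :=
              Real.rpow_le_rpow (by norm_num) (by norm_num) (by linarith)
          _ ≤ 320 ^ (p + 6) := Real.rpow_le_rpow_of_exponent_le (by norm_num) (by linarith)

/-- Hessian error estimate for the `p`-part: there exists `C > 0`, depending only on
`p` and `β₀`, such that for every `g` satisfying (G1)–(G4), every `0 < ε < δ/4`, every
`μ > δ`, and all `ξ₀, ξ₁` with `δ + μ/4 ≤ |ξ₀| ≤ δ + μ`, `|ξ₁| ≤ δ + μ`,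
`|ℬ_{p,ε}(ξ₀)(ξ₁ − ξ₀) − (A_{p,ε}(ξ₁) − A_{p,ε}(ξ₀))| ≤ C Γ μ^{p−2−β₀} |ξ₁ − ξ₀|^{1+β₀}`. -/
theorem stmt_5 (k : ℕ) (hk : 1 ≤ k) (p β₀ : ℝ)
    (hp : 1 < p) (hβ₀ : 0 < β₀) (hβ₀' : β₀ ≤ 1) :
    ∃ C : ℝ, 0 < C ∧
      ∀ γ Γ : ℝ, 0 < γ → γ ≤ Γ →
      ∀ δ : ℝ, 0 < δ → δ < 1 →
      ∀ g g' g'' : ℝ → ℝ,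
        (∀ σ : ℝ, 0 < σ → HasDerivAt g (g' σ) σ) →
        (∀ σ : ℝ, 0 < σ → HasDerivAt g' (g'' σ) σ) →
        ContinuousOn g'' (Set.Ioi 0) →
        (∀ σ : ℝ, 0 < σ → |g' σ| ≤ Γ * σ ^ (p / 2 - 1)) →
        (∀ σ : ℝ, 0 < σ → |g'' σ| ≤ Γ * σ ^ (p / 2 - 2)) →
        (∀ σ : ℝ, 0 ≤ σ → ∀ τ : ℝ, 0 < τ → τ < 1 →
          γ * (σ + τ) ^ (p / 2 - 1) ≤ g' (σ + τ) + 2 * σ * min (g'' (σ + τ)) 0) →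
        (∀ μ : ℝ, 0 < μ → ∀ σ₁ ∈ Set.Icc (μ ^ 2 / 4) (7 * μ ^ 2),
          ∀ σ₂ ∈ Set.Icc (μ ^ 2 / 4) (7 * μ ^ 2),
          |g'' σ₁ - g'' σ₂| ≤ Γ * μ ^ (p - 4 - 2 * β₀) * |σ₁ - σ₂| ^ β₀) →
        ∀ ε : ℝ, 0 < ε → ε < δ / 4 →
        ∀ μ : ℝ, δ < μ →
        ∀ ξ₀ ξ₁ : EuclideanSpace ℝ (Fin k),
          δ + μ / 4 ≤ ‖ξ₀‖ → ‖ξ₀‖ ≤ δ + μ → ‖ξ₁‖ ≤ δ + μ →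
          ‖(g' (ε ^ 2 + ‖ξ₀‖ ^ 2) • (ξ₁ - ξ₀)
              + (2 * g'' (ε ^ 2 + ‖ξ₀‖ ^ 2) * ⟪ξ₀, ξ₁ - ξ₀⟫) • ξ₀)
            - (g' (ε ^ 2 + ‖ξ₁‖ ^ 2) • ξ₁ - g' (ε ^ 2 + ‖ξ₀‖ ^ 2) • ξ₀)‖
            ≤ C * Γ * μ ^ (p - 2 - β₀) * ‖ξ₁ - ξ₀‖ ^ (1 + β₀) := by
  refine ⟨2 ^ 20 * (320:ℝ) ^ (p + 6), by positivity, ?_⟩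
  intro γ Γ hγ hγΓ δ hδ hδ1 g g' g'' hg hg' hg''c hG1 hG2 hG3 hG4 ε hε hεδ μ hδμ ξ₀ ξ₁
    h₀l h₀u h₁u
  have hμ : 0 < μ := hδ.trans hδμ
  have hΓ : 0 < Γ := hγ.trans_le hγΓ
  set K := (320:ℝ) ^ (p + 6) with hK
  have hK0 : 0 < K := Real.rpow_pos_of_pos (by norm_num) _
  have hK1 : (1:ℝ) ≤ K := by
    rw [hK, show (1:ℝ) = (320:ℝ) ^ (0:ℝ) by rw [Real.rpow_zero]]
    exact Real.rpow_le_rpow_of_exponent_le (by norm_num) (by linarith)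
  set η : EuclideanSpace ℝ (Fin k) := ξ₁ - ξ₀ with hηdef
  have hξ₀u : ‖ξ₀‖ ≤ 2 * μ := by linarith
  have hξ₀l : μ / 4 ≤ ‖ξ₀‖ := by linarith
  have hξ₁u : ‖ξ₁‖ ≤ 2 * μ := by linarith
  have hε2 : ε ^ 2 ≤ μ ^ 2 / 16 := by nlinarith
  have hηu : ‖η‖ ≤ 4 * μ := by
    calc ‖η‖ ≤ ‖ξ₁‖ + ‖ξ₀‖ := norm_sub_le _ _
      _ ≤ 4 * μ := by linarith
  have hσ₀1 : μ ^ 2 / 64 ≤ ε ^ 2 + ‖ξ₀‖ ^ 2 := by nlinarith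
  have hσ₀2 : ε ^ 2 + ‖ξ₀‖ ^ 2 ≤ 5 * μ ^ 2 := by nlinarith
  have hg'bd : ∀ σ : ℝ, μ ^ 2 / 64 ≤ σ → σ ≤ 5 * μ ^ 2 →
      |g' σ| ≤ Γ * (K * μ ^ (p - 2)) := by
    intro σ h1 h2
    have hσ : 0 < σ := lt_of_lt_of_le (by positivity) h1
    refine (hG1 σ hσ).trans (mul_le_mul_of_nonneg_left ?_ hΓ.le)
    have h3 := aux_rpow_bound' (a := p/2 - 1) (p := p) hμ h1 h2
      (abs_le.mpr ⟨by linarith, by linarith⟩)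
    rwa [show 2 * (p/2 - 1) = p - 2 by ring] at h3
  have hg''bd : ∀ σ : ℝ, μ ^ 2 / 64 ≤ σ → σ ≤ 5 * μ ^ 2 →
      |g'' σ| ≤ Γ * (K * μ ^ (p - 4)) := by
    intro σ h1 h2
    have hσ : 0 < σ := lt_of_lt_of_le (by positivity) h1
    refine (hG2 σ hσ).trans (mul_le_mul_of_nonneg_left ?_ hΓ.le)
    have h3 := aux_rpow_bound' (a := p/2 - 2) (p := p) hμ h1 h2
      (abs_le.mpr ⟨by linarith, by linarith⟩)
    rwa [show 2 * (p/2 - 2) = p - 4 by ring] at h3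
  have hQ0 : (0:ℝ) ≤ Γ * (μ ^ (p - 2 - β₀) * ‖η‖ ^ (1 + β₀)) := by positivity
  rcases le_or_gt ‖η‖ (μ / 8) with hsm | hlg
  · -- Case B : ‖η‖ small
    have hημ : ‖η‖ ≤ μ := by linarith
    set B : EuclideanSpace ℝ (Fin k) :=
      g' (ε ^ 2 + ‖ξ₀‖ ^ 2) • η + (2 * g'' (ε ^ 2 + ‖ξ₀‖ ^ 2) * ⟪ξ₀, η⟫) • ξ₀ with hBdef
    have hsmul : ∀ t : ℝ, |t| ≤ 1 → ‖t • η‖ ≤ ‖η‖ := by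
      intro t ht
      rw [norm_smul, Real.norm_eq_abs]
      nlinarith [norm_nonneg η, abs_nonneg t]
    have hxt_ub : ∀ t : ℝ, |t| ≤ 1 → ‖ξ₀ + t • η‖ ≤ 17/8 * μ := by
      intro t ht
      have h1 : ‖t • η‖ ≤ μ / 8 := (hsmul t ht).trans hsm
      calc ‖ξ₀ + t • η‖ ≤ ‖ξ₀‖ + ‖t • η‖ := norm_add_le _ _
        _ ≤ 17/8 * μ := by linarith
    have hxt_lb : ∀ t : ℝ, |t| ≤ 1 → μ / 8 ≤ ‖ξ₀ + t • η‖ := by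
      intro t ht
      have h1 : ‖t • η‖ ≤ μ / 8 := (hsmul t ht).trans hsm
      have h2 : |‖ξ₀ + t • η‖ - ‖ξ₀‖| ≤ ‖t • η‖ := by
        simpa using abs_norm_sub_norm_le (ξ₀ + t • η) ξ₀
      have h3 := (abs_le.mp h2).1
      linarith
    have hσt1 : ∀ t : ℝ, |t| ≤ 1 → μ ^ 2 / 64 ≤ ε ^ 2 + ‖ξ₀ + t • η‖ ^ 2 := by
      intro t ht
      nlinarith [hxt_lb t ht, hε, sq_nonneg ε]
    have hσt2 : ∀ t : ℝ, |t| ≤ 1 → ε ^ 2 + ‖ξ₀ + t • η‖ ^ 2 ≤ 5 * μ ^ 2 := by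
      intro t ht
      nlinarith [hxt_ub t ht, norm_nonneg (ξ₀ + t • η)]
    have hσdiff : ∀ t : ℝ, |t| ≤ 1 →
        |(ε ^ 2 + ‖ξ₀ + t • η‖ ^ 2) - (ε ^ 2 + ‖ξ₀‖ ^ 2)| ≤ 5 * (μ * ‖η‖) := by
      intro t ht
      have h2 : |‖ξ₀ + t • η‖ - ‖ξ₀‖| ≤ ‖η‖ :=
        (by simpa using abs_norm_sub_norm_le (ξ₀ + t • η) ξ₀ : |‖ξ₀ + t • η‖ - ‖ξ₀‖| ≤ ‖t • η‖).trans (hsmul t ht)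
      have heq : (ε ^ 2 + ‖ξ₀ + t • η‖ ^ 2) - (ε ^ 2 + ‖ξ₀‖ ^ 2)
          = (‖ξ₀ + t • η‖ - ‖ξ₀‖) * (‖ξ₀ + t • η‖ + ‖ξ₀‖) := by ring
      rw [heq, abs_mul]
      have h3 : |‖ξ₀ + t • η‖ + ‖ξ₀‖| ≤ 5 * μ := by
        rw [abs_of_nonneg (by positivity)]
        linarith [hxt_ub t ht]
      calc |‖ξ₀ + t • η‖ - ‖ξ₀‖| * |‖ξ₀ + t • η‖ + ‖ξ₀‖| ≤ ‖η‖ * (5 * μ) :=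
            mul_le_mul h2 h3 (abs_nonneg _) (norm_nonneg _)
        _ = 5 * (μ * ‖η‖) := by ring
    have hg''diff : ∀ t : ℝ, |t| ≤ 1 →
        |g'' (ε ^ 2 + ‖ξ₀ + t • η‖ ^ 2) - g'' (ε ^ 2 + ‖ξ₀‖ ^ 2)|
          ≤ 10240 * Γ * (μ ^ (p - 4 - 2 * β₀) * μ ^ β₀) * ‖η‖ ^ β₀ := by
      intro t ht
      have h1 := aux_holder hp hβ₀ hβ₀' hΓ.le hG4 hμ (hσt1 t ht) (hσt2 t ht) hσ₀1 hσ₀2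
      have h2 : |(ε ^ 2 + ‖ξ₀ + t • η‖ ^ 2) - (ε ^ 2 + ‖ξ₀‖ ^ 2)| ^ β₀
          ≤ (5 * (μ * ‖η‖)) ^ β₀ :=
        Real.rpow_le_rpow (abs_nonneg _) (hσdiff t ht) hβ₀.le
      have h3 : (5 * (μ * ‖η‖)) ^ β₀ ≤ 5 * (μ ^ β₀ * ‖η‖ ^ β₀) := by
        rw [Real.mul_rpow (by norm_num) (by positivity),
          Real.mul_rpow hμ.le (norm_nonneg _)]
        have h4 : (5:ℝ) ^ β₀ ≤ 5 := by
          calc (5:ℝ) ^ β₀ ≤ 5 ^ (1:ℝ) := Real.rpow_le_rpow_of_exponent_le (by norm_num) hβ₀'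
            _ = 5 := Real.rpow_one 5
        exact mul_le_mul_of_nonneg_right h4 (by positivity)
      calc |g'' (ε ^ 2 + ‖ξ₀ + t • η‖ ^ 2) - g'' (ε ^ 2 + ‖ξ₀‖ ^ 2)|
          ≤ 2048 * Γ * μ ^ (p - 4 - 2 * β₀)
            * |(ε ^ 2 + ‖ξ₀ + t • η‖ ^ 2) - (ε ^ 2 + ‖ξ₀‖ ^ 2)| ^ β₀ := h1
        _ ≤ 2048 * Γ * μ ^ (p - 4 - 2 * β₀) * (5 * (μ ^ β₀ * ‖η‖ ^ β₀)) :=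
            mul_le_mul_of_nonneg_left (h2.trans h3) (by positivity)
        _ = 10240 * Γ * (μ ^ (p - 4 - 2 * β₀) * μ ^ β₀) * ‖η‖ ^ β₀ := by ring
    have hg'deriv_bd : ∀ x ∈ Set.Ico (0:ℝ) 1,
        ‖g'' (ε ^ 2 + ‖ξ₀ + x • η‖ ^ 2) * (2 * ⟪ξ₀ + x • η, η⟫)‖
          ≤ 5 * (Γ * (K * (μ ^ (p - 4) * μ * ‖η‖))) := by
      intro x hx
      have hxa : |x| ≤ 1 := by rw [abs_of_nonneg hx.1]; exact hx.2.le
      rw [Real.norm_eq_abs, abs_mul, abs_mul, abs_two]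
      have h1 : |g'' (ε ^ 2 + ‖ξ₀ + x • η‖ ^ 2)| ≤ Γ * (K * μ ^ (p - 4)) :=
        hg''bd _ (hσt1 x hxa) (hσt2 x hxa)
      have h2 : |⟪ξ₀ + x • η, η⟫| ≤ 17/8 * μ * ‖η‖ :=
        (abs_real_inner_le_norm _ _).trans
          (mul_le_mul_of_nonneg_right (hxt_ub x hxa) (norm_nonneg _))
      calc |g'' (ε ^ 2 + ‖ξ₀ + x • η‖ ^ 2)| * (2 * |⟪ξ₀ + x • η, η⟫|)
          ≤ (Γ * (K * μ ^ (p - 4))) * (2 * (17/8 * μ * ‖η‖)) :=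
            mul_le_mul h1 (by linarith) (by positivity) (by positivity)
        _ = 17/4 * (Γ * (K * (μ ^ (p - 4) * μ * ‖η‖))) := by ring
        _ ≤ 5 * (Γ * (K * (μ ^ (p - 4) * μ * ‖η‖))) := by
            have h5 : (0:ℝ) ≤ Γ * (K * (μ ^ (p - 4) * μ * ‖η‖)) := by positivity
            linarith
    have hg'mvt : ∀ t ∈ Set.Icc (0:ℝ) 1,
        |g' (ε ^ 2 + ‖ξ₀ + t • η‖ ^ 2) - g' (ε ^ 2 + ‖ξ₀‖ ^ 2)|
          ≤ 5 * (Γ * (K * (μ ^ (p - 4) * μ * ‖η‖))) := by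
      intro t ht
      have h := norm_image_sub_le_of_norm_deriv_le_segment'
        (f := fun s => g' (ε ^ 2 + ‖ξ₀ + s • η‖ ^ 2))
        (f' := fun s => g'' (ε ^ 2 + ‖ξ₀ + s • η‖ ^ 2) * (2 * ⟪ξ₀ + s • η, η⟫))
        (fun x _ => (aux_deriv_scalar g' g'' hg' hε ξ₀ η x).hasDerivWithinAt)
        hg'deriv_bd t ht
      simp only [zero_smul, add_zero, Real.norm_eq_abs, sub_zero] at h
      have hC : (0:ℝ) ≤ 5 * (Γ * (K * (μ ^ (p - 4) * μ * ‖η‖))) := by positivity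
      nlinarith [ht.1, ht.2, h]
    have hcolη : ‖η‖ ^ β₀ * ‖η‖ = ‖η‖ ^ (1 + β₀) := by
      rw [Real.rpow_add' (norm_nonneg η) (by positivity : (1:ℝ) + β₀ ≠ 0), Real.rpow_one]
      ring
    have hcol1 : μ ^ (p - 4 - 2 * β₀) * μ ^ β₀ * (μ * μ) = μ ^ (p - 2 - β₀) := by
      have h1 : μ ^ (p - 4 - 2 * β₀) * μ ^ β₀ = μ ^ (p - 4 - β₀) := by
        rw [← Real.rpow_add hμ, show p - 4 - 2 * β₀ + β₀ = p - 4 - β₀ by ring]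
      calc μ ^ (p - 4 - 2 * β₀) * μ ^ β₀ * (μ * μ) = μ ^ (p - 4 - β₀) * μ * μ := by
            rw [h1]; ring
        _ = μ ^ (p - 4 - β₀ + 1) * μ := by rw [rpow_succ hμ]
        _ = μ ^ (p - 4 - β₀ + 1 + 1) := rpow_succ hμ _
        _ = μ ^ (p - 2 - β₀) := by rw [show p - 4 - β₀ + 1 + 1 = p - 2 - β₀ by ring]
    have hcol2 : μ ^ (p - 4) * μ = μ ^ (p - 3) := by
      rw [rpow_succ hμ, show p - 4 + 1 = p - 3 by ring]
    have haux := aux_eta (p := p) hμ (norm_nonneg η) hημ hβ₀ hβ₀'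
    have hgg0 : |g'' (ε ^ 2 + ‖ξ₀‖ ^ 2)| ≤ Γ * (K * μ ^ (p - 4)) := hg''bd _ hσ₀1 hσ₀2
    have hi0 : |⟪ξ₀, η⟫| ≤ 2 * μ * ‖η‖ :=
      (abs_real_inner_le_norm _ _).trans (mul_le_mul_of_nonneg_right hξ₀u (norm_nonneg _))
    have hpt : ∀ x ∈ Set.Ico (0:ℝ) 1,
        ‖(g'' (ε ^ 2 + ‖ξ₀ + x • η‖ ^ 2) * (2 * ⟪ξ₀ + x • η, η⟫)) • (ξ₀ + x • η)
            + g' (ε ^ 2 + ‖ξ₀ + x • η‖ ^ 2) • η - B‖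
          ≤ 2 ^ 20 * K * Γ * μ ^ (p - 2 - β₀) * ‖η‖ ^ (1 + β₀) := by
      intro t ht
      have hta : |t| ≤ 1 := by rw [abs_of_nonneg ht.1]; exact ht.2.le
      have hitη : |⟪ξ₀ + t • η, η⟫| ≤ 17/8 * μ * ‖η‖ :=
        (abs_real_inner_le_norm _ _).trans
          (mul_le_mul_of_nonneg_right (hxt_ub t hta) (norm_nonneg _))
      have hit2 : |⟪t • η, η⟫| ≤ ‖η‖ * ‖η‖ :=
        (abs_real_inner_le_norm _ _).trans
          (mul_le_mul_of_nonneg_right (hsmul t hta) (norm_nonneg _))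
      have hinner : (⟪ξ₀ + t • η, η⟫ : ℝ) = ⟪ξ₀, η⟫ + ⟪t • η, η⟫ := inner_add_left _ _ _
      have hdecomp :
          (g'' (ε ^ 2 + ‖ξ₀ + t • η‖ ^ 2) * (2 * ⟪ξ₀ + t • η, η⟫)) • (ξ₀ + t • η)
              + g' (ε ^ 2 + ‖ξ₀ + t • η‖ ^ 2) • η - B
          = ((g'' (ε ^ 2 + ‖ξ₀ + t • η‖ ^ 2) - g'' (ε ^ 2 + ‖ξ₀‖ ^ 2))
                * (2 * ⟪ξ₀ + t • η, η⟫)) • (ξ₀ + t • η)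
            + (g'' (ε ^ 2 + ‖ξ₀‖ ^ 2) * (2 * ⟪t • η, η⟫)) • (ξ₀ + t • η)
            + (2 * g'' (ε ^ 2 + ‖ξ₀‖ ^ 2) * ⟪ξ₀, η⟫) • (t • η)
            + (g' (ε ^ 2 + ‖ξ₀ + t • η‖ ^ 2) - g' (ε ^ 2 + ‖ξ₀‖ ^ 2)) • η := by
        rw [hBdef, hinner]
        module
      have hE1 : ‖((g'' (ε ^ 2 + ‖ξ₀ + t • η‖ ^ 2) - g'' (ε ^ 2 + ‖ξ₀‖ ^ 2))
              * (2 * ⟪ξ₀ + t • η, η⟫)) • (ξ₀ + t • η)‖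
          ≤ (10240 * Γ * (μ ^ (p - 4 - 2 * β₀) * μ ^ β₀) * ‖η‖ ^ β₀)
            * (2 * (17/8 * μ * ‖η‖)) * (17/8 * μ) := by
        rw [norm_smul, Real.norm_eq_abs, abs_mul, abs_mul, abs_two]
        exact mul_le_mul
          (mul_le_mul (hg''diff t hta) (mul_le_mul_of_nonneg_left hitη (by norm_num))
            (by positivity) (by positivity))
          (hxt_ub t hta) (norm_nonneg _) (by positivity)
      have hE2 : ‖(g'' (ε ^ 2 + ‖ξ₀‖ ^ 2) * (2 * ⟪t • η, η⟫)) • (ξ₀ + t • η)‖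
          ≤ (Γ * (K * μ ^ (p - 4))) * (2 * (‖η‖ * ‖η‖)) * (17/8 * μ) := by
        rw [norm_smul, Real.norm_eq_abs, abs_mul, abs_mul, abs_two]
        exact mul_le_mul
          (mul_le_mul hgg0 (mul_le_mul_of_nonneg_left hit2 (by norm_num))
            (by positivity) (by positivity))
          (hxt_ub t hta) (norm_nonneg _) (by positivity)
      have hE3 : ‖(2 * g'' (ε ^ 2 + ‖ξ₀‖ ^ 2) * ⟪ξ₀, η⟫) • (t • η)‖
          ≤ 2 * (Γ * (K * μ ^ (p - 4))) * (2 * μ * ‖η‖) * ‖η‖ := by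
        rw [norm_smul, Real.norm_eq_abs, abs_mul, abs_mul, abs_two]
        exact mul_le_mul
          (mul_le_mul (mul_le_mul_of_nonneg_left hgg0 (by norm_num)) hi0
            (abs_nonneg _) (by positivity))
          (hsmul t hta) (norm_nonneg _) (by positivity)
      have hE4 : ‖(g' (ε ^ 2 + ‖ξ₀ + t • η‖ ^ 2) - g' (ε ^ 2 + ‖ξ₀‖ ^ 2)) • η‖
          ≤ (5 * (Γ * (K * (μ ^ (p - 4) * μ * ‖η‖)))) * ‖η‖ := by
        rw [norm_smul, Real.norm_eq_abs]
        exact mul_le_mul_of_nonneg_right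
          (hg'mvt t ⟨ht.1, ht.2.le⟩) (norm_nonneg _)
      have hb1 : (10240 * Γ * (μ ^ (p - 4 - 2 * β₀) * μ ^ β₀) * ‖η‖ ^ β₀)
            * (2 * (17/8 * μ * ‖η‖)) * (17/8 * μ)
          = 92480 * (Γ * (μ ^ (p - 2 - β₀) * ‖η‖ ^ (1 + β₀))) := by
        rw [← hcol1, ← hcolη]; ring
      have haux2 : ∀ c : ℝ, 0 ≤ c →
          c * (Γ * K) * (μ ^ (p - 3) * (‖η‖ * ‖η‖))
            ≤ c * (Γ * K) * (μ ^ (p - 2 - β₀) * ‖η‖ ^ (1 + β₀)) := by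
        intro c hc
        exact mul_le_mul_of_nonneg_left haux (by positivity)
      have hQK : (0:ℝ) ≤ Γ * K * (μ ^ (p - 2 - β₀) * ‖η‖ ^ (1 + β₀)) := by positivity
      calc ‖(g'' (ε ^ 2 + ‖ξ₀ + t • η‖ ^ 2) * (2 * ⟪ξ₀ + t • η, η⟫)) • (ξ₀ + t • η)
            + g' (ε ^ 2 + ‖ξ₀ + t • η‖ ^ 2) • η - B‖
          = ‖((g'' (ε ^ 2 + ‖ξ₀ + t • η‖ ^ 2) - g'' (ε ^ 2 + ‖ξ₀‖ ^ 2))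
                * (2 * ⟪ξ₀ + t • η, η⟫)) • (ξ₀ + t • η)
              + (g'' (ε ^ 2 + ‖ξ₀‖ ^ 2) * (2 * ⟪t • η, η⟫)) • (ξ₀ + t • η)
              + (2 * g'' (ε ^ 2 + ‖ξ₀‖ ^ 2) * ⟪ξ₀, η⟫) • (t • η)
              + (g' (ε ^ 2 + ‖ξ₀ + t • η‖ ^ 2) - g' (ε ^ 2 + ‖ξ₀‖ ^ 2)) • η‖ := by
            rw [hdecomp]
        _ ≤ ‖((g'' (ε ^ 2 + ‖ξ₀ + t • η‖ ^ 2) - g'' (ε ^ 2 + ‖ξ₀‖ ^ 2))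
                * (2 * ⟪ξ₀ + t • η, η⟫)) • (ξ₀ + t • η)‖
              + ‖(g'' (ε ^ 2 + ‖ξ₀‖ ^ 2) * (2 * ⟪t • η, η⟫)) • (ξ₀ + t • η)‖
              + ‖(2 * g'' (ε ^ 2 + ‖ξ₀‖ ^ 2) * ⟪ξ₀, η⟫) • (t • η)‖
              + ‖(g' (ε ^ 2 + ‖ξ₀ + t • η‖ ^ 2) - g' (ε ^ 2 + ‖ξ₀‖ ^ 2)) • η‖ :=
            (norm_add_le _ _).trans (add_le_add ((norm_add_le _ _).trans
              (add_le_add (norm_add_le _ _) le_rfl)) le_rfl)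
        _ ≤ 92480 * (Γ * (μ ^ (p - 2 - β₀) * ‖η‖ ^ (1 + β₀)))
              + ((Γ * (K * μ ^ (p - 4))) * (2 * (‖η‖ * ‖η‖)) * (17/8 * μ)
              + (2 * (Γ * (K * μ ^ (p - 4))) * (2 * μ * ‖η‖) * ‖η‖
              + (5 * (Γ * (K * (μ ^ (p - 4) * μ * ‖η‖)))) * ‖η‖)) := by
            have := hE1.trans_eq hb1
            linarith [hE2, hE3, hE4, this]
        _ = 92480 * (Γ * (μ ^ (p - 2 - β₀) * ‖η‖ ^ (1 + β₀)))
              + (17/4 * (Γ * K) * ((μ ^ (p - 4) * μ) * (‖η‖ * ‖η‖))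
              + (4 * (Γ * K) * ((μ ^ (p - 4) * μ) * (‖η‖ * ‖η‖))
              + 5 * (Γ * K) * ((μ ^ (p - 4) * μ) * (‖η‖ * ‖η‖)))) := by ring
        _ ≤ 92480 * (Γ * (μ ^ (p - 2 - β₀) * ‖η‖ ^ (1 + β₀)))
              + (17/4 * (Γ * K) * (μ ^ (p - 2 - β₀) * ‖η‖ ^ (1 + β₀))
              + (4 * (Γ * K) * (μ ^ (p - 2 - β₀) * ‖η‖ ^ (1 + β₀))
              + 5 * (Γ * K) * (μ ^ (p - 2 - β₀) * ‖η‖ ^ (1 + β₀)))) := by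
            rw [hcol2]
            have h1 := haux2 (17/4) (by norm_num)
            have h2 := haux2 4 (by norm_num)
            have h3 := haux2 5 (by norm_num)
            linarith
        _ ≤ 2 ^ 20 * K * Γ * μ ^ (p - 2 - β₀) * ‖η‖ ^ (1 + β₀) := by
            have h0 := mul_le_mul_of_nonneg_right hK1 hQ0
            linarith [hQK, h0]
    have hψderiv : ∀ x ∈ Set.Icc (0:ℝ) 1, HasDerivWithinAt
        (fun s : ℝ => g' (ε ^ 2 + ‖ξ₀ + s • η‖ ^ 2) • (ξ₀ + s • η) - s • B)
        ((g'' (ε ^ 2 + ‖ξ₀ + x • η‖ ^ 2) * (2 * ⟪ξ₀ + x • η, η⟫)) • (ξ₀ + x • η)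
            + g' (ε ^ 2 + ‖ξ₀ + x • η‖ ^ 2) • η - B)
        (Set.Icc 0 1) x := by
      intro x _
      have h2 : HasDerivAt (fun s : ℝ => s • B) B x := by
        simpa using (hasDerivAt_id x).smul_const B
      exact ((aux_deriv_phi g' g'' hg' hε ξ₀ η x).sub h2).hasDerivWithinAt
    have hmvt := norm_image_sub_le_of_norm_deriv_le_segment_01' hψderiv hpt
    simp only [one_smul, zero_smul, add_zero, sub_zero] at hmvt
    have hxi : ξ₀ + η = ξ₁ := by rw [hηdef]; abel
    rw [hxi] at hmvt
    have hrearr : B - (g' (ε ^ 2 + ‖ξ₁‖ ^ 2) • ξ₁ - g' (ε ^ 2 + ‖ξ₀‖ ^ 2) • ξ₀)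
        = -(g' (ε ^ 2 + ‖ξ₁‖ ^ 2) • ξ₁ - B - g' (ε ^ 2 + ‖ξ₀‖ ^ 2) • ξ₀) := by
      abel
    rw [hrearr, norm_neg]
    exact hmvt
  · -- Case A : ‖η‖ large
    have h8 : μ ≤ 8 * ‖η‖ := by linarith
    have hη0 : 0 < ‖η‖ := by linarith
    have hB : ‖g' (ε ^ 2 + ‖ξ₀‖ ^ 2) • η + (2 * g'' (ε ^ 2 + ‖ξ₀‖ ^ 2) * ⟪ξ₀, η⟫) • ξ₀‖
        ≤ 9 * (Γ * (K * (μ ^ (p - 2) * ‖η‖))) := by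
      have h1 : ‖g' (ε ^ 2 + ‖ξ₀‖ ^ 2) • η‖ ≤ Γ * (K * μ ^ (p - 2)) * ‖η‖ := by
        rw [norm_smul, Real.norm_eq_abs]
        exact mul_le_mul_of_nonneg_right (hg'bd _ hσ₀1 hσ₀2) (norm_nonneg _)
      have h2 : ‖(2 * g'' (ε ^ 2 + ‖ξ₀‖ ^ 2) * ⟪ξ₀, η⟫) • ξ₀‖
          ≤ 2 * (Γ * (K * μ ^ (p - 4))) * (2 * μ * ‖η‖) * (2 * μ) := by
        rw [norm_smul, Real.norm_eq_abs, abs_mul, abs_mul, abs_two]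
        have hi : |⟪ξ₀, η⟫| ≤ 2 * μ * ‖η‖ :=
          (abs_real_inner_le_norm ξ₀ η).trans
            (mul_le_mul_of_nonneg_right hξ₀u (norm_nonneg _))
        have hgg := hg''bd _ hσ₀1 hσ₀2
        have hA : 0 ≤ Γ * (K * μ ^ (p - 4)) := by positivity
        apply mul_le_mul _ hξ₀u (norm_nonneg _) (by positivity)
        apply mul_le_mul _ hi (abs_nonneg _) (by positivity)
        exact mul_le_mul_of_nonneg_left hgg (by norm_num)
      have hcol : μ ^ (p - 4) * μ * μ = μ ^ (p - 2) := by
        rw [rpow_succ hμ, rpow_succ hμ, show p - 4 + 1 + 1 = p - 2 by ring]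
      calc ‖g' (ε ^ 2 + ‖ξ₀‖ ^ 2) • η + (2 * g'' (ε ^ 2 + ‖ξ₀‖ ^ 2) * ⟪ξ₀, η⟫) • ξ₀‖
          ≤ ‖g' (ε ^ 2 + ‖ξ₀‖ ^ 2) • η‖ + ‖(2 * g'' (ε ^ 2 + ‖ξ₀‖ ^ 2) * ⟪ξ₀, η⟫) • ξ₀‖ :=
            norm_add_le _ _
        _ ≤ Γ * (K * μ ^ (p - 2)) * ‖η‖
            + 2 * (Γ * (K * μ ^ (p - 4))) * (2 * μ * ‖η‖) * (2 * μ) := add_le_add h1 h2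
        _ = Γ * (K * (μ ^ (p - 2) * ‖η‖)) + 8 * (Γ * (K * ((μ ^ (p-4) * μ * μ) * ‖η‖))) := by
            ring
        _ = 9 * (Γ * (K * (μ ^ (p - 2) * ‖η‖))) := by rw [hcol]; ring
    have hA₀ : ‖g' (ε ^ 2 + ‖ξ₀‖ ^ 2) • ξ₀‖ ≤ Γ * (K * μ ^ (p - 1)) := by
      rw [norm_smul, Real.norm_eq_abs, hK]
      exact aux_A_bound hp hμ hΓ.le hG1 (by positivity) (by nlinarith) (norm_nonneg _)
        (by nlinarith [norm_nonneg ξ₀])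
    have hA₁ : ‖g' (ε ^ 2 + ‖ξ₁‖ ^ 2) • ξ₁‖ ≤ Γ * (K * μ ^ (p - 1)) := by
      rw [norm_smul, Real.norm_eq_abs, hK]
      exact aux_A_bound hp hμ hΓ.le hG1 (by positivity) (by nlinarith) (norm_nonneg _)
        (by nlinarith [norm_nonneg ξ₁])
    have hμp1 : μ ^ (p - 1) = μ ^ (p - 2) * μ := by
      rw [rpow_succ hμ, show p - 2 + 1 = p - 1 by ring]
    have habs : μ ^ (p - 2) * ‖η‖ ≤ 8 * (μ ^ (p - 2 - β₀) * ‖η‖ ^ (1 + β₀)) :=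
      aux_caseA hμ h8 hβ₀ hβ₀'
    have hμP : (0:ℝ) ≤ μ ^ (p - 2) := Real.rpow_nonneg hμ.le _
    calc ‖(g' (ε ^ 2 + ‖ξ₀‖ ^ 2) • η + (2 * g'' (ε ^ 2 + ‖ξ₀‖ ^ 2) * ⟪ξ₀, η⟫) • ξ₀)
          - (g' (ε ^ 2 + ‖ξ₁‖ ^ 2) • ξ₁ - g' (ε ^ 2 + ‖ξ₀‖ ^ 2) • ξ₀)‖
        ≤ ‖g' (ε ^ 2 + ‖ξ₀‖ ^ 2) • η + (2 * g'' (ε ^ 2 + ‖ξ₀‖ ^ 2) * ⟪ξ₀, η⟫) • ξ₀‖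
          + ‖g' (ε ^ 2 + ‖ξ₁‖ ^ 2) • ξ₁ - g' (ε ^ 2 + ‖ξ₀‖ ^ 2) • ξ₀‖ := norm_sub_le _ _
      _ ≤ 9 * (Γ * (K * (μ ^ (p - 2) * ‖η‖)))
          + (Γ * (K * μ ^ (p - 1)) + Γ * (K * μ ^ (p - 1))) :=
          add_le_add hB ((norm_sub_le _ _).trans (add_le_add hA₁ hA₀))
      _ ≤ 9 * (Γ * (K * (μ ^ (p - 2) * ‖η‖))) + 16 * (Γ * (K * (μ ^ (p - 2) * ‖η‖))) := by
          have : Γ * (K * μ ^ (p - 1)) ≤ 8 * (Γ * (K * (μ ^ (p - 2) * ‖η‖))) := by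
            rw [hμp1]
            have h9 : μ ^ (p - 2) * μ ≤ μ ^ (p - 2) * (8 * ‖η‖) :=
              mul_le_mul_of_nonneg_left h8 hμP
            nlinarith [mul_le_mul_of_nonneg_left h9 (by positivity : (0:ℝ) ≤ Γ * K)]
          linarith
      _ = 25 * (Γ * (K * (μ ^ (p - 2) * ‖η‖))) := by ring
      _ ≤ 25 * (Γ * (K * (8 * (μ ^ (p - 2 - β₀) * ‖η‖ ^ (1 + β₀))))) := by
          have := mul_le_mul_of_nonneg_left habs (by positivity : (0:ℝ) ≤ Γ * K)
          nlinarith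
      _ ≤ 2 ^ 20 * K * Γ * μ ^ (p - 2 - β₀) * ‖η‖ ^ (1 + β₀) := by
          nlinarith [hQ0, mul_le_mul_of_nonneg_right hK1 hQ0]
end

section
/- For every b > 0, every ε > 0, and all ξ₀, ξ₁ ∈ ℝ^k with (ξ₀, ξ₁) ≠ (0, 0), one has |A_{1,ε}(ξ₁) − A_{1,ε}(ξ₀)| ≤ 2b·|ξ₁ − ξ₀| / max{|ξ₀|, |ξ₁|}; equivalently, |A_{1,ε}(ξ₁) − A_{1,ε}(ξ₀)| ≤ 2b·min{|ξ₀|⁻¹, |ξ₁|⁻¹}·|ξ₁ − ξ₀|. -/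
open Real

lemma stmt_9_aux {k : ℕ} (b ε : ℝ) (hb : 0 < b) (hε : 0 < ε)
    (ξ₀ ξ₁ : EuclideanSpace ℝ (Fin k)) (h01 : ‖ξ₀‖ ≤ ‖ξ₁‖) (h1 : ξ₁ ≠ 0) :
    ‖(b / Real.sqrt (ε ^ 2 + ‖ξ₁‖ ^ 2)) • ξ₁ - (b / Real.sqrt (ε ^ 2 + ‖ξ₀‖ ^ 2)) • ξ₀‖
      ≤ 2 * b * ‖ξ₁ - ξ₀‖ / ‖ξ₁‖ := by
  set n₀ := ‖ξ₀‖ with hn₀def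
  set n₁ := ‖ξ₁‖ with hn₁def
  set D := ‖ξ₁ - ξ₀‖ with hDdef
  set s₀ := Real.sqrt (ε ^ 2 + n₀ ^ 2) with hs₀def
  set s₁ := Real.sqrt (ε ^ 2 + n₁ ^ 2) with hs₁def
  have hn₀ : 0 ≤ n₀ := norm_nonneg _
  have hn₁ : 0 < n₁ := norm_pos_iff.mpr h1
  have hD : 0 ≤ D := norm_nonneg _
  have hs₀ : 0 < s₀ := Real.sqrt_pos.mpr (by positivity)
  have hs₁ : 0 < s₁ := Real.sqrt_pos.mpr (by positivity)
  have hle₀ : n₀ ≤ s₀ := by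
    have h := Real.sqrt_le_sqrt (show n₀ ^ 2 ≤ ε ^ 2 + n₀ ^ 2 by nlinarith)
    rwa [Real.sqrt_sq hn₀] at h
  have hle₁ : n₁ ≤ s₁ := by
    have h := Real.sqrt_le_sqrt (show n₁ ^ 2 ≤ ε ^ 2 + n₁ ^ 2 by nlinarith)
    rwa [Real.sqrt_sq hn₁.le] at h
  have hs01 : s₀ ≤ s₁ := Real.sqrt_le_sqrt (by nlinarith)
  have hsq₀ : s₀ ^ 2 = ε ^ 2 + n₀ ^ 2 := Real.sq_sqrt (by positivity)
  have hsq₁ : s₁ ^ 2 = ε ^ 2 + n₁ ^ 2 := Real.sq_sqrt (by positivity)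
  have hnormdiff : n₁ - n₀ ≤ D := by
    have := norm_sub_norm_le ξ₁ ξ₀
    simpa [← hn₀def, ← hn₁def, ← hDdef] using this
  have hdiff : s₁ - s₀ ≤ D := by
    nlinarith [mul_pos hs₀ hs₁, sq_nonneg (s₁ - s₀)]
  have hdecomp : (b / s₁) • ξ₁ - (b / s₀) • ξ₀
      = (b / s₁) • (ξ₁ - ξ₀) + (b / s₁ - b / s₀) • ξ₀ := by
    rw [smul_sub, sub_smul]; abel
  have habs : |b / s₁ - b / s₀| = b / s₀ - b / s₁ := by
    rw [abs_sub_comm, abs_of_nonneg]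
    have : b / s₁ ≤ b / s₀ := div_le_div_of_nonneg_left hb.le hs₀ hs01
    linarith
  have tri : ‖(b / s₁) • ξ₁ - (b / s₀) • ξ₀‖ ≤ b / s₁ * D + (b / s₀ - b / s₁) * n₀ := by
    rw [hdecomp]
    calc ‖(b / s₁) • (ξ₁ - ξ₀) + (b / s₁ - b / s₀) • ξ₀‖
        ≤ ‖(b / s₁) • (ξ₁ - ξ₀)‖ + ‖(b / s₁ - b / s₀) • ξ₀‖ := norm_add_le _ _
      _ = |b / s₁| * D + |b / s₁ - b / s₀| * n₀ := by
          rw [norm_smul, norm_smul, Real.norm_eq_abs, Real.norm_eq_abs]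
      _ = b / s₁ * D + (b / s₀ - b / s₁) * n₀ := by
          rw [habs, abs_of_nonneg (by positivity)]
  refine tri.trans ?_
  rw [← sub_nonneg]
  have heq : 2 * b * D / n₁ - (b / s₁ * D + (b / s₀ - b / s₁) * n₀)
      = (2 * b * D * s₀ * s₁ - b * D * s₀ * n₁ - b * (s₁ - s₀) * n₀ * n₁)
        / (s₀ * s₁ * n₁) := by
    field_simp
    ring
  rw [heq]
  apply div_nonneg _ (by positivity)
  have e1 : b * (s₁ - s₀) * n₀ * n₁ ≤ b * D * s₀ * s₁ := by
    gcongr <;> linarith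
  have e2 : b * D * s₀ * n₁ ≤ b * D * s₀ * s₁ := by
    gcongr
  linarith

/-- Growth estimate for `A_{1,ε}(ξ) = b ξ/√(ε²+|ξ|²)`: for all `(ξ₀, ξ₁) ≠ (0, 0)`,
`|A_{1,ε}(ξ₁) − A_{1,ε}(ξ₀)| ≤ 2b |ξ₁ − ξ₀| / max{|ξ₀|, |ξ₁|}`. -/
theorem stmt_9 (k : ℕ) (hk : 1 ≤ k) (b ε : ℝ) (hb : 0 < b) (hε : 0 < ε) :
    ∀ ξ₀ ξ₁ : EuclideanSpace ℝ (Fin k), ¬(ξ₀ = 0 ∧ ξ₁ = 0) →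
      ‖(b / Real.sqrt (ε ^ 2 + ‖ξ₁‖ ^ 2)) • ξ₁ - (b / Real.sqrt (ε ^ 2 + ‖ξ₀‖ ^ 2)) • ξ₀‖
        ≤ 2 * b * ‖ξ₁ - ξ₀‖ / max ‖ξ₀‖ ‖ξ₁‖ := by
  intro ξ₀ ξ₁ h
  rcases le_total ‖ξ₀‖ ‖ξ₁‖ with h01 | h10
  · have h1 : ξ₁ ≠ 0 := by
      rintro rfl
      exact h ⟨norm_le_zero_iff.mp (by simpa using h01), rfl⟩
    rw [max_eq_right h01]
    exact stmt_9_aux b ε hb hε ξ₀ ξ₁ h01 h1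
  · have h0 : ξ₀ ≠ 0 := by
      rintro rfl
      exact h ⟨rfl, norm_le_zero_iff.mp (by simpa using h10)⟩
    rw [max_eq_left h10, norm_sub_rev, norm_sub_rev ξ₁ ξ₀]
    exact stmt_9_aux b ε hb hε ξ₁ ξ₀ h10 h0
end

section
/- Assume 2 ≤ p < ∞. There exists a constant c > 0, depending only on p, such that for every g satisfying (G1)–(G3), every ε ∈ (0,1), and all ξ₀, ξ₁ ∈ ℝ^k, one has ⟨A_ε(ξ₁) − A_ε(ξ₀), ξ₁ − ξ₀⟩ ≥ c·γ·|ξ₁ − ξ₀|^p. -/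
open Real RealInnerProductSpace

/-- Choice of a subinterval of `[0,1]` of length `1/4` staying at distance `≥ 1/4`
from a given point `t₀`. -/
lemma stmt_10_interval_choice (t₀ : ℝ) :
    ∃ a : ℝ, 0 ≤ a ∧ a + 1/4 ≤ 1 ∧ ∀ t ∈ Set.Icc a (a + 1/4), 1/4 ≤ |t - t₀| := by
  rcases le_or_gt t₀ (1/2) with h | h
  · refine ⟨3/4, by norm_num, by norm_num, fun t ht => ?_⟩
    rw [abs_of_nonneg (by linarith [ht.1])]
    linarith [ht.1]
  · refine ⟨0, le_refl 0, by norm_num, fun t ht => ?_⟩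
    rw [abs_sub_comm, abs_of_nonneg (by linarith [ht.2])]
    linarith [ht.2]

set_option maxHeartbeats 4000000 in
/-- Monotonicity estimate for `A_ε` when `2 ≤ p`: there exists `c > 0`, depending only
on `p`, such that for every `b > 0`, every `g` satisfying (G1)–(G3), every `ε ∈ (0,1)`,
and all `ξ₀, ξ₁`, one has `⟨A_ε(ξ₁) − A_ε(ξ₀), ξ₁ − ξ₀⟩ ≥ c γ |ξ₁ − ξ₀|^p`. -/
theorem stmt_10 (k : ℕ) (hk : 1 ≤ k) (p : ℝ) (hp : 2 ≤ p) :
    ∃ c : ℝ, 0 < c ∧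
      ∀ b : ℝ, 0 < b →
      ∀ γ Γ : ℝ, 0 < γ → γ ≤ Γ →
      ∀ g g' g'' : ℝ → ℝ,
        (∀ σ : ℝ, 0 < σ → HasDerivAt g (g' σ) σ) →
        (∀ σ : ℝ, 0 < σ → HasDerivAt g' (g'' σ) σ) →
        ContinuousOn g'' (Set.Ioi 0) →
        (∀ σ : ℝ, 0 < σ → |g' σ| ≤ Γ * σ ^ (p / 2 - 1)) →
        (∀ σ : ℝ, 0 < σ → |g'' σ| ≤ Γ * σ ^ (p / 2 - 2)) →
        (∀ σ : ℝ, 0 ≤ σ → ∀ τ : ℝ, 0 < τ → τ < 1 →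
          γ * (σ + τ) ^ (p / 2 - 1) ≤ g' (σ + τ) + 2 * σ * min (g'' (σ + τ)) 0) →
        ∀ ε : ℝ, 0 < ε → ε < 1 →
        ∀ ξ₀ ξ₁ : EuclideanSpace ℝ (Fin k),
          c * γ * ‖ξ₁ - ξ₀‖ ^ p ≤
            ⟪((b / Real.sqrt (ε ^ 2 + ‖ξ₁‖ ^ 2)) • ξ₁ + g' (ε ^ 2 + ‖ξ₁‖ ^ 2) • ξ₁)
              - ((b / Real.sqrt (ε ^ 2 + ‖ξ₀‖ ^ 2)) • ξ₀ + g' (ε ^ 2 + ‖ξ₀‖ ^ 2) • ξ₀),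
              ξ₁ - ξ₀⟫ := by
  refine ⟨(4:ℝ) ^ (1 - p), Real.rpow_pos_of_pos (by norm_num) _, ?_⟩
  intro b hb γ Γ hγ hγΓ g g' g'' hg hg' hg''c hG1 hG2 hG3 ε hε hε1 ξ₀ ξ₁
  by_cases hη0 : ξ₁ = ξ₀
  · subst hη0
    simp only [sub_self]
    rw [norm_zero, Real.zero_rpow (by linarith : p ≠ 0)]
    simp
  -- main case
  set η : EuclideanSpace ℝ (Fin k) := ξ₁ - ξ₀ with hηdef
  have hη : η ≠ 0 := sub_ne_zero.mpr hη0
  have hnη : 0 < ‖η‖ := norm_pos_iff.mpr hη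
  set A : ℝ := ⟪ξ₀, η⟫ with hA
  set N : ℝ := ‖η‖ ^ 2 with hN
  have hNpos : 0 < N := by positivity
  set S : ℝ → ℝ := fun t => ε ^ 2 + ‖ξ₀‖ ^ 2 + 2 * A * t + N * t ^ 2 with hSdef
  set U : ℝ → ℝ := fun t => A + N * t with hUdef
  have hSval : ∀ t : ℝ, S t = ε ^ 2 + ‖ξ₀ + t • η‖ ^ 2 := by
    intro t
    have : ‖ξ₀ + t • η‖ ^ 2 = ‖ξ₀‖ ^ 2 + 2 * ⟪ξ₀, t • η⟫ + ‖t • η‖ ^ 2 := norm_add_sq_real ξ₀ (t • η)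
    rw [this, real_inner_smul_right, norm_smul]
    simp only [hSdef, hA, hN, Real.norm_eq_abs]
    ring_nf
    rw [sq_abs]
    ring
  have hUval : ∀ t : ℝ, U t = ⟪ξ₀ + t • η, η⟫ := by
    intro t
    rw [inner_add_left, real_inner_smul_left, real_inner_self_eq_norm_sq]
    simp only [hUdef, hA, hN]
    ring
  have hSpos : ∀ t : ℝ, 0 < S t := by
    intro t
    rw [hSval t]
    positivity
  have hsqrtpos : ∀ t : ℝ, 0 < Real.sqrt (S t) := fun t => Real.sqrt_pos.mpr (hSpos t)
  have hCS : ∀ t : ℝ, (U t) ^ 2 ≤ (S t - ε ^ 2) * N := by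
    intro t
    have h := real_inner_mul_inner_self_le (ξ₀ + t • η) η
    rw [real_inner_self_eq_norm_sq, real_inner_self_eq_norm_sq] at h
    rw [hUval t, hSval t]
    calc ⟪ξ₀ + t • η, η⟫ ^ 2 = ⟪ξ₀ + t • η, η⟫ * ⟪ξ₀ + t • η, η⟫ := sq ⟪ξ₀ + t • η, η⟫
    _ ≤ ‖ξ₀ + t • η‖ ^ 2 * ‖η‖ ^ 2 := h
    _ = (ε ^ 2 + ‖ξ₀ + t • η‖ ^ 2 - ε ^ 2) * N := by rw [hN]; ring
  -- derivatives
  have hS' : ∀ t : ℝ, HasDerivAt S (2 * U t) t := by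
    intro t
    have h1 : HasDerivAt (fun t : ℝ => ε ^ 2 + ‖ξ₀‖ ^ 2 + 2 * A * t + N * t ^ 2)
        (0 + 2 * A * 1 + N * (↑2 * t ^ 1 * 1)) t :=
      (((hasDerivAt_const t (ε ^ 2 + ‖ξ₀‖ ^ 2)).add ((hasDerivAt_id t).const_mul (2 * A))).add
        (((hasDerivAt_id t).pow 2).const_mul N))
    convert h1 using 1
    simp only [hUdef]
    push_cast
    ring
  have hU' : ∀ t : ℝ, HasDerivAt U N t := by
    intro t
    have h1 : HasDerivAt (fun t : ℝ => A + N * t) (0 + N * 1) t :=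
      (hasDerivAt_const t A).add ((hasDerivAt_id t).const_mul N)
    convert h1 using 1
    ring
  set φ : ℝ → ℝ := fun t => (b / Real.sqrt (S t) + g' (S t)) * U t with hφdef
  set E : ℝ → ℝ := fun t =>
    b * (N * S t - (U t) ^ 2) / (S t * Real.sqrt (S t))
      + (g' (S t) * N + 2 * g'' (S t) * (U t) ^ 2) with hEdef
  have hφ' : ∀ t : ℝ, HasDerivAt φ (E t) t := by
    intro t
    have hsq : HasDerivAt (fun t => Real.sqrt (S t)) (2 * U t / (2 * Real.sqrt (S t))) t :=
      (hS' t).sqrt (ne_of_gt (hSpos t))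
    have hdiv : HasDerivAt (fun t => b / Real.sqrt (S t))
        ((0 * Real.sqrt (S t) - b * (2 * U t / (2 * Real.sqrt (S t)))) / (Real.sqrt (S t)) ^ 2) t :=
      (hasDerivAt_const t b).div hsq (ne_of_gt (hsqrtpos t))
    have hgS : HasDerivAt (fun t => g' (S t)) (g'' (S t) * (2 * U t)) t :=
      (hg' (S t) (hSpos t)).comp t (hS' t)
    have h := (hdiv.add hgS).mul (hU' t)
    refine HasDerivAt.congr_deriv h ?_
    simp only [hEdef, Pi.add_apply]
    have h2 : (Real.sqrt (S t)) ^ 2 = S t := Real.sq_sqrt (le_of_lt (hSpos t))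
    have h3 : Real.sqrt (S t) ≠ 0 := ne_of_gt (hsqrtpos t)
    generalize hgp : g' (S t) = gp
    generalize hgpp : g'' (S t) = gpp
    generalize hu : U t = u
    generalize hr : Real.sqrt (S t) = r at h2 h3 ⊢
    rw [← h2]
    field_simp
    ring
  -- pointwise lower bound on E
  have hElow : ∀ t : ℝ, γ * (S t) ^ (p / 2 - 1) * N ≤ E t := by
    intro t
    have hb1 : 0 ≤ b * (N * S t - (U t) ^ 2) / (S t * Real.sqrt (S t)) := by
      apply div_nonneg _ (le_of_lt (mul_pos (hSpos t) (hsqrtpos t)))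
      apply mul_nonneg hb.le
      have h1 := hCS t
      have h2 : (S t - ε ^ 2) * N ≤ S t * N :=
        mul_le_mul_of_nonneg_right (by nlinarith [sq_nonneg ε]) hNpos.le
      have h3 : S t * N = N * S t := by ring
      linarith
    have hG3' : γ * (S t) ^ (p / 2 - 1) ≤ g' (S t) + 2 * (S t - ε ^ 2) * min (g'' (S t)) 0 := by
      have hσ : (0:ℝ) ≤ S t - ε ^ 2 := by
        rw [hSval t]; simp only [add_sub_cancel_left]; positivity
      have hτ : 0 < ε ^ 2 := by positivity
      have hτ1 : ε ^ 2 < 1 := by nlinarith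
      have := hG3 (S t - ε ^ 2) hσ (ε ^ 2) hτ hτ1
      rwa [sub_add_cancel] at this
    have hmin0 : min (g'' (S t)) 0 ≤ 0 := min_le_right _ _
    have hming : min (g'' (S t)) 0 ≤ g'' (S t) := min_le_left _ _
    have hstep : γ * (S t) ^ (p / 2 - 1) * N ≤ g' (S t) * N + 2 * g'' (S t) * (U t) ^ 2 := by
      set m := min (g'' (S t)) 0 with hm
      have hcs := hCS t
      have ha2 : m * ((S t - ε ^ 2) * N) ≤ m * (U t) ^ 2 :=
        mul_le_mul_of_nonpos_left hcs hmin0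
      have hb2 : m * (U t) ^ 2 ≤ g'' (S t) * (U t) ^ 2 :=
        mul_le_mul_of_nonneg_right hming (sq_nonneg _)
      have hmul := mul_le_mul_of_nonneg_right hG3' hNpos.le
      calc γ * (S t) ^ (p / 2 - 1) * N
          ≤ (g' (S t) + 2 * (S t - ε ^ 2) * m) * N := hmul
        _ = g' (S t) * N + 2 * (m * ((S t - ε ^ 2) * N)) := by ring
        _ ≤ g' (S t) * N + 2 * (m * (U t) ^ 2) := by linarith
        _ ≤ g' (S t) * N + 2 * (g'' (S t) * (U t) ^ 2) := by linarith
        _ = g' (S t) * N + 2 * g'' (S t) * (U t) ^ 2 := by ring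
    simp only [hEdef]
    linarith
  have hEnonneg : ∀ t : ℝ, 0 ≤ E t := by
    intro t
    refine le_trans ?_ (hElow t)
    have := Real.rpow_nonneg (le_of_lt (hSpos t)) (p / 2 - 1)
    positivity
  -- continuity of E
  have hScont : Continuous S := by fun_prop
  have hUcont : Continuous U := by fun_prop
  have hEcont : Continuous E := by
    rw [continuous_iff_continuousAt]
    intro t
    have hSt : ContinuousAt S t := hScont.continuousAt
    have hg'c : ContinuousAt (fun t => g' (S t)) t :=
      ((hg' (S t) (hSpos t)).continuousAt).comp hSt
    have hg''c2 : ContinuousAt (fun t => g'' (S t)) t :=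
      (hg''c.continuousAt (Ioi_mem_nhds (hSpos t))).comp hSt
    have hsqc : ContinuousAt (fun t => Real.sqrt (S t)) t :=
      Real.continuous_sqrt.continuousAt.comp hSt
    have hUt : ContinuousAt U t := hUcont.continuousAt
    exact ((continuousAt_const.mul ((continuousAt_const.mul hSt).sub (hUt.pow 2))).div
        (hSt.mul hsqc) (ne_of_gt (mul_pos (hSpos t) (hsqrtpos t)))).add
      ((hg'c.mul continuousAt_const).add
        ((continuousAt_const.mul hg''c2).mul (hUt.pow 2)))
  have hInt : ∀ a c : ℝ, IntervalIntegrable E MeasureTheory.volume a c :=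
    fun a c => hEcont.intervalIntegrable a c
  -- FTC
  have hFTC : ∫ t in (0:ℝ)..1, E t = φ 1 - φ 0 :=
    intervalIntegral.integral_eq_sub_of_hasDerivAt (fun t _ => hφ' t) (hInt 0 1)
  -- identify φ 1 - φ 0 with the inner product
  have hgoal_eq : φ 1 - φ 0 =
      ⟪((b / Real.sqrt (ε ^ 2 + ‖ξ₁‖ ^ 2)) • ξ₁ + g' (ε ^ 2 + ‖ξ₁‖ ^ 2) • ξ₁)
        - ((b / Real.sqrt (ε ^ 2 + ‖ξ₀‖ ^ 2)) • ξ₀ + g' (ε ^ 2 + ‖ξ₀‖ ^ 2) • ξ₀), η⟫ := by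
    have hx1 : ξ₀ + (1:ℝ) • η = ξ₁ := by rw [one_smul, hηdef]; abel
    have hx0 : ξ₀ + (0:ℝ) • η = ξ₀ := by rw [zero_smul, add_zero]
    have hS1 : S 1 = ε ^ 2 + ‖ξ₁‖ ^ 2 := by rw [hSval 1, hx1]
    have hS0 : S 0 = ε ^ 2 + ‖ξ₀‖ ^ 2 := by rw [hSval 0, hx0]
    have hU1 : U 1 = ⟪ξ₁, η⟫ := by rw [hUval 1, hx1]
    have hU0 : U 0 = ⟪ξ₀, η⟫ := by rw [hUval 0, hx0]
    rw [inner_sub_left, inner_add_left, inner_add_left, real_inner_smul_left,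
      real_inner_smul_left, real_inner_smul_left, real_inner_smul_left]
    simp only [hφdef, hS1, hS0, hU1, hU0]
    ring
  -- choose the subinterval
  obtain ⟨a, ha0, ha1, haI⟩ := stmt_10_interval_choice (-A / N)
  have hnormlow : ∀ t ∈ Set.Icc a (a + 1/4), ‖η‖ / 4 ≤ ‖ξ₀ + t • η‖ := by
    intro t ht
    have h1 : (1:ℝ)/4 ≤ |t - (-A / N)| := haI t ht
    have h2 : |t - (-A / N)| * ‖η‖ ≤ ‖ξ₀ + t • η‖ := by
      have hsq : (t - (-A / N)) ^ 2 * ‖η‖ ^ 2 ≤ ‖ξ₀ + t • η‖ ^ 2 := by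
        have hcs := hCS t
        have hSe : S t - ε ^ 2 = ‖ξ₀ + t • η‖ ^ 2 := by
          rw [hSval t]; ring
        rw [hSe] at hcs
        have hUeq : U t = (t - (-A / N)) * N := by
          simp only [hUdef]
          field_simp
          ring
        rw [hUeq] at hcs
        have h5 : (t - (-A / N)) ^ 2 * N * N ≤ ‖ξ₀ + t • η‖ ^ 2 * N := by
          calc (t - (-A / N)) ^ 2 * N * N = ((t - (-A / N)) * N) ^ 2 := by ring
          _ ≤ ‖ξ₀ + t • η‖ ^ 2 * N := hcs
        calc (t - (-A / N)) ^ 2 * ‖η‖ ^ 2 = (t - (-A / N)) ^ 2 * N := by rw [hN]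
        _ ≤ ‖ξ₀ + t • η‖ ^ 2 := le_of_mul_le_mul_right h5 hNpos
      have := Real.sqrt_le_sqrt hsq
      rwa [Real.sqrt_mul (sq_nonneg _), Real.sqrt_sq_eq_abs, Real.sqrt_sq (norm_nonneg _),
        Real.sqrt_sq (norm_nonneg _)] at this
    calc ‖η‖ / 4 = (1/4) * ‖η‖ := by ring
    _ ≤ |t - (-A / N)| * ‖η‖ := mul_le_mul_of_nonneg_right h1 (norm_nonneg _)
    _ ≤ ‖ξ₀ + t • η‖ := h2
  -- lower bound for E on the subinterval
  have hp2 : (0:ℝ) ≤ p - 2 := by linarith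
  have hEmid : ∀ t ∈ Set.Icc a (a + 1/4), γ * (‖η‖ / 4) ^ (p - 2) * N ≤ E t := by
    intro t ht
    refine le_trans ?_ (hElow t)
    have h1 : (‖η‖ / 4) ^ (p - 2) ≤ (S t) ^ (p / 2 - 1) := by
      have hx : ‖η‖ / 4 ≤ ‖ξ₀ + t • η‖ := hnormlow t ht
      have h2 : (‖η‖ / 4) ^ (p - 2) ≤ ‖ξ₀ + t • η‖ ^ (p - 2) :=
        Real.rpow_le_rpow (by positivity) hx hp2
      have h3 : ‖ξ₀ + t • η‖ ^ (p - 2) = (‖ξ₀ + t • η‖ ^ 2) ^ (p / 2 - 1) := by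
        rw [← Real.rpow_natCast ‖ξ₀ + t • η‖ 2, ← Real.rpow_mul (norm_nonneg _)]
        congr 1
        push_cast
        ring
      have h4 : (‖ξ₀ + t • η‖ ^ 2) ^ (p / 2 - 1) ≤ (S t) ^ (p / 2 - 1) := by
        apply Real.rpow_le_rpow (by positivity) _ (by linarith)
        rw [hSval t]
        nlinarith [sq_nonneg ε]
      calc (‖η‖ / 4) ^ (p - 2) ≤ ‖ξ₀ + t • η‖ ^ (p - 2) := h2
      _ = (‖ξ₀ + t • η‖ ^ 2) ^ (p / 2 - 1) := h3
      _ ≤ (S t) ^ (p / 2 - 1) := h4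
    have := mul_le_mul_of_nonneg_right (mul_le_mul_of_nonneg_left h1 hγ.le) hNpos.le
    linarith
  -- integral splitting and lower bound
  have hsplit : (∫ t in a..(a + 1/4), E t) ≤ ∫ t in (0:ℝ)..1, E t := by
    have h1 : (∫ t in (0:ℝ)..a, E t) + (∫ t in a..(a + 1/4), E t) = ∫ t in (0:ℝ)..(a + 1/4), E t :=
      intervalIntegral.integral_add_adjacent_intervals (hInt 0 a) (hInt a (a + 1/4))
    have h2 : (∫ t in (0:ℝ)..(a + 1/4), E t) + (∫ t in (a + 1/4)..1, E t) = ∫ t in (0:ℝ)..1, E t :=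
      intervalIntegral.integral_add_adjacent_intervals (hInt 0 (a + 1/4)) (hInt (a + 1/4) 1)
    have h3 : 0 ≤ ∫ t in (0:ℝ)..a, E t :=
      intervalIntegral.integral_nonneg ha0 (fun u _ => hEnonneg u)
    have h4 : 0 ≤ ∫ t in (a + 1/4)..1, E t :=
      intervalIntegral.integral_nonneg ha1 (fun u _ => hEnonneg u)
    linarith
  have hmid : (1/4) * (γ * (‖η‖ / 4) ^ (p - 2) * N) ≤ ∫ t in a..(a + 1/4), E t := by
    have h1 : (∫ _ in a..(a + 1/4), (γ * (‖η‖ / 4) ^ (p - 2) * N)) ≤ ∫ t in a..(a + 1/4), E t := by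
      apply intervalIntegral.integral_mono_on (by linarith)
        (intervalIntegrable_const) (hInt a (a + 1/4)) hEmid
    rwa [intervalIntegral.integral_const, smul_eq_mul, show a + 1/4 - a = 1/4 by ring] at h1
  -- final arithmetic
  have hconst : (4:ℝ) ^ (1 - p) * γ * ‖η‖ ^ p = (1/4) * (γ * (‖η‖ / 4) ^ (p - 2) * N) := by
    rw [Real.div_rpow (norm_nonneg _) (by norm_num : (0:ℝ) ≤ 4)]
    have h1 : ‖η‖ ^ p = ‖η‖ ^ (p - 2) * N := by
      rw [hN, ← Real.rpow_natCast ‖η‖ 2, ← Real.rpow_add hnη]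
      norm_num
    rw [h1]
    have h2 : (4:ℝ) ^ (1 - p) = (1/4) / (4:ℝ) ^ (p - 2) := by
      rw [eq_div_iff (ne_of_gt (Real.rpow_pos_of_pos (by norm_num) (p - 2))),
        ← Real.rpow_add (by norm_num : (0:ℝ) < 4),
        show (1:ℝ) - p + (p - 2) = -1 by ring, Real.rpow_neg_one]
      norm_num
    rw [h2]
    field_simp
  rw [← hgoal_eq, ← hFTC]
  calc (4:ℝ) ^ (1 - p) * γ * ‖η‖ ^ p = (1/4) * (γ * (‖η‖ / 4) ^ (p - 2) * N) := hconst
  _ ≤ ∫ t in a..(a + 1/4), E t := hmid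
  _ ≤ ∫ t in (0:ℝ)..1, E t := hsplit
end

section
/- There exists a constant C > 0, depending only on p, such that for every g satisfying (G1)–(G3), every ε ∈ (0,1), and all ξ₀, ξ₁ ∈ ℝ^k: if 1 < p < 2 then |A_{p,ε}(ξ₁) − A_{p,ε}(ξ₀)| ≤ C·Γ·|ξ₁ − ξ₀|^{p−1}, and if 2 ≤ p < ∞ then |A_{p,ε}(ξ₁) − A_{p,ε}(ξ₀)| ≤ C·Γ·(ε^{p−2} + |ξ₀|^{p−2} + |ξ₁|^{p−2})·|ξ₁ − ξ₀|. -/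
open Real
open scoped RealInnerProductSpace

lemma key_deriv {k : ℕ} (p Γ : ℝ) (hΓ : 0 ≤ Γ) (g' g'' : ℝ → ℝ)
    (hg' : ∀ σ : ℝ, 0 < σ → HasDerivAt g' (g'' σ) σ)
    (hb1 : ∀ σ : ℝ, 0 < σ → |g' σ| ≤ Γ * σ ^ (p / 2 - 1))
    (hb2 : ∀ σ : ℝ, 0 < σ → |g'' σ| ≤ Γ * σ ^ (p / 2 - 2))
    (ε : ℝ) (hε : 0 < ε) (ξ₀ ξ₁ : EuclideanSpace ℝ (Fin k)) (B : ℝ)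
    (hB : ∀ t : ℝ, t ∈ Set.Icc (0:ℝ) 1 →
      3 * Γ * (ε ^ 2 + ‖ξ₀ + t • (ξ₁ - ξ₀)‖ ^ 2) ^ (p / 2 - 1) ≤ B) :
    ‖g' (ε ^ 2 + ‖ξ₁‖ ^ 2) • ξ₁ - g' (ε ^ 2 + ‖ξ₀‖ ^ 2) • ξ₀‖ ≤ B * ‖ξ₁ - ξ₀‖ := by
  set d := ξ₁ - ξ₀ with hd
  set ξt : ℝ → EuclideanSpace ℝ (Fin k) := fun t => ξ₀ + t • d with hξt
  set u : ℝ → ℝ := fun t => ε ^ 2 + ‖ξt t‖ ^ 2 with hu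
  have hupos : ∀ t, 0 < u t := fun t => by positivity
  have hsq : ∀ t, ‖ξt t‖ ^ 2 ≤ u t := fun t =>
    le_add_of_nonneg_left (sq_nonneg ε)
  have hξt' : ∀ t : ℝ, HasDerivAt ξt d t := by
    intro t
    have := ((hasDerivAt_id t).smul_const d).const_add ξ₀
    simp only [one_smul] at this
    exact this
  have hu' : ∀ t : ℝ, HasDerivAt u (2 * ⟪ξt t, d⟫) t := by
    intro t
    have h1 : HasDerivAt (fun t => ⟪ξt t, ξt t⟫) (⟪ξt t, d⟫ + ⟪d, ξt t⟫) t :=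
      (hξt' t).inner ℝ (hξt' t)
    have h2 : (fun t : ℝ => ε ^ 2 + ⟪ξt t, ξt t⟫) = u := by
      funext s; rw [hu, real_inner_self_eq_norm_sq]
    have h3 := h1.const_add (ε ^ 2)
    rw [h2] at h3
    have h4 : ⟪ξt t, d⟫ + ⟪d, ξt t⟫ = 2 * ⟪ξt t, d⟫ := by
      rw [real_inner_comm d (ξt t)]; ring
    rw [h4] at h3
    exact h3
  have hderiv : ∀ t : ℝ, HasDerivAt (fun s => g' (u s) • ξt s)
      (g' (u t) • d + (g'' (u t) * (2 * ⟪ξt t, d⟫)) • ξt t) t := by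
    intro t
    have := ((hg' (u t) (hupos t)).comp t (hu' t)).smul (hξt' t)
    exact this
  have hbound : ∀ t ∈ Set.Icc (0:ℝ) 1,
      ‖g' (u t) • d + (g'' (u t) * (2 * ⟪ξt t, d⟫)) • ξt t‖ ≤ B * ‖d‖ := by
    intro t ht
    have hut := hupos t
    have e1 : ‖g' (u t) • d + (g'' (u t) * (2 * ⟪ξt t, d⟫)) • ξt t‖
        ≤ |g' (u t)| * ‖d‖ + |g'' (u t) * (2 * ⟪ξt t, d⟫)| * ‖ξt t‖ := by
      refine (norm_add_le _ _).trans ?_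
      rw [norm_smul, norm_smul, Real.norm_eq_abs, Real.norm_eq_abs]
    have e2 : |g'' (u t) * (2 * ⟪ξt t, d⟫)| * ‖ξt t‖
        ≤ (Γ * u t ^ (p / 2 - 2)) * (2 * ‖ξt t‖ * ‖d‖) * ‖ξt t‖ := by
      rw [abs_mul]
      have hcs := abs_real_inner_le_norm (ξt t) d
      have h2 : |2 * ⟪ξt t, d⟫| ≤ 2 * ‖ξt t‖ * ‖d‖ := by
        rw [abs_mul, abs_two]
        nlinarith [abs_nonneg ⟪ξt t, d⟫]
      have := mul_le_mul (hb2 (u t) hut) h2 (abs_nonneg _)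
        (mul_nonneg hΓ (rpow_nonneg hut.le _))
      exact mul_le_mul_of_nonneg_right this (norm_nonneg _)
    have e3 : (Γ * u t ^ (p / 2 - 2)) * (2 * ‖ξt t‖ * ‖d‖) * ‖ξt t‖
        ≤ 2 * Γ * u t ^ (p / 2 - 1) * ‖d‖ := by
      have hkey : u t ^ (p / 2 - 2) * ‖ξt t‖ ^ 2 ≤ u t ^ (p / 2 - 1) := by
        calc u t ^ (p / 2 - 2) * ‖ξt t‖ ^ 2 ≤ u t ^ (p / 2 - 2) * u t :=
              mul_le_mul_of_nonneg_left (hsq t) (rpow_nonneg hut.le _)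
        _ = u t ^ (p / 2 - 1) := by
              rw [show p / 2 - 1 = p / 2 - 2 + 1 by ring, rpow_add hut, rpow_one]
      calc (Γ * u t ^ (p / 2 - 2)) * (2 * ‖ξt t‖ * ‖d‖) * ‖ξt t‖
          = 2 * Γ * (u t ^ (p / 2 - 2) * ‖ξt t‖ ^ 2) * ‖d‖ := by ring
        _ ≤ 2 * Γ * u t ^ (p / 2 - 1) * ‖d‖ := by
            have := mul_le_mul_of_nonneg_left hkey (by linarith : (0:ℝ) ≤ 2 * Γ)
            exact mul_le_mul_of_nonneg_right this (norm_nonneg _)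
    have e4 : |g' (u t)| * ‖d‖ ≤ Γ * u t ^ (p / 2 - 1) * ‖d‖ :=
      mul_le_mul_of_nonneg_right (hb1 (u t) hut) (norm_nonneg _)
    have e5 : 3 * Γ * u t ^ (p / 2 - 1) ≤ B := hB t ht
    calc ‖g' (u t) • d + (g'' (u t) * (2 * ⟪ξt t, d⟫)) • ξt t‖
        ≤ |g' (u t)| * ‖d‖ + |g'' (u t) * (2 * ⟪ξt t, d⟫)| * ‖ξt t‖ := e1
      _ ≤ Γ * u t ^ (p / 2 - 1) * ‖d‖ + 2 * Γ * u t ^ (p / 2 - 1) * ‖d‖ :=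
          add_le_add e4 (e2.trans e3)
      _ = (3 * Γ * u t ^ (p / 2 - 1)) * ‖d‖ := by ring
      _ ≤ B * ‖d‖ := mul_le_mul_of_nonneg_right e5 (norm_nonneg _)
  have hmvt := Convex.norm_image_sub_le_of_norm_hasDerivWithin_le
    (f := fun s => g' (u s) • ξt s)
    (f' := fun t => g' (u t) • d + (g'' (u t) * (2 * ⟪ξt t, d⟫)) • ξt t)
    (fun t _ => (hderiv t).hasDerivWithinAt) hbound (convex_Icc (0:ℝ) 1)
    (Set.left_mem_Icc.2 zero_le_one) (Set.right_mem_Icc.2 zero_le_one)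
  have hx1 : ξt 1 = ξ₁ := by rw [hξt]; simp [hd]
  have hx0 : ξt 0 = ξ₀ := by rw [hξt]; simp
  have hu1 : u 1 = ε ^ 2 + ‖ξ₁‖ ^ 2 := by simp only [hu]; rw [hx1]
  have hu0 : u 0 = ε ^ 2 + ‖ξ₀‖ ^ 2 := by simp only [hu]; rw [hx0]
  simpa [hu1, hu0, hx1, hx0] using hmvt

lemma bound_A {k : ℕ} (p Γ : ℝ) (hp : 1 < p) (hp2 : p < 2) (hΓ : 0 ≤ Γ) (g' : ℝ → ℝ)
    (hb1 : ∀ σ : ℝ, 0 < σ → |g' σ| ≤ Γ * σ ^ (p / 2 - 1))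
    (ε : ℝ) (hε : 0 < ε) (ξ : EuclideanSpace ℝ (Fin k)) :
    ‖g' (ε ^ 2 + ‖ξ‖ ^ 2) • ξ‖ ≤ Γ * ‖ξ‖ ^ (p - 1) := by
  rw [norm_smul, Real.norm_eq_abs]
  by_cases hξ : ξ = 0
  · simp [hξ]
    exact mul_nonneg hΓ (rpow_nonneg le_rfl _)
  have hn : 0 < ‖ξ‖ := norm_pos_iff.2 hξ
  have hσ : (0:ℝ) < ε ^ 2 + ‖ξ‖ ^ 2 := by positivity
  have h1 : |g' (ε ^ 2 + ‖ξ‖ ^ 2)| ≤ Γ * (ε ^ 2 + ‖ξ‖ ^ 2) ^ (p / 2 - 1) := hb1 _ hσ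
  have h2 : (ε ^ 2 + ‖ξ‖ ^ 2) ^ (p / 2 - 1) ≤ (‖ξ‖ ^ 2) ^ (p / 2 - 1) := by
    apply rpow_le_rpow_of_nonpos (by positivity) (le_add_of_nonneg_left (sq_nonneg ε))
    linarith
  have h3 : (‖ξ‖ ^ 2 : ℝ) ^ (p / 2 - 1) = ‖ξ‖ ^ (p - 2) := by
    rw [← rpow_natCast ‖ξ‖ 2, ← rpow_mul (norm_nonneg _)]
    congr 1; ring
  have h4 : ‖ξ‖ ^ (p - 2) * ‖ξ‖ = ‖ξ‖ ^ (p - 1) := by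
    rw [show p - 1 = p - 2 + 1 by ring, rpow_add hn, rpow_one]
  calc |g' (ε ^ 2 + ‖ξ‖ ^ 2)| * ‖ξ‖ ≤ (Γ * ‖ξ‖ ^ (p - 2)) * ‖ξ‖ := by
        refine mul_le_mul_of_nonneg_right (h1.trans ?_) (norm_nonneg _)
        rw [← h3]
        exact mul_le_mul_of_nonneg_left h2 hΓ
    _ = Γ * ‖ξ‖ ^ (p - 1) := by rw [mul_assoc, h4]

lemma case_lt {k : ℕ} (p Γ : ℝ) (hp : 1 < p) (hp2 : p < 2) (hΓ : 0 ≤ Γ) (g' g'' : ℝ → ℝ)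
    (hg' : ∀ σ : ℝ, 0 < σ → HasDerivAt g' (g'' σ) σ)
    (hb1 : ∀ σ : ℝ, 0 < σ → |g' σ| ≤ Γ * σ ^ (p / 2 - 1))
    (hb2 : ∀ σ : ℝ, 0 < σ → |g'' σ| ≤ Γ * σ ^ (p / 2 - 2))
    (ε : ℝ) (hε : 0 < ε) (ξ₀ ξ₁ : EuclideanSpace ℝ (Fin k)) (hle : ‖ξ₀‖ ≤ ‖ξ₁‖) :
    ‖g' (ε ^ 2 + ‖ξ₁‖ ^ 2) • ξ₁ - g' (ε ^ 2 + ‖ξ₀‖ ^ 2) • ξ₀‖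
      ≤ 3 * 2 ^ p * Γ * ‖ξ₁ - ξ₀‖ ^ (p - 1) := by
  have h2p : (1:ℝ) ≤ 2 ^ p := by
    calc (1:ℝ) = 2 ^ (0:ℝ) := (rpow_zero 2).symm
    _ ≤ 2 ^ p := rpow_le_rpow_of_exponent_le one_le_two (by linarith)
  have hRHS0 : 0 ≤ 3 * 2 ^ p * Γ * ‖ξ₁ - ξ₀‖ ^ (p - 1) := by
    apply mul_nonneg (mul_nonneg (by positivity) hΓ) (rpow_nonneg (norm_nonneg _) _)
  by_cases heq : ξ₁ = ξ₀
  · simp only [heq, sub_self, norm_zero]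
    exact mul_nonneg (mul_nonneg (by positivity) hΓ) (rpow_nonneg le_rfl _)
  have hd0 : 0 < ‖ξ₁ - ξ₀‖ := by
    rw [norm_pos_iff, sub_ne_zero]; exact heq
  by_cases hcase : ‖ξ₁ - ξ₀‖ ≤ ‖ξ₁‖ / 2
  · -- near case
    have hm : 0 < ‖ξ₁‖ := by linarith
    have hkey := key_deriv p Γ hΓ g' g'' hg' hb1 hb2 ε hε ξ₀ ξ₁
      (3 * Γ * ((‖ξ₁‖ / 2) ^ 2) ^ (p / 2 - 1)) ?_
    · refine hkey.trans ?_
      have e1 : ((‖ξ₁‖ / 2) ^ 2 : ℝ) ^ (p / 2 - 1) = (‖ξ₁‖ / 2) ^ (p - 2) := by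
        rw [← rpow_natCast (‖ξ₁‖ / 2) 2, ← rpow_mul (by positivity)]
        congr 1; ring
      have e2 : ‖ξ₁ - ξ₀‖ = ‖ξ₁ - ξ₀‖ ^ (2 - p) * ‖ξ₁ - ξ₀‖ ^ (p - 1) := by
        rw [← rpow_add hd0]
        norm_num
      have e3 : ‖ξ₁ - ξ₀‖ ^ (2 - p) ≤ (‖ξ₁‖ / 2) ^ (2 - p) :=
        rpow_le_rpow (norm_nonneg _) hcase (by linarith)
      have e4 : (‖ξ₁‖ / 2 : ℝ) ^ (p - 2) * (‖ξ₁‖ / 2) ^ (2 - p) = 1 := by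
        rw [← rpow_add (by positivity : (0:ℝ) < ‖ξ₁‖ / 2)]
        norm_num
      calc 3 * Γ * ((‖ξ₁‖ / 2) ^ 2) ^ (p / 2 - 1) * ‖ξ₁ - ξ₀‖
          = 3 * Γ * ((‖ξ₁‖ / 2) ^ (p - 2) * ‖ξ₁ - ξ₀‖ ^ (2 - p)) * ‖ξ₁ - ξ₀‖ ^ (p - 1) := by
            rw [e1]; conv_lhs => rw [e2]
            ring
        _ ≤ 3 * Γ * ((‖ξ₁‖ / 2) ^ (p - 2) * (‖ξ₁‖ / 2) ^ (2 - p)) * ‖ξ₁ - ξ₀‖ ^ (p - 1) := by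
            apply mul_le_mul_of_nonneg_right _ (rpow_nonneg (norm_nonneg _) _)
            apply mul_le_mul_of_nonneg_left _ (by positivity : (0:ℝ) ≤ 3 * Γ)
            exact mul_le_mul_of_nonneg_left e3 (rpow_nonneg (by positivity) _)
        _ = 3 * Γ * ‖ξ₁ - ξ₀‖ ^ (p - 1) := by rw [e4]; ring
        _ ≤ 3 * 2 ^ p * Γ * ‖ξ₁ - ξ₀‖ ^ (p - 1) := by
            apply mul_le_mul_of_nonneg_right _ (rpow_nonneg (norm_nonneg _) _)
            nlinarith
    · -- the segment bound
      intro t ht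
      obtain ⟨ht0, ht1⟩ := ht
      have hlow : ‖ξ₁‖ / 2 ≤ ‖ξ₀ + t • (ξ₁ - ξ₀)‖ := by
        have hrw : ξ₀ + t • (ξ₁ - ξ₀) = ξ₁ - (1 - t) • (ξ₁ - ξ₀) := by module
        rw [hrw]
        have h5 : ‖(1 - t) • (ξ₁ - ξ₀)‖ ≤ ‖ξ₁ - ξ₀‖ := by
          rw [norm_smul, Real.norm_eq_abs, abs_of_nonneg (by linarith)]
          nlinarith
        have h6 := norm_sub_norm_le ξ₁ ((1 - t) • (ξ₁ - ξ₀))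
        linarith
      have hσ : ((‖ξ₁‖ / 2) ^ 2 : ℝ) ≤ ε ^ 2 + ‖ξ₀ + t • (ξ₁ - ξ₀)‖ ^ 2 := by
        have := pow_le_pow_left₀ (by positivity : (0:ℝ) ≤ ‖ξ₁‖ / 2) hlow 2
        nlinarith [sq_nonneg ε]
      have := rpow_le_rpow_of_nonpos (by positivity : (0:ℝ) < (‖ξ₁‖ / 2) ^ 2) hσ
        (by linarith : p / 2 - 1 ≤ 0)
      exact mul_le_mul_of_nonneg_left this (by positivity)
  · -- far case
    push_neg at hcase
    have h1 := bound_A p Γ hp hp2 hΓ g' hb1 ε hε ξ₁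
    have h0 := bound_A p Γ hp hp2 hΓ g' hb1 ε hε ξ₀
    have htri := norm_sub_le (g' (ε ^ 2 + ‖ξ₁‖ ^ 2) • ξ₁) (g' (ε ^ 2 + ‖ξ₀‖ ^ 2) • ξ₀)
    have h2 : ‖ξ₀‖ ^ (p - 1) ≤ ‖ξ₁‖ ^ (p - 1) :=
      rpow_le_rpow (norm_nonneg _) hle (by linarith)
    have h3 : ‖ξ₁‖ ^ (p - 1) ≤ (2 * ‖ξ₁ - ξ₀‖) ^ (p - 1) :=
      rpow_le_rpow (norm_nonneg _) (by linarith) (by linarith)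
    have h4 : ((2:ℝ) * ‖ξ₁ - ξ₀‖) ^ (p - 1) = 2 ^ (p - 1) * ‖ξ₁ - ξ₀‖ ^ (p - 1) :=
      mul_rpow (by norm_num) (norm_nonneg _)
    have h5 : (2:ℝ) * 2 ^ (p - 1) = 2 ^ p := by
      nth_rewrite 1 [show (2:ℝ) = 2 ^ (1:ℝ) by rw [rpow_one]]
      rw [← rpow_add two_pos]; congr 1; ring
    calc ‖g' (ε ^ 2 + ‖ξ₁‖ ^ 2) • ξ₁ - g' (ε ^ 2 + ‖ξ₀‖ ^ 2) • ξ₀‖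
        ≤ Γ * ‖ξ₁‖ ^ (p - 1) + Γ * ‖ξ₀‖ ^ (p - 1) := by linarith
      _ ≤ 2 * Γ * ‖ξ₁‖ ^ (p - 1) := by nlinarith
      _ ≤ 2 * Γ * (2 ^ (p - 1) * ‖ξ₁ - ξ₀‖ ^ (p - 1)) := by
          rw [← h4]
          exact mul_le_mul_of_nonneg_left h3 (by positivity)
      _ = (2 * 2 ^ (p - 1)) * Γ * ‖ξ₁ - ξ₀‖ ^ (p - 1) := by ring
      _ ≤ 3 * 2 ^ p * Γ * ‖ξ₁ - ξ₀‖ ^ (p - 1) := by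
          rw [h5]
          apply mul_le_mul_of_nonneg_right _ (rpow_nonneg (norm_nonneg _) _)
          nlinarith [rpow_nonneg (by norm_num : (0:ℝ) ≤ 2) p]

lemma case_ge {k : ℕ} (p Γ : ℝ) (hp2 : 2 ≤ p) (hΓ : 0 ≤ Γ) (g' g'' : ℝ → ℝ)
    (hg' : ∀ σ : ℝ, 0 < σ → HasDerivAt g' (g'' σ) σ)
    (hb1 : ∀ σ : ℝ, 0 < σ → |g' σ| ≤ Γ * σ ^ (p / 2 - 1))
    (hb2 : ∀ σ : ℝ, 0 < σ → |g'' σ| ≤ Γ * σ ^ (p / 2 - 2))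
    (ε : ℝ) (hε : 0 < ε) (ξ₀ ξ₁ : EuclideanSpace ℝ (Fin k)) :
    ‖g' (ε ^ 2 + ‖ξ₁‖ ^ 2) • ξ₁ - g' (ε ^ 2 + ‖ξ₀‖ ^ 2) • ξ₀‖
      ≤ 3 * 2 ^ p * Γ * (ε ^ (p - 2) + ‖ξ₀‖ ^ (p - 2) + ‖ξ₁‖ ^ (p - 2)) * ‖ξ₁ - ξ₀‖ := by
  set S := ε ^ (p - 2) + ‖ξ₀‖ ^ (p - 2) + ‖ξ₁‖ ^ (p - 2) with hS
  have hS0 : 0 ≤ S := by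
    have := rpow_nonneg hε.le (p - 2)
    have := rpow_nonneg (norm_nonneg ξ₀) (p - 2)
    have := rpow_nonneg (norm_nonneg ξ₁) (p - 2)
    linarith
  have hkey := key_deriv p Γ hΓ g' g'' hg' hb1 hb2 ε hε ξ₀ ξ₁ (3 * 2 ^ p * Γ * S) ?_
  · calc ‖g' (ε ^ 2 + ‖ξ₁‖ ^ 2) • ξ₁ - g' (ε ^ 2 + ‖ξ₀‖ ^ 2) • ξ₀‖
        ≤ 3 * 2 ^ p * Γ * S * ‖ξ₁ - ξ₀‖ := hkey
    _ = 3 * 2 ^ p * Γ * S * ‖ξ₁ - ξ₀‖ := rfl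
  intro t ht
  obtain ⟨ht0, ht1⟩ := ht
  set M := max ε (max ‖ξ₀‖ ‖ξ₁‖) with hM
  have hM0 : 0 < M := lt_of_lt_of_le hε (le_max_left _ _)
  have hup : ‖ξ₀ + t • (ξ₁ - ξ₀)‖ ≤ max ‖ξ₀‖ ‖ξ₁‖ := by
    have hrw : ξ₀ + t • (ξ₁ - ξ₀) = (1 - t) • ξ₀ + t • ξ₁ := by module
    rw [hrw]
    calc ‖(1 - t) • ξ₀ + t • ξ₁‖ ≤ ‖(1 - t) • ξ₀‖ + ‖t • ξ₁‖ := norm_add_le _ _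
      _ = (1 - t) * ‖ξ₀‖ + t * ‖ξ₁‖ := by
          rw [norm_smul, norm_smul, Real.norm_eq_abs, Real.norm_eq_abs,
            abs_of_nonneg (by linarith), abs_of_nonneg ht0]
      _ ≤ (1 - t) * max ‖ξ₀‖ ‖ξ₁‖ + t * max ‖ξ₀‖ ‖ξ₁‖ := by
          have := le_max_left ‖ξ₀‖ ‖ξ₁‖
          have := le_max_right ‖ξ₀‖ ‖ξ₁‖
          have h1 : (0:ℝ) ≤ 1 - t := by linarith
          nlinarith
      _ = max ‖ξ₀‖ ‖ξ₁‖ := by ring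
  have hσ : ε ^ 2 + ‖ξ₀ + t • (ξ₁ - ξ₀)‖ ^ 2 ≤ 2 * M ^ 2 := by
    have h1 : ε ≤ M := le_max_left _ _
    have h2 : ‖ξ₀ + t • (ξ₁ - ξ₀)‖ ≤ M := hup.trans (le_max_right _ _)
    nlinarith [norm_nonneg (ξ₀ + t • (ξ₁ - ξ₀)), hε.le]
  have hq : (0:ℝ) ≤ p / 2 - 1 := by linarith
  have e1 : (ε ^ 2 + ‖ξ₀ + t • (ξ₁ - ξ₀)‖ ^ 2) ^ (p / 2 - 1) ≤ (2 * M ^ 2) ^ (p / 2 - 1) :=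
    rpow_le_rpow (by positivity) hσ hq
  have e2 : ((2:ℝ) * M ^ 2) ^ (p / 2 - 1) = 2 ^ (p / 2 - 1) * M ^ (p - 2) := by
    rw [mul_rpow (by norm_num) (sq_nonneg M)]
    congr 1
    rw [← rpow_natCast M 2, ← rpow_mul hM0.le]
    congr 1; ring
  have e3 : M ^ (p - 2) ≤ S := by
    have hεp := rpow_nonneg hε.le (p - 2)
    have h0p := rpow_nonneg (norm_nonneg ξ₀) (p - 2)
    have h1p := rpow_nonneg (norm_nonneg ξ₁) (p - 2)
    rcases max_choice ε (max ‖ξ₀‖ ‖ξ₁‖) with h | h <;> rw [hM, h]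
    · rw [hS]; linarith
    · rcases max_choice ‖ξ₀‖ ‖ξ₁‖ with h' | h' <;> rw [h'] <;> rw [hS] <;> linarith
  have e4 : (2:ℝ) ^ (p / 2 - 1) ≤ 2 ^ p :=
    rpow_le_rpow_of_exponent_le one_le_two (by linarith)
  have e5 : (2:ℝ) ^ (p / 2 - 1) * M ^ (p - 2) ≤ 2 ^ p * S :=
    mul_le_mul e4 e3 (rpow_nonneg hM0.le _) (rpow_nonneg (by norm_num) _)
  calc 3 * Γ * (ε ^ 2 + ‖ξ₀ + t • (ξ₁ - ξ₀)‖ ^ 2) ^ (p / 2 - 1)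
      ≤ 3 * Γ * (2 ^ (p / 2 - 1) * M ^ (p - 2)) := by
        rw [← e2]; exact mul_le_mul_of_nonneg_left e1 (by positivity)
    _ ≤ 3 * Γ * (2 ^ p * S) := mul_le_mul_of_nonneg_left e5 (by positivity)
    _ = 3 * 2 ^ p * Γ * S := by ring

/-- Growth estimate for `A_{p,ε}(ξ) = g'(ε²+|ξ|²) ξ`: there exists `C > 0`, depending
only on `p`, such that for every `g` satisfying (G1)–(G3), every `ε ∈ (0,1)`, and all
`ξ₀, ξ₁`: if `1 < p < 2` then `|A_{p,ε}(ξ₁) − A_{p,ε}(ξ₀)| ≤ C Γ |ξ₁ − ξ₀|^{p−1}`, and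
if `2 ≤ p` then `|A_{p,ε}(ξ₁) − A_{p,ε}(ξ₀)| ≤ C Γ (ε^{p−2}+|ξ₀|^{p−2}+|ξ₁|^{p−2}) |ξ₁ − ξ₀|`. -/
theorem stmt_11 (k : ℕ) (hk : 1 ≤ k) (p : ℝ) (hp : 1 < p) :
    ∃ C : ℝ, 0 < C ∧
      ∀ γ Γ : ℝ, 0 < γ → γ ≤ Γ →
      ∀ g g' g'' : ℝ → ℝ,
        (∀ σ : ℝ, 0 < σ → HasDerivAt g (g' σ) σ) →
        (∀ σ : ℝ, 0 < σ → HasDerivAt g' (g'' σ) σ) →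
        ContinuousOn g'' (Set.Ioi 0) →
        (∀ σ : ℝ, 0 < σ → |g' σ| ≤ Γ * σ ^ (p / 2 - 1)) →
        (∀ σ : ℝ, 0 < σ → |g'' σ| ≤ Γ * σ ^ (p / 2 - 2)) →
        (∀ σ : ℝ, 0 ≤ σ → ∀ τ : ℝ, 0 < τ → τ < 1 →
          γ * (σ + τ) ^ (p / 2 - 1) ≤ g' (σ + τ) + 2 * σ * min (g'' (σ + τ)) 0) →
        ∀ ε : ℝ, 0 < ε → ε < 1 →
        ∀ ξ₀ ξ₁ : EuclideanSpace ℝ (Fin k),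
          (p < 2 →
            ‖g' (ε ^ 2 + ‖ξ₁‖ ^ 2) • ξ₁ - g' (ε ^ 2 + ‖ξ₀‖ ^ 2) • ξ₀‖
              ≤ C * Γ * ‖ξ₁ - ξ₀‖ ^ (p - 1))
          ∧ (2 ≤ p →
            ‖g' (ε ^ 2 + ‖ξ₁‖ ^ 2) • ξ₁ - g' (ε ^ 2 + ‖ξ₀‖ ^ 2) • ξ₀‖
              ≤ C * Γ * (ε ^ (p - 2) + ‖ξ₀‖ ^ (p - 2) + ‖ξ₁‖ ^ (p - 2)) * ‖ξ₁ - ξ₀‖) := by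
  refine ⟨3 * 2 ^ p, by positivity, ?_⟩
  intro γ Γ hγ hγΓ g g' g'' hg hg' hg''c hb1 hb2 hG3 ε hε hε1 ξ₀ ξ₁
  have hΓ : 0 ≤ Γ := le_trans hγ.le hγΓ
  constructor
  · intro hp2
    rcases le_total ‖ξ₀‖ ‖ξ₁‖ with h | h
    · exact case_lt p Γ hp hp2 hΓ g' g'' hg' hb1 hb2 ε hε ξ₀ ξ₁ h
    · rw [norm_sub_rev, norm_sub_rev ξ₁ ξ₀]
      exact case_lt p Γ hp hp2 hΓ g' g'' hg' hb1 hb2 ε hε ξ₁ ξ₀ h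
  · intro hp2
    exact case_ge p Γ hp2 hΓ g' g'' hg' hb1 hb2 ε hε ξ₀ ξ₁
end

section
/- Assume 1 < p < 2. There exists a constant C > 0, depending only on p, such that for every g satisfying (G1)–(G3), every ε ∈ (0,1), and all ξ₀, ξ₁ ∈ ℝ^k with (ξ₀, ξ₁) ≠ (0, 0), one has |A_{p,ε}(ξ₁) − A_{p,ε}(ξ₀)| ≤ C·Γ·max{|ξ₀|, |ξ₁|}^{p−2}·|ξ₁ − ξ₀| (since p − 2 < 0, max{|ξ₀|,|ξ₁|}^{p−2} equals min{|ξ₀|^{p−2}, |ξ₁|^{p−2}}). -/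
open Real

private lemma sq_rpow_s12 {b : ℝ} (hb : 0 < b) (e : ℝ) : (b ^ 2) ^ e = b ^ (2 * e) := by
  rw [← Real.rpow_natCast b 2, ← Real.rpow_mul hb.le]
  norm_num

set_option maxHeartbeats 1000000 in
private lemma aux_main {k : ℕ} (p Γ : ℝ) (hp : 1 < p) (hp2 : p < 2) (hΓ : 0 < Γ)
    (g' g'' : ℝ → ℝ)
    (hder : ∀ σ : ℝ, 0 < σ → HasDerivAt g' (g'' σ) σ)
    (hG1 : ∀ σ : ℝ, 0 < σ → |g' σ| ≤ Γ * σ ^ (p / 2 - 1))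
    (hG2 : ∀ σ : ℝ, 0 < σ → |g'' σ| ≤ Γ * σ ^ (p / 2 - 2))
    (ε : ℝ) (hε : 0 < ε)
    (ξ₀ ξ₁ : EuclideanSpace ℝ (Fin k)) (hle : ‖ξ₀‖ ≤ ‖ξ₁‖) (hne : ξ₁ ≠ 0) :
    ‖g' (ε ^ 2 + ‖ξ₁‖ ^ 2) • ξ₁ - g' (ε ^ 2 + ‖ξ₀‖ ^ 2) • ξ₀‖
      ≤ 16 * Γ * ‖ξ₁‖ ^ (p - 2) * ‖ξ₁ - ξ₀‖ := by
  set a := ‖ξ₀‖ with ha_def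
  set b := ‖ξ₁‖ with hb_def
  have ha0 : 0 ≤ a := norm_nonneg _
  have hb : 0 < b := norm_pos_iff.mpr hne
  set s₀ := ε ^ 2 + a ^ 2 with hs₀def
  set s₁ := ε ^ 2 + b ^ 2 with hs₁def
  have hε2 : 0 < ε ^ 2 := by positivity
  have hs₀ : 0 < s₀ := by positivity
  have hs₁ : 0 < s₁ := by positivity
  have hs01 : s₀ ≤ s₁ := by simp only [hs₀def, hs₁def]; nlinarith
  have hb2 : (0:ℝ) < b ^ 2 := by positivity
  have hbp : s₁ ^ (p / 2 - 1) ≤ b ^ (p - 2) := by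
    calc s₁ ^ (p / 2 - 1) ≤ (b ^ 2) ^ (p / 2 - 1) :=
          Real.rpow_le_rpow_of_nonpos hb2 (by simp only [hs₁def]; nlinarith) (by linarith)
      _ = b ^ (p - 2) := by rw [sq_rpow_s12 hb, show 2 * (p / 2 - 1) = p - 2 by ring]
  have hg1 : |g' s₁| ≤ Γ * b ^ (p - 2) :=
    (hG1 s₁ hs₁).trans (mul_le_mul_of_nonneg_left hbp hΓ.le)
  have hd : 0 ≤ ‖ξ₁ - ξ₀‖ := norm_nonneg _
  have hbp0 : 0 < b ^ (p - 2) := Real.rpow_pos_of_pos hb _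
  rcases le_or_gt b (2 * ‖ξ₁ - ξ₀‖) with hcase | hcase
  · -- crude bound
    have hA1 : ‖g' s₁ • ξ₁‖ ≤ Γ * b ^ (p - 1) := by
      rw [norm_smul, Real.norm_eq_abs]
      calc |g' s₁| * b ≤ (Γ * b ^ (p - 2)) * b := mul_le_mul_of_nonneg_right hg1 hb.le
        _ = Γ * b ^ (p - 1) := by
            rw [mul_assoc, ← Real.rpow_add_one hb.ne' (p - 2),
              show p - 2 + 1 = p - 1 by ring]
    have hA0 : ‖g' s₀ • ξ₀‖ ≤ Γ * b ^ (p - 1) := by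
      rw [norm_smul, Real.norm_eq_abs]
      rcases eq_or_lt_of_le ha0 with h0 | h0
      · rw [← ha_def, ← h0]; simp only [mul_zero]; positivity
      · have ha2 : (0:ℝ) < a ^ 2 := by positivity
        have h1 : s₀ ^ (p / 2 - 1) ≤ a ^ (p - 2) := by
          calc s₀ ^ (p / 2 - 1) ≤ (a ^ 2) ^ (p / 2 - 1) :=
                Real.rpow_le_rpow_of_nonpos ha2 (by simp only [hs₀def]; nlinarith)
                  (by linarith)
            _ = a ^ (p - 2) := by rw [sq_rpow_s12 h0, show 2 * (p / 2 - 1) = p - 2 by ring]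
        calc |g' s₀| * a ≤ (Γ * a ^ (p - 2)) * a := by
              refine mul_le_mul_of_nonneg_right ((hG1 s₀ hs₀).trans ?_) ha0
              exact mul_le_mul_of_nonneg_left h1 hΓ.le
          _ = Γ * a ^ (p - 1) := by
              rw [mul_assoc, ← Real.rpow_add_one h0.ne' (p - 2),
                show p - 2 + 1 = p - 1 by ring]
          _ ≤ Γ * b ^ (p - 1) :=
              mul_le_mul_of_nonneg_left (Real.rpow_le_rpow ha0 hle (by linarith)) hΓ.le
    have hX : 0 ≤ Γ * b ^ (p - 2) * ‖ξ₁ - ξ₀‖ := by positivity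
    calc ‖g' s₁ • ξ₁ - g' s₀ • ξ₀‖ ≤ ‖g' s₁ • ξ₁‖ + ‖g' s₀ • ξ₀‖ := norm_sub_le _ _
      _ ≤ 2 * (Γ * b ^ (p - 1)) := by linarith
      _ = 2 * Γ * b ^ (p - 2) * b := by
          rw [show b ^ (p - 1) = b ^ (p - 2) * b from by
            rw [← Real.rpow_add_one hb.ne' (p - 2), show p - 2 + 1 = p - 1 by ring]]
          ring
      _ ≤ 2 * Γ * b ^ (p - 2) * (2 * ‖ξ₁ - ξ₀‖) :=
          mul_le_mul_of_nonneg_left hcase (by positivity)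
      _ ≤ 16 * Γ * b ^ (p - 2) * ‖ξ₁ - ξ₀‖ := by linarith
  · -- both norms comparable
    have hab : b - a ≤ ‖ξ₁ - ξ₀‖ := by
      have := norm_sub_norm_le ξ₁ ξ₀
      simpa [ha_def, hb_def] using this
    have ha0' : 0 < a := by linarith
    have hba2 : b / 2 ≤ a := by linarith
    have ha2 : (0:ℝ) < a ^ 2 := by positivity
    set D := Γ * s₀ ^ (p / 2 - 2) with hD
    have hmvt : |g' s₁ - g' s₀| ≤ D * (s₁ - s₀) := by
      have h := Convex.norm_image_sub_le_of_norm_hasDerivWithin_le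
        (f := g') (f' := g'') (s := Set.Icc s₀ s₁) (C := D)
        (fun x hx => (hder x (lt_of_lt_of_le hs₀ hx.1)).hasDerivWithinAt)
        (fun x hx => by
          have hx0 : 0 < x := lt_of_lt_of_le hs₀ hx.1
          rw [Real.norm_eq_abs]
          refine (hG2 x hx0).trans ?_
          exact mul_le_mul_of_nonneg_left
            (Real.rpow_le_rpow_of_nonpos hs₀ hx.1 (by linarith)) hΓ.le)
        (convex_Icc _ _) (Set.left_mem_Icc.mpr hs01) (Set.right_mem_Icc.mpr hs01)
      rw [Real.norm_eq_abs, Real.norm_eq_abs,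
        abs_of_nonneg (by linarith : (0:ℝ) ≤ s₁ - s₀)] at h
      exact h
    have hid : g' s₁ • ξ₁ - g' s₀ • ξ₀
        = g' s₁ • (ξ₁ - ξ₀) + (g' s₁ - g' s₀) • ξ₀ := by
      rw [smul_sub, sub_smul]; abel
    have h1 : s₀ ^ (p / 2 - 2) ≤ a ^ (p - 4) := by
      calc s₀ ^ (p / 2 - 2) ≤ (a ^ 2) ^ (p / 2 - 2) :=
            Real.rpow_le_rpow_of_nonpos ha2 (by simp only [hs₀def]; nlinarith) (by linarith)
        _ = a ^ (p - 4) := by rw [sq_rpow_s12 ha0', show 2 * (p / 2 - 2) = p - 4 by ring]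
    have h2 : s₁ - s₀ ≤ 2 * b * ‖ξ₁ - ξ₀‖ := by
      have hfac : s₁ - s₀ = (b + a) * (b - a) := by simp only [hs₀def, hs₁def]; ring
      nlinarith
    have h3 : a ^ (p - 4) * a = a ^ (p - 3) := by
      rw [← Real.rpow_add_one ha0'.ne' (p - 4), show p - 4 + 1 = p - 3 by ring]
    have h4 : a ^ (p - 3) ≤ 4 * b ^ (p - 3) := by
      have hT0 : (0:ℝ) < (2:ℝ) ^ (p - 3) := Real.rpow_pos_of_pos two_pos _
      have hT : (1:ℝ) / 4 ≤ (2:ℝ) ^ (p - 3) := by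
        have h22 : (2:ℝ) ^ (-2:ℝ) = 1 / 4 := by
          rw [show (-2:ℝ) = ((-2:ℤ):ℝ) by norm_num, Real.rpow_intCast]
          norm_num
        have := Real.rpow_le_rpow_of_exponent_le (by norm_num : (1:ℝ) ≤ 2)
          (show (-2:ℝ) ≤ p - 3 by linarith)
        linarith [h22 ▸ this]
      have hB : (0:ℝ) < b ^ (p - 3) := Real.rpow_pos_of_pos hb _
      calc a ^ (p - 3) ≤ (b / 2) ^ (p - 3) :=
            Real.rpow_le_rpow_of_nonpos (by linarith) hba2 (by linarith)
        _ = b ^ (p - 3) / (2:ℝ) ^ (p - 3) := Real.div_rpow hb.le (by norm_num) _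
        _ ≤ 4 * b ^ (p - 3) := by
            rw [div_le_iff₀ hT0]
            nlinarith
    have hbp3 : b ^ (p - 3) * b = b ^ (p - 2) := by
      rw [← Real.rpow_add_one hb.ne' (p - 3), show p - 3 + 1 = p - 2 by ring]
    have hterm2 : |g' s₁ - g' s₀| * a ≤ 8 * Γ * b ^ (p - 2) * ‖ξ₁ - ξ₀‖ := by
      calc |g' s₁ - g' s₀| * a ≤ (D * (s₁ - s₀)) * a := mul_le_mul_of_nonneg_right hmvt ha0
        _ ≤ (Γ * a ^ (p - 4) * (2 * b * ‖ξ₁ - ξ₀‖)) * a := by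
            refine mul_le_mul_of_nonneg_right ?_ ha0
            exact mul_le_mul (mul_le_mul_of_nonneg_left h1 hΓ.le) h2 (by linarith)
              (by positivity)
        _ = 2 * Γ * (a ^ (p - 4) * a) * b * ‖ξ₁ - ξ₀‖ := by ring
        _ = 2 * Γ * a ^ (p - 3) * b * ‖ξ₁ - ξ₀‖ := by rw [h3]
        _ ≤ 2 * Γ * (4 * b ^ (p - 3)) * b * ‖ξ₁ - ξ₀‖ := by
            refine mul_le_mul_of_nonneg_right (mul_le_mul_of_nonneg_right ?_ hb.le) hd
            exact mul_le_mul_of_nonneg_left h4 (by linarith)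
        _ = 8 * Γ * (b ^ (p - 3) * b) * ‖ξ₁ - ξ₀‖ := by ring
        _ = 8 * Γ * b ^ (p - 2) * ‖ξ₁ - ξ₀‖ := by rw [hbp3]
    calc ‖g' s₁ • ξ₁ - g' s₀ • ξ₀‖
        = ‖g' s₁ • (ξ₁ - ξ₀) + (g' s₁ - g' s₀) • ξ₀‖ := by rw [hid]
      _ ≤ ‖g' s₁ • (ξ₁ - ξ₀)‖ + ‖(g' s₁ - g' s₀) • ξ₀‖ := norm_add_le _ _
      _ = |g' s₁| * ‖ξ₁ - ξ₀‖ + |g' s₁ - g' s₀| * a := by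
          rw [norm_smul, norm_smul, Real.norm_eq_abs, Real.norm_eq_abs]
      _ ≤ Γ * b ^ (p - 2) * ‖ξ₁ - ξ₀‖ + 8 * Γ * b ^ (p - 2) * ‖ξ₁ - ξ₀‖ := by
          have := mul_le_mul_of_nonneg_right hg1 hd
          linarith
      _ ≤ 16 * Γ * b ^ (p - 2) * ‖ξ₁ - ξ₀‖ := by
          have hX : 0 ≤ Γ * b ^ (p - 2) * ‖ξ₁ - ξ₀‖ := by positivity
          linarith

/-- Growth estimate for `A_{p,ε}` when `1 < p < 2`, away from the joint origin: there
exists `C > 0`, depending only on `p`, such that for every `g` satisfying (G1)–(G3),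
every `ε ∈ (0,1)`, and all `(ξ₀, ξ₁) ≠ (0, 0)`,
`|A_{p,ε}(ξ₁) − A_{p,ε}(ξ₀)| ≤ C Γ max{|ξ₀|, |ξ₁|}^{p−2} |ξ₁ − ξ₀|`. -/
theorem stmt_12 (k : ℕ) (hk : 1 ≤ k) (p : ℝ) (hp : 1 < p) (hp2 : p < 2) :
    ∃ C : ℝ, 0 < C ∧
      ∀ γ Γ : ℝ, 0 < γ → γ ≤ Γ →
      ∀ g g' g'' : ℝ → ℝ,
        (∀ σ : ℝ, 0 < σ → HasDerivAt g (g' σ) σ) →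
        (∀ σ : ℝ, 0 < σ → HasDerivAt g' (g'' σ) σ) →
        ContinuousOn g'' (Set.Ioi 0) →
        (∀ σ : ℝ, 0 < σ → |g' σ| ≤ Γ * σ ^ (p / 2 - 1)) →
        (∀ σ : ℝ, 0 < σ → |g'' σ| ≤ Γ * σ ^ (p / 2 - 2)) →
        (∀ σ : ℝ, 0 ≤ σ → ∀ τ : ℝ, 0 < τ → τ < 1 →
          γ * (σ + τ) ^ (p / 2 - 1) ≤ g' (σ + τ) + 2 * σ * min (g'' (σ + τ)) 0) →
        ∀ ε : ℝ, 0 < ε → ε < 1 →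
        ∀ ξ₀ ξ₁ : EuclideanSpace ℝ (Fin k), ¬(ξ₀ = 0 ∧ ξ₁ = 0) →
          ‖g' (ε ^ 2 + ‖ξ₁‖ ^ 2) • ξ₁ - g' (ε ^ 2 + ‖ξ₀‖ ^ 2) • ξ₀‖
            ≤ C * Γ * (max ‖ξ₀‖ ‖ξ₁‖) ^ (p - 2) * ‖ξ₁ - ξ₀‖ := by
  refine ⟨16, by norm_num, ?_⟩
  intro γ Γ hγ hγΓ g g' g'' hg hg' hcont hG1 hG2 hG3 ε hε hε1 ξ₀ ξ₁ hne
  have hΓ : 0 < Γ := lt_of_lt_of_le hγ hγΓ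
  rcases le_total ‖ξ₀‖ ‖ξ₁‖ with hle | hle
  · have hne1 : ξ₁ ≠ 0 := by
      intro h
      apply hne
      refine ⟨?_, h⟩
      have h0 : ‖ξ₀‖ ≤ 0 := by simpa [h] using hle
      exact norm_le_zero_iff.mp h0
    rw [max_eq_right hle]
    exact aux_main p Γ hp hp2 hΓ g' g'' hg' hG1 hG2 ε hε ξ₀ ξ₁ hle hne1
  · have hne0 : ξ₀ ≠ 0 := by
      intro h
      apply hne
      refine ⟨h, ?_⟩
      have h0 : ‖ξ₁‖ ≤ 0 := by simpa [h] using hle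
      exact norm_le_zero_iff.mp h0
    rw [norm_sub_rev, norm_sub_rev ξ₁ ξ₀, max_eq_left hle]
    exact aux_main p Γ hp hp2 hΓ g' g'' hg' hG1 hG2 ε hε ξ₁ ξ₀ hle hne0
end

section
/- Assume 2 ≤ p < ∞. There exists a constant C > 0, depending only on p, such that for every g satisfying (G1)–(G3), every ε ∈ (0,1), and all ξ₀, ξ₁ ∈ ℝ^k, one has ⟨A_{p,ε}(ξ₁) − A_{p,ε}(ξ₀), ξ₁ − ξ₀⟩ ≥ C·γ·max{|ξ₀|^{p−2}, |ξ₁|^{p−2}}·|ξ₁ − ξ₀|². -/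
open Real RealInnerProductSpace


lemma aux_mono {h D : ℝ → ℝ} (hd : ∀ t, HasDerivAt h (D t) t)
    (hD0 : ∀ t, 0 ≤ D t)
    {a b c : ℝ} (ha : 0 ≤ a) (hab : a ≤ b) (hb1 : b ≤ 1)
    (hc : ∀ t ∈ Set.Icc a b, c ≤ D t) :
    c * (b - a) ≤ h 1 - h 0 := by
  have hmono : Monotone h := monotone_of_hasDerivAt_nonneg hd hD0
  have hcont : Continuous h := continuous_iff_continuousAt.mpr fun t => (hd t).continuousAt
  have hq : MonotoneOn (fun t => h t - c * t) (Set.Icc a b) := by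
    refine monotoneOn_of_hasDerivWithinAt_nonneg (f' := fun t => D t - c) (convex_Icc a b)
      ((hcont.sub (continuous_const.mul continuous_id)).continuousOn)
      (fun x hx => ?_) (fun x hx => ?_)
    · exact (((hd x).sub (by simpa using (hasDerivAt_id x).const_mul c))).hasDerivWithinAt
    · rw [interior_Icc] at hx
      have := hc x ⟨hx.1.le, hx.2.le⟩
      show 0 ≤ D x - c
      linarith
  have h1 : h a - c * a ≤ h b - c * b →  True := fun _ => trivial
  have hq' := hq (Set.left_mem_Icc.mpr hab) (Set.right_mem_Icc.mpr hab) hab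
  simp only at hq'
  have h0a : h 0 ≤ h a := hmono ha
  have hb1' : h b ≤ h 1 := hmono hb1
  linarith

variable {E : Type*} [NormedAddCommGroup E] [InnerProductSpace ℝ E]

lemma key_est (p γ : ℝ) (hp : 2 ≤ p) (hγ : 0 < γ) (g' g'' : ℝ → ℝ)
    (hg' : ∀ σ : ℝ, 0 < σ → HasDerivAt g' (g'' σ) σ)
    (hG3 : ∀ σ : ℝ, 0 ≤ σ → ∀ τ : ℝ, 0 < τ → τ < 1 →
      γ * (σ + τ) ^ (p / 2 - 1) ≤ g' (σ + τ) + 2 * σ * min (g'' (σ + τ)) 0)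
    (ε : ℝ) (hε : 0 < ε) (hε1 : ε < 1)
    (ξ₀ η : E) (m : ℝ) (hm : 0 ≤ m)
    (a b : ℝ) (ha : 0 ≤ a) (hab : a ≤ b) (hb1 : b ≤ 1)
    (hlow : ∀ t ∈ Set.Icc a b, m ≤ ‖ξ₀ + t • η‖) :
    γ * m ^ (p - 2) * ‖η‖ ^ 2 * (b - a) ≤
      g' (ε ^ 2 + ‖ξ₀ + η‖ ^ 2) * ⟪ξ₀ + η, η⟫ - g' (ε ^ 2 + ‖ξ₀‖ ^ 2) * ⟪ξ₀, η⟫ := by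
  set u : ℝ → ℝ := fun t => ⟪ξ₀, η⟫ + t * ‖η‖ ^ 2 with hu_def
  set s : ℝ → ℝ := fun t => ε ^ 2 + ((‖ξ₀‖ ^ 2 + 2 * ⟪ξ₀, η⟫ * t) + ‖η‖ ^ 2 * t ^ 2) with hs_def
  have hs_eq : ∀ t : ℝ, s t = ε ^ 2 + ‖ξ₀ + t • η‖ ^ 2 := by
    intro t
    have hns : ‖t • η‖ ^ 2 = t ^ 2 * ‖η‖ ^ 2 := by
      rw [norm_smul, mul_pow, Real.norm_eq_abs, sq_abs]
    rw [hs_def]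
    simp only
    rw [norm_add_sq_real, real_inner_smul_right, hns]
    ring
  have hu_eq : ∀ t : ℝ, u t = ⟪ξ₀ + t • η, η⟫ := by
    intro t
    rw [hu_def]
    simp only
    rw [inner_add_left, real_inner_smul_left, real_inner_self_eq_norm_sq]
  have hspos : ∀ t : ℝ, 0 < s t := by
    intro t; rw [hs_eq t]; positivity
  have hds : ∀ t : ℝ, HasDerivAt s (2 * u t) t := by
    intro t
    have hpow : HasDerivAt (fun x : ℝ => ‖η‖ ^ 2 * x ^ 2) (‖η‖ ^ 2 * (2 * t)) t := by
      simpa using (hasDerivAt_pow 2 t).const_mul (‖η‖ ^ 2)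
    have hlin : HasDerivAt (fun x : ℝ => ‖ξ₀‖ ^ 2 + 2 * ⟪ξ₀, η⟫ * x) (2 * ⟪ξ₀, η⟫) t := by
      simpa using ((hasDerivAt_id t).const_mul (2 * ⟪ξ₀, η⟫)).const_add (‖ξ₀‖ ^ 2)
    have := (hlin.add hpow).const_add (ε ^ 2)
    rw [show 2 * u t = 2 * ⟪ξ₀, η⟫ + ‖η‖ ^ 2 * (2 * t) by simp only [hu_def]; ring]
    exact this
  have hdu : ∀ t : ℝ, HasDerivAt u (‖η‖ ^ 2) t := by
    intro t
    have h := ((hasDerivAt_id t).mul_const (‖η‖ ^ 2)).const_add ⟪ξ₀, η⟫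
    rw [one_mul] at h
    exact h
  set D : ℝ → ℝ := fun t => g'' (s t) * (2 * u t) * u t + g' (s t) * ‖η‖ ^ 2 with hD_def
  have hdh : ∀ t : ℝ, HasDerivAt (fun t => g' (s t) * u t) (D t) t := by
    intro t
    exact ((hg' (s t) (hspos t)).comp t (hds t)).mul (hdu t)
  have hε2 : ε ^ 2 < 1 := by nlinarith
  have key1 : ∀ t : ℝ, γ * (‖ξ₀ + t • η‖ ^ 2 + ε ^ 2) ^ (p / 2 - 1) * ‖η‖ ^ 2 ≤ D t := by
    intro t
    have hσ0 : (0:ℝ) ≤ ‖ξ₀ + t • η‖ ^ 2 := sq_nonneg _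
    have hστ : s t = ‖ξ₀ + t • η‖ ^ 2 + ε ^ 2 := by rw [hs_eq t]; ring
    have hG := hG3 (‖ξ₀ + t • η‖ ^ 2) hσ0 (ε ^ 2) (by positivity) hε2
    have hCS : (u t) ^ 2 ≤ ‖ξ₀ + t • η‖ ^ 2 * ‖η‖ ^ 2 := by
      rw [hu_eq t]
      have h1 := real_inner_mul_inner_self_le (ξ₀ + t • η) η
      rw [real_inner_self_eq_norm_sq, real_inner_self_eq_norm_sq] at h1
      nlinarith [h1]
    have hm0a : min (g'' (‖ξ₀ + t • η‖ ^ 2 + ε ^ 2)) 0 ≤ g'' (‖ξ₀ + t • η‖ ^ 2 + ε ^ 2) :=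
      min_le_left _ _
    have hm0b : min (g'' (‖ξ₀ + t • η‖ ^ 2 + ε ^ 2)) 0 ≤ 0 := min_le_right _ _
    have h1 : min (g'' (‖ξ₀ + t • η‖ ^ 2 + ε ^ 2)) 0 * (‖ξ₀ + t • η‖ ^ 2 * ‖η‖ ^ 2)
        ≤ min (g'' (‖ξ₀ + t • η‖ ^ 2 + ε ^ 2)) 0 * (u t) ^ 2 :=
      mul_le_mul_of_nonpos_left hCS hm0b
    have h2 : min (g'' (‖ξ₀ + t • η‖ ^ 2 + ε ^ 2)) 0 * (u t) ^ 2
        ≤ g'' (‖ξ₀ + t • η‖ ^ 2 + ε ^ 2) * (u t) ^ 2 :=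
      mul_le_mul_of_nonneg_right hm0a (sq_nonneg _)
    have hG' := mul_le_mul_of_nonneg_right hG (sq_nonneg ‖η‖)
    rw [hD_def]; simp only
    rw [hστ]
    have h3 := le_trans h1 h2
    calc γ * (‖ξ₀ + t • η‖ ^ 2 + ε ^ 2) ^ (p / 2 - 1) * ‖η‖ ^ 2
        ≤ (g' (‖ξ₀ + t • η‖ ^ 2 + ε ^ 2)
            + 2 * ‖ξ₀ + t • η‖ ^ 2 * min (g'' (‖ξ₀ + t • η‖ ^ 2 + ε ^ 2)) 0) * ‖η‖ ^ 2 := hG'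
      _ = g' (‖ξ₀ + t • η‖ ^ 2 + ε ^ 2) * ‖η‖ ^ 2
            + 2 * (min (g'' (‖ξ₀ + t • η‖ ^ 2 + ε ^ 2)) 0 * (‖ξ₀ + t • η‖ ^ 2 * ‖η‖ ^ 2)) := by
          ring
      _ ≤ g' (‖ξ₀ + t • η‖ ^ 2 + ε ^ 2) * ‖η‖ ^ 2
            + 2 * (g'' (‖ξ₀ + t • η‖ ^ 2 + ε ^ 2) * (u t) ^ 2) := by linarith
      _ = g'' (‖ξ₀ + t • η‖ ^ 2 + ε ^ 2) * (2 * u t) * u t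
            + g' (‖ξ₀ + t • η‖ ^ 2 + ε ^ 2) * ‖η‖ ^ 2 := by ring
  have key2 : ∀ t : ℝ, 0 ≤ D t := by
    intro t
    refine le_trans ?_ (key1 t)
    positivity
  have key3 : ∀ t ∈ Set.Icc a b, γ * m ^ (p - 2) * ‖η‖ ^ 2 ≤ D t := by
    intro t ht
    refine le_trans ?_ (key1 t)
    have hexp : (0:ℝ) ≤ p / 2 - 1 := by linarith
    have hmsq : (m ^ 2 : ℝ) ^ (p / 2 - 1) = m ^ (p - 2) := by
      rw [← Real.rpow_natCast m 2, ← Real.rpow_mul hm]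
      norm_num
      ring_nf
    have hle : m ^ 2 ≤ ‖ξ₀ + t • η‖ ^ 2 + ε ^ 2 := by
      have := hlow t ht
      nlinarith [sq_nonneg ε]
    have := Real.rpow_le_rpow (by positivity) hle hexp
    rw [hmsq] at this
    have := mul_le_mul_of_nonneg_left this hγ.le
    nlinarith [sq_nonneg ‖η‖, this]
  have hfin := aux_mono hdh key2 ha hab hb1 key3
  have e1 : s 1 = ε ^ 2 + ‖ξ₀ + η‖ ^ 2 := by rw [hs_eq 1, one_smul]
  have e0 : s 0 = ε ^ 2 + ‖ξ₀‖ ^ 2 := by rw [hs_eq 0]; simp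
  have eu1 : u 1 = ⟪ξ₀ + η, η⟫ := by rw [hu_eq 1, one_smul]
  have eu0 : u 0 = ⟪ξ₀, η⟫ := by rw [hu_eq 0]; simp
  simp only [e1, e0, eu1, eu0] at hfin
  linarith

/-- Monotonicity estimate for `A_{p,ε}` when `2 ≤ p`: there exists `C > 0`, depending
only on `p`, such that for every `g` satisfying (G1)–(G3), every `ε ∈ (0,1)`, and all
`ξ₀, ξ₁`, one has
`⟨A_{p,ε}(ξ₁) − A_{p,ε}(ξ₀), ξ₁ − ξ₀⟩ ≥ C γ max{|ξ₀|^{p−2}, |ξ₁|^{p−2}} |ξ₁ − ξ₀|²`. -/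
theorem stmt_13 (k : ℕ) (hk : 1 ≤ k) (p : ℝ) (hp : 2 ≤ p) :
    ∃ C : ℝ, 0 < C ∧
      ∀ γ Γ : ℝ, 0 < γ → γ ≤ Γ →
      ∀ g g' g'' : ℝ → ℝ,
        (∀ σ : ℝ, 0 < σ → HasDerivAt g (g' σ) σ) →
        (∀ σ : ℝ, 0 < σ → HasDerivAt g' (g'' σ) σ) →
        ContinuousOn g'' (Set.Ioi 0) →
        (∀ σ : ℝ, 0 < σ → |g' σ| ≤ Γ * σ ^ (p / 2 - 1)) →
        (∀ σ : ℝ, 0 < σ → |g'' σ| ≤ Γ * σ ^ (p / 2 - 2)) →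
        (∀ σ : ℝ, 0 ≤ σ → ∀ τ : ℝ, 0 < τ → τ < 1 →
          γ * (σ + τ) ^ (p / 2 - 1) ≤ g' (σ + τ) + 2 * σ * min (g'' (σ + τ)) 0) →
        ∀ ε : ℝ, 0 < ε → ε < 1 →
        ∀ ξ₀ ξ₁ : EuclideanSpace ℝ (Fin k),
          C * γ * max (‖ξ₀‖ ^ (p - 2)) (‖ξ₁‖ ^ (p - 2)) * ‖ξ₁ - ξ₀‖ ^ 2
            ≤ ⟪g' (ε ^ 2 + ‖ξ₁‖ ^ 2) • ξ₁ - g' (ε ^ 2 + ‖ξ₀‖ ^ 2) • ξ₀, ξ₁ - ξ₀⟫ := by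
  refine ⟨(2:ℝ) ^ (2 - p) / 4, by positivity, ?_⟩
  intro γ Γ hγ hγΓ g g' g'' hg hg' hg''c hG1 hG2 hG3 ε hε hε1 ξ₀ ξ₁
  set η : EuclideanSpace ℝ (Fin k) := ξ₁ - ξ₀ with hη_def
  have hξ : ξ₀ + η = ξ₁ := by rw [hη_def]; abel
  set M : ℝ := max ‖ξ₀‖ ‖ξ₁‖ with hM_def
  have hM0 : 0 ≤ M := le_trans (norm_nonneg ξ₀) (le_max_left _ _)
  have hp2 : (0:ℝ) ≤ p - 2 := by linarith
  have hmax : max (‖ξ₀‖ ^ (p - 2)) (‖ξ₁‖ ^ (p - 2)) = M ^ (p - 2) := by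
    rcases le_total ‖ξ₀‖ ‖ξ₁‖ with h | h
    · rw [max_eq_right (Real.rpow_le_rpow (norm_nonneg _) h hp2), hM_def, max_eq_right h]
    · rw [max_eq_left (Real.rpow_le_rpow (norm_nonneg _) h hp2), hM_def, max_eq_left h]
  have hη2M : ‖η‖ ≤ 2 * M := by
    have h1 : ‖η‖ ≤ ‖ξ₁‖ + ‖ξ₀‖ := norm_sub_le _ _
    have h2 : ‖ξ₀‖ ≤ M := le_max_left _ _
    have h3 : ‖ξ₁‖ ≤ M := le_max_right _ _
    linarith
  have hhalf : (M / 2 : ℝ) ^ (p - 2) = M ^ (p - 2) * (2:ℝ) ^ (2 - p) := by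
    rw [Real.div_rpow hM0 (by norm_num : (0:ℝ) ≤ 2)]
    have : (2:ℝ) ^ (2 - p) = ((2:ℝ) ^ (p - 2))⁻¹ := by
      rw [show (2 - p) = -(p - 2) by ring, Real.rpow_neg (by norm_num : (0:ℝ) ≤ 2)]
    rw [this, div_eq_mul_inv]
  rw [inner_sub_left, real_inner_smul_left, real_inner_smul_left, hmax]
  rcases le_total ‖ξ₀‖ ‖ξ₁‖ with h | h
  · have hM : M = ‖ξ₁‖ := max_eq_right h
    have hlow : ∀ t ∈ Set.Icc (3/4 : ℝ) 1, M / 2 ≤ ‖ξ₀ + t • η‖ := by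
      intro t ht
      have e : ξ₀ + t • η = ξ₁ - (1 - t) • η := by
        rw [sub_smul, one_smul, hη_def]; abel
      have h1 : ‖ξ₁‖ - ‖(1 - t) • η‖ ≤ ‖ξ₁ - (1 - t) • η‖ := norm_sub_norm_le _ _
      have h2 : ‖(1 - t) • η‖ = |1 - t| * ‖η‖ := by rw [norm_smul, Real.norm_eq_abs]
      have h3 : |1 - t| ≤ 1/4 := by
        rw [abs_le]; constructor <;> [linarith [ht.2]; linarith [ht.1]]
      have h4 : |1 - t| * ‖η‖ ≤ (1/4) * (2 * M) :=
        mul_le_mul h3 hη2M (norm_nonneg _) (by norm_num)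
      rw [e]
      rw [h2] at h1
      rw [hM]
      linarith
    have hkey := key_est p γ hp hγ g' g'' hg' hG3 ε hε hε1 ξ₀ η (M / 2) (by linarith)
      (3/4) 1 (by norm_num) (by norm_num) (by norm_num) hlow
    rw [hξ] at hkey
    have heq : (2:ℝ) ^ (2 - p) / 4 * γ * M ^ (p - 2) * ‖ξ₁ - ξ₀‖ ^ 2
        = γ * (M / 2) ^ (p - 2) * ‖η‖ ^ 2 * (1 - 3/4) := by
      rw [hhalf, ← hη_def]; ring
    rw [heq]
    linarith
  · have hM : M = ‖ξ₀‖ := max_eq_left h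
    have hlow : ∀ t ∈ Set.Icc (0 : ℝ) (1/4 : ℝ), M / 2 ≤ ‖ξ₀ + t • η‖ := by
      intro t ht
      have h1 : ‖ξ₀‖ - ‖-(t • η)‖ ≤ ‖ξ₀ - -(t • η)‖ := norm_sub_norm_le _ _
      have h2 : ‖-(t • η)‖ = |t| * ‖η‖ := by rw [norm_neg, norm_smul, Real.norm_eq_abs]
      have h3 : |t| ≤ 1/4 := by
        rw [abs_le]; constructor <;> [linarith [ht.1]; linarith [ht.2]]
      have h4 : |t| * ‖η‖ ≤ (1/4) * (2 * M) :=
        mul_le_mul h3 hη2M (norm_nonneg _) (by norm_num)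
      have e : ξ₀ - -(t • η) = ξ₀ + t • η := by abel
      rw [e, h2] at h1
      rw [hM] at *
      linarith
    have hkey := key_est p γ hp hγ g' g'' hg' hG3 ε hε hε1 ξ₀ η (M / 2) (by linarith)
      0 (1/4) (by norm_num) (by norm_num) (by norm_num) hlow
    rw [hξ] at hkey
    have heq : (2:ℝ) ^ (2 - p) / 4 * γ * M ^ (p - 2) * ‖ξ₁ - ξ₀‖ ^ 2
        = γ * (M / 2) ^ (p - 2) * ‖η‖ ^ 2 * (1/4 - 0) := by
      rw [hhalf, ← hη_def]; ring
    rw [heq]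
    linarith
end

section
/- Let (a_m)_{m≥0} be a sequence of positive real numbers, and suppose there are constants C, ς ∈ (0,∞) and B ∈ (1,∞) such that a_{m+1} ≤ C·B^m·a_m^{1+ς} for all m ≥ 0. If a₀ ≤ C^{−1/ς}·B^{−1/ς²}, then a_m → 0 as m → ∞. -/
open Real Filter

/-- Geometric convergence lemma: if a positive sequence satisfies
`a_{m+1} ≤ C B^m a_m^{1+ς}` with `C, ς > 0` and `B > 1`, and if
`a₀ ≤ C^{−1/ς} B^{−1/ς²}`, then `a_m → 0`. -/
theorem stmt_19 (a : ℕ → ℝ) (ha : ∀ m, 0 < a m) (C ς B : ℝ)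
    (hC : 0 < C) (hς : 0 < ς) (hB : 1 < B)
    (hrec : ∀ m : ℕ, a (m + 1) ≤ C * B ^ m * a m ^ (1 + ς))
    (h0 : a 0 ≤ C ^ (-(1 / ς)) * B ^ (-(1 / ς ^ 2))) :
    Tendsto a atTop (nhds 0) := by
  have hB0 : (0:ℝ) < B := lt_trans one_pos hB
  set D : ℝ := C ^ (-(1 / ς)) * B ^ (-(1 / ς ^ 2)) with hD
  have hD0 : 0 < D := by positivity
  have hbound : ∀ m : ℕ, a m ≤ D * B ^ (-((m:ℝ) / ς)) := by
    intro m
    induction m with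
    | zero => simpa using h0
    | succ m ih =>
      have h1 : a m ^ (1+ς) ≤ (D * B ^ (-((m:ℝ)/ς))) ^ (1+ς) :=
        Real.rpow_le_rpow (ha m).le ih (by linarith)
      have h2 : a (m+1) ≤ C * B ^ m * (D * B ^ (-((m:ℝ)/ς))) ^ (1+ς) := by
        refine (hrec m).trans ?_
        have hpos : (0:ℝ) < C * B ^ m := by positivity
        exact mul_le_mul_of_nonneg_left h1 hpos.le
      refine h2.trans_eq ?_
      have hL : (0:ℝ) < C * B ^ m * (D * B ^ (-((m:ℝ)/ς))) ^ (1+ς) := by positivity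
      have hR : (0:ℝ) < D * B ^ (-(((m:ℕ)+1:ℝ)/ς)) := by positivity
      have hlog : Real.log (C * B ^ m * (D * B ^ (-((m:ℝ)/ς))) ^ (1+ς))
          = Real.log (D * B ^ (-(((m:ℕ)+1:ℝ)/ς))) := by
        rw [hD]
        rw [Real.log_mul (by positivity) (by positivity)]
        rw [Real.log_mul (by positivity) (by positivity)]
        rw [Real.log_pow]
        rw [Real.log_rpow (by positivity)]
        rw [Real.log_mul (by positivity) (by positivity)]
        rw [Real.log_mul (by positivity) (by positivity)]
        rw [Real.log_rpow hC]
        rw [Real.log_rpow hB0, Real.log_rpow hB0]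
        rw [Real.log_mul (by positivity) (by positivity)]
        rw [Real.log_mul (by positivity) (by positivity)]
        rw [Real.log_rpow hC]
        rw [Real.log_rpow hB0, Real.log_rpow hB0]
        have hς0 : ς ≠ 0 := ne_of_gt hς
        field_simp
        ring
      have : C * B ^ m * (D * B ^ (-((m:ℝ)/ς))) ^ (1+ς)
          = D * B ^ (-(((m:ℕ)+1:ℝ)/ς)) := by
        rw [← Real.exp_log hL, ← Real.exp_log hR, hlog]
      rw [this]
      push_cast
      ring_nf
  have hr1 : B ^ (-(1/ς)) < 1 := Real.rpow_lt_one_of_one_lt_of_neg hB (by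
    have : (0:ℝ) < 1/ς := by positivity
    linarith)
  have hr0 : (0:ℝ) ≤ B ^ (-(1/ς)) := (Real.rpow_pos_of_pos hB0 _).le
  have htend : Tendsto (fun m : ℕ => D * B ^ (-((m:ℝ)/ς))) atTop (nhds 0) := by
    have heq : ∀ m : ℕ, B ^ (-((m:ℝ)/ς)) = (B ^ (-(1/ς))) ^ m := by
      intro m
      rw [← Real.rpow_natCast (B ^ (-(1/ς))) m, ← Real.rpow_mul hB0.le]
      ring_nf
    simp only [heq]
    have := (tendsto_pow_atTop_nhds_zero_of_lt_one hr0 hr1).const_mul D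
    simpa using this
  exact squeeze_zero (fun m => (ha m).le) hbound htend
end
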